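/- arXiv:1004.4552 — 8 statements merged into one kernel-verified Lean document; each statement's English description precedes it below -/
import Mathlib

section
/- Let P ⊆ ℝⁿ be a rational polyhedron satisfying condition (★): for every nonnegative integer k, every r ∈ {0,…,k} and every integer vector w ∈ ℤⁿ, the set rP ∩ (w − (k−r)P) is box-integer. Then P has the integer decomposition property: for every positive integer k, every integer vector w ∈ kP can be written as w = x₁ + ⋯ + x_k with x₁,…,x_k integer vectors in P. -/
open Finset Pointwise

variable {ι : Type*} [Fintype ι]

/-- A vector is an integer vector if each coordinate is an integer. -/
def IsIntegerVec (x : ι → ℝ) : Prop := ∀ i, ∃ z : ℤ, x i = (z : ℝ)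

/-- `F` is a (nonempty, exposed) face of `P`: the set of points of `P` maximizing some
linear functional `⟨c, ·⟩` over `P`. -/
def IsFace (P F : Set (ι → ℝ)) : Prop :=
  F.Nonempty ∧ ∃ c : ι → ℝ, F = {x ∈ P | ∀ y ∈ P, ∑ i, c i * y i ≤ ∑ i, c i * x i}

/-- `P` is an integer polyhedron: every (nonempty) face contains an integer vector. -/
def IsIntegerPolyhedron (P : Set (ι → ℝ)) : Prop :=
  ∀ F : Set (ι → ℝ), IsFace P F → ∃ x ∈ F, IsIntegerVec x

/-- `Q` is box-integer: its intersection with any integer box is an integer polyhedron. -/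
def IsBoxInteger (Q : Set (ι → ℝ)) : Prop :=
  ∀ c d : ι → ℤ, (∀ i, c i ≤ d i) →
    IsIntegerPolyhedron {x ∈ Q | ∀ i, (c i : ℝ) ≤ x i ∧ x i ≤ (d i : ℝ)}

/-- Condition (★): for all `0 ≤ r ≤ k` and integer `w`, the set `rP ∩ (w - (k-r)P)`
is box-integer. -/
def ConditionStar (P : Set (ι → ℝ)) : Prop :=
  ∀ k r : ℕ, r ≤ k → ∀ w : ι → ℤ,
    IsBoxInteger (((r : ℝ) • P) ∩
      ((fun y => (fun i => (w i : ℝ)) - y) '' (((k - r : ℕ) : ℝ) • P)))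

/-- A rational polyhedron: `{x | Ax ≤ b}` for a rational matrix `A` and rational `b`. -/
def IsRationalPolyhedron {n : ℕ} (P : Set (Fin n → ℝ)) : Prop :=
  ∃ (m : ℕ) (A : Matrix (Fin m) (Fin n) ℚ) (b : Fin m → ℚ),
    P = {x | ∀ i, ∑ j, (A i j : ℝ) * x j ≤ (b i : ℝ)}

/-- The Integer Carathéodory Property: every integer vector `w ∈ kP` is a nonnegative
integer combination, with coefficients summing to `k`, of affinely independent integer
vectors in `P`. -/
def HasICP (P : Set (ι → ℝ)) : Prop :=
  ∀ k : ℕ, 0 < k → ∀ w : ι → ℤ, (fun i => (w i : ℝ)) ∈ (k : ℝ) • P →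
    ∃ (t : ℕ) (x : Fin t → (ι → ℝ)) (c : Fin t → ℕ),
      (∀ i, x i ∈ P) ∧ (∀ i, IsIntegerVec (x i)) ∧ AffineIndependent ℝ x ∧
      (∀ i, 0 < c i) ∧ (∑ i, c i = k) ∧ (fun j => (w j : ℝ)) = ∑ i, (c i : ℝ) • x i

lemma conditionStar_aux {n : ℕ} (P : Set (Fin n → ℝ)) (hstar : ConditionStar P) :
    ∀ k : ℕ, ∀ w : Fin n → ℤ, (fun i => (w i : ℝ)) ∈ (k : ℝ) • P →
      ∃ x : Fin k → (Fin n → ℝ), (∀ i, x i ∈ P) ∧ (∀ i, IsIntegerVec (x i)) ∧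
        (fun j => (w j : ℝ)) = ∑ i, x i := by
  intro k
  induction k with
  | zero =>
    intro w hw
    obtain ⟨p, hp, hpw⟩ := hw
    refine ⟨Fin.elim0, fun i => i.elim0, fun i => i.elim0, ?_⟩
    rw [← hpw]
    simp
  | succ k IH =>
    intro w hw
    obtain ⟨p, hp, hpw⟩ := hw
    push_cast at hpw
    have hp2 : p ∈ (fun y => (fun i => (w i : ℝ)) - y) '' (((k : ℕ) : ℝ) • P) := by
      refine ⟨(k : ℝ) • p, ⟨p, hp, rfl⟩, ?_⟩
      show (fun i => (w i : ℝ)) - (k : ℝ) • p = p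
      rw [← hpw, add_smul, one_smul, add_sub_cancel_left]
    have hQ := hstar (k + 1) 1 (by omega) w
    simp only [Nat.add_sub_cancel] at hQ
    have hIP := hQ (fun i => ⌊p i⌋) (fun i => ⌈p i⌉) (fun i => Int.floor_le_ceil _)
    have key : ∀ S : Set (Fin n → ℝ), IsIntegerPolyhedron S → ∀ q ∈ S,
        ∃ x ∈ S, IsIntegerVec x := by
      intro S hS q hq
      refine hS S ⟨⟨q, hq⟩, 0, ?_⟩
      ext x
      simp
    have hpS : p ∈ {x ∈ (((1 : ℕ) : ℝ) • P) ∩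
        ((fun y => (fun i => (w i : ℝ)) - y) '' (((k : ℕ) : ℝ) • P)) |
        ∀ i, (((fun i => ⌊p i⌋) i : ℤ) : ℝ) ≤ x i ∧ x i ≤ (((fun i => ⌈p i⌉) i : ℤ) : ℝ)} := by
      refine ⟨⟨⟨p, hp, ?_⟩, hp2⟩, fun i => ⟨Int.floor_le _, Int.le_ceil _⟩⟩
      norm_num
    obtain ⟨x₁, hx₁S, hx₁int⟩ := key _ hIP p hpS
    obtain ⟨⟨hx₁1, hx₁2⟩, -⟩ := hx₁S
    have hx₁P : x₁ ∈ P := by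
      obtain ⟨q, hq, hqx⟩ := hx₁1
      norm_num at hqx
      rwa [← hqx]
    obtain ⟨y, hy, hyx⟩ := hx₁2
    have hyx' : (fun i => (w i : ℝ)) - y = x₁ := hyx
    have hyeq : y = (fun i => (w i : ℝ)) - x₁ := by rw [← hyx', sub_sub_cancel]
    choose z hz using hx₁int
    have hW' : (fun i => ((w i - z i : ℤ) : ℝ)) = (fun i => (w i : ℝ)) - x₁ := by
      funext i
      push_cast
      simp [Pi.sub_apply, hz i]
    have hmem : (fun i => ((w i - z i : ℤ) : ℝ)) ∈ ((k : ℕ) : ℝ) • P := by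
      rw [hW', ← hyeq]; exact hy
    obtain ⟨x, hxP, hxint, hxsum⟩ := IH (fun i => w i - z i) hmem
    refine ⟨Fin.cons x₁ x, ?_, ?_, ?_⟩
    · intro i
      induction i using Fin.cases with
      | zero => exact hx₁P
      | succ j => exact hxP j
    · intro i
      induction i using Fin.cases with
      | zero => exact fun i => ⟨z i, hz i⟩
      | succ j => exact hxint j
    · rw [Fin.sum_cons, ← hxsum, hW']
      funext j
      simp

/-- A rational polyhedron satisfying condition (★) has the integer
decomposition property. -/
theorem conditionStar_integerDecomposition {n : ℕ} (P : Set (Fin n → ℝ))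
    (hP : IsRationalPolyhedron P) (hstar : ConditionStar P) :
    ∀ k : ℕ, 0 < k → ∀ w : Fin n → ℤ, (fun i => (w i : ℝ)) ∈ (k : ℝ) • P →
      ∃ x : Fin k → (Fin n → ℝ), (∀ i, x i ∈ P) ∧ (∀ i, IsIntegerVec (x i)) ∧
        (fun j => (w j : ℝ)) = ∑ i, x i := by
  intro k _ w hw
  exact conditionStar_aux P hstar k w hw
end

section
/- Let P ⊆ ℝⁿ be a rational polyhedron satisfying condition (★): for every nonnegative integer k, every r ∈ {0,…,k} and every integer vector w ∈ ℤⁿ, the set rP ∩ (w − (k−r)P) is box-integer. Then P is an integer polyhedron, i.e., every nonempty face of P contains an integer vector. -/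
open Finset Pointwise

variable {ι : Type*} [Fintype ι]

noncomputable section CSIPaux

variable {n m : ℕ}

/-- Coordinatewise cast of a rational vector to a real vector. -/
def ratV {n : ℕ} (v : Fin n → ℚ) : Fin n → ℝ := fun i => (v i : ℝ)

lemma ratV_injective : Function.Injective (ratV (n := n)) := by
  intro a b h
  funext i
  exact Rat.cast_injective (congrFun h i)

lemma ratV_add (a b : Fin n → ℚ) : ratV (a + b) = ratV a + ratV b := by
  funext i; simp [ratV]

/-- Real extension of a rational linear map. -/
def extR (f : (Fin n → ℚ) →ₗ[ℚ] (Fin m → ℚ)) : (Fin n → ℝ) →ₗ[ℝ] (Fin m → ℝ) :=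
  Matrix.toLin' ((LinearMap.toMatrix' f).map ((↑) : ℚ → ℝ))

lemma extR_apply (f : (Fin n → ℚ) →ₗ[ℚ] (Fin m → ℚ)) (x : Fin n → ℝ) (i : Fin m) :
    extR f x i = ∑ j, ((LinearMap.toMatrix' f) i j : ℝ) * x j := by
  simp [extR, Matrix.toLin'_apply, Matrix.mulVec, dotProduct]

lemma extR_ratV (f : (Fin n → ℚ) →ₗ[ℚ] (Fin m → ℚ)) (v : Fin n → ℚ) :
    extR f (ratV v) = ratV (f v) := by
  funext i
  rw [extR_apply]
  have h : f v = (LinearMap.toMatrix' f).mulVec v := by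
    conv_lhs => rw [← Matrix.toLin'_toMatrix' f]
    rw [Matrix.toLin'_apply]
  rw [ratV, h, Matrix.mulVec, dotProduct]
  push_cast
  rfl

lemma extR_comp (g : (Fin m → ℚ) →ₗ[ℚ] (Fin n → ℚ)) (f : (Fin n → ℚ) →ₗ[ℚ] (Fin m → ℚ)) :
    extR (g ∘ₗ f) = (extR g) ∘ₗ (extR f) := by
  unfold extR
  rw [LinearMap.toMatrix'_comp]
  have : ((LinearMap.toMatrix' g) * (LinearMap.toMatrix' f)).map ((↑) : ℚ → ℝ)
      = ((LinearMap.toMatrix' g).map ((↑) : ℚ → ℝ)) * ((LinearMap.toMatrix' f).map ((↑) : ℚ → ℝ)) := by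
    exact Matrix.map_mul (f := Rat.castHom ℝ)
  rw [this, Matrix.toLin'_mul]

lemma extR_fix {f : (Fin n → ℚ) →ₗ[ℚ] (Fin n → ℚ)} {W : Submodule ℚ (Fin n → ℚ)}
    (h : ∀ w ∈ W, f w = w) {x : Fin n → ℝ}
    (hx : x ∈ Submodule.span ℝ (ratV '' (W : Set (Fin n → ℚ)))) :
    extR f x = x := by
  have hle : Submodule.span ℝ (ratV '' (W : Set (Fin n → ℚ)))
      ≤ LinearMap.eqLocus (extR f) LinearMap.id := by
    apply Submodule.span_le.mpr
    rintro _ ⟨w, hw, rfl⟩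
    show extR f (ratV w) = ratV w
    rw [extR_ratV, h w hw]
  exact hle hx

lemma extR_kills {f : (Fin n → ℚ) →ₗ[ℚ] (Fin m → ℚ)} {W : Submodule ℚ (Fin n → ℚ)}
    (h : ∀ w ∈ W, f w = 0) {x : Fin n → ℝ}
    (hx : x ∈ Submodule.span ℝ (ratV '' (W : Set (Fin n → ℚ)))) :
    extR f x = 0 := by
  have hle : Submodule.span ℝ (ratV '' (W : Set (Fin n → ℚ))) ≤ LinearMap.ker (extR f) := by
    apply Submodule.span_le.mpr
    rintro _ ⟨w, hw, rfl⟩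
    show extR f (ratV w) = 0
    rw [extR_ratV, h w hw]
    funext i; simp [ratV]
  exact hle hx

lemma span_sup_top {W W' : Submodule ℚ (Fin n → ℚ)} (h : W ⊔ W' = ⊤) :
    Submodule.span ℝ (ratV '' (W : Set (Fin n → ℚ)))
      ⊔ Submodule.span ℝ (ratV '' (W' : Set (Fin n → ℚ))) = ⊤ := by
  rw [← Submodule.span_union, eq_top_iff]
  intro x _
  have hx := pi_eq_sum_univ x
  rw [hx]
  apply Submodule.sum_mem
  intro i _
  apply Submodule.smul_mem
  have hbase : (fun j => if i = j then (1:ℝ) else 0) = ratV (fun j => if i = j then 1 else 0) := by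
    funext j
    by_cases hij : i = j <;> simp [ratV, hij]
  rw [hbase]
  have hmem : (fun j => if i = j then (1:ℚ) else 0) ∈ W ⊔ W' := by rw [h]; trivial
  obtain ⟨w, hw, w', hw', hsum⟩ := Submodule.mem_sup.mp hmem
  rw [← hsum, ratV_add]
  exact Submodule.add_mem _
    (Submodule.subset_span (Set.mem_union_left _ (Set.mem_image_of_mem _ hw)))
    (Submodule.subset_span (Set.mem_union_right _ (Set.mem_image_of_mem _ hw')))

lemma ratV_smul (q : ℚ) (k : Fin n → ℚ) : ratV (q • k) = (q : ℝ) • ratV k := by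
  funext i; simp [ratV]

lemma span_ratV_top : Submodule.span ℝ (Set.range (ratV (n := n))) = ⊤ := by
  rw [eq_top_iff]
  intro x _
  rw [pi_eq_sum_univ x]
  apply Submodule.sum_mem
  intro i _
  apply Submodule.smul_mem
  have hbase : (fun j => if i = j then (1:ℝ) else 0) = ratV (fun j => if i = j then 1 else 0) := by
    funext j; by_cases hij : i = j <;> simp [ratV, hij]
  rw [hbase]
  exact Submodule.subset_span (Set.mem_range_self _)

lemma exists_rat_solution_near (f : (Fin n → ℚ) →ₗ[ℚ] (Fin m → ℚ))
    (x : Fin n → ℝ) (c : Fin m → ℚ) (hx : extR f x = ratV c) (ε : ℝ) (hε : 0 < ε) :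
    ∃ y : Fin n → ℚ, f y = c ∧ ∀ i, |(y i : ℝ) - x i| < ε := by
  classical
  -- Step 1: c is in the range of f
  obtain ⟨W', hW'⟩ := (LinearMap.range f).exists_isCompl
  set π : (Fin m → ℚ) →ₗ[ℚ] (Fin m → ℚ) :=
    (LinearMap.range f).subtype ∘ₗ (LinearMap.range f).projectionOnto W' hW' with hπ
  have hfix : ∀ w ∈ LinearMap.range f, π w = w := by
    intro w hw
    simp [hπ, Submodule.projectionOnto_apply_left hW' ⟨w, hw⟩]
  have himg : ∀ w, π w ∈ LinearMap.range f := by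
    intro w
    simp only [hπ, LinearMap.comp_apply, Submodule.subtype_apply]
    exact Submodule.coe_mem _
  have hmemspan : ratV c ∈ Submodule.span ℝ (ratV '' ((LinearMap.range f : Submodule ℚ (Fin m → ℚ)) : Set (Fin m → ℚ))) := by
    have hx' : extR f x ∈ Submodule.map (extR f) (Submodule.span ℝ (Set.range (ratV (n := n)))) := by
      rw [span_ratV_top]; exact ⟨x, trivial, rfl⟩
    rw [Submodule.map_span] at hx'
    rw [← hx]
    have himeq : (extR f) '' Set.range (ratV (n := n))
        = ratV '' ((LinearMap.range f : Submodule ℚ (Fin m → ℚ)) : Set (Fin m → ℚ)) := by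
      ext u
      constructor
      · rintro ⟨_, ⟨v, rfl⟩, rfl⟩
        exact ⟨f v, ⟨v, rfl⟩, (extR_ratV f v).symm⟩
      · rintro ⟨_, ⟨v, rfl⟩, rfl⟩
        exact ⟨ratV v, ⟨v, rfl⟩, extR_ratV f v⟩
    rwa [himeq] at hx'
  have hcfix : extR π (ratV c) = ratV c := extR_fix hfix hmemspan
  rw [extR_ratV] at hcfix
  have hcrange : c ∈ LinearMap.range f := by
    have := ratV_injective hcfix
    rw [← this]; exact himg c
  obtain ⟨y₀, hy₀⟩ := hcrange
  -- Step 2: x - ratV y₀ is in the real kernel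
  set z : Fin n → ℝ := x - ratV y₀ with hzdef
  have hz : extR f z = 0 := by
    rw [hzdef, map_sub, hx, extR_ratV, hy₀, sub_self]
  -- Step 3: the real kernel is spanned by the rational kernel
  obtain ⟨K', hK'⟩ := (LinearMap.ker f).exists_isCompl
  have hzsup : z ∈ Submodule.span ℝ (ratV '' ((LinearMap.ker f : Submodule ℚ (Fin n → ℚ)) : Set (Fin n → ℚ)))
      ⊔ Submodule.span ℝ (ratV '' ((K' : Submodule ℚ (Fin n → ℚ)) : Set (Fin n → ℚ))) := by
    rw [span_sup_top hK'.sup_eq_top]; trivial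
  obtain ⟨a, ha, b, hb, hab⟩ := Submodule.mem_sup.mp hzsup
  have hfa : extR f a = 0 := extR_kills (fun w hw => hw) ha
  have hfb : extR f b = 0 := by
    have : extR f z = extR f a + extR f b := by rw [← hab, map_add]
    rw [hz, hfa, zero_add] at this
    exact this.symm
  -- b = 0 via a left inverse of f on K'
  have hinj : LinearMap.ker (f ∘ₗ K'.subtype) = ⊥ := by
    rw [LinearMap.ker_eq_bot']
    intro w hw
    have hwk : (w : Fin n → ℚ) ∈ LinearMap.ker f := hw
    have : (w : Fin n → ℚ) ∈ (LinearMap.ker f) ⊓ K' := ⟨hwk, w.2⟩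
    rw [hK'.inf_eq_bot] at this
    exact Subtype.ext this
  obtain ⟨L', hL'⟩ := (f ∘ₗ K'.subtype).exists_leftInverse_of_injective hinj
  set L : (Fin m → ℚ) →ₗ[ℚ] (Fin n → ℚ) := K'.subtype ∘ₗ L' with hL
  have hLf : ∀ w ∈ K', (L ∘ₗ f) w = w := by
    intro w hw
    have := congrArg (fun g => K'.subtype (g ⟨w, hw⟩)) hL'
    simpa [hL] using this
  have hbfix : extR (L ∘ₗ f) b = b := extR_fix hLf hb
  have hb0 : b = 0 := by
    rw [extR_comp] at hbfix
    rw [LinearMap.comp_apply, hfb, map_zero] at hbfix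
    exact hbfix.symm
  have hza : z = a := by rw [← hab, hb0, add_zero]
  -- Step 4: rational approximation inside the span of the rational kernel
  rw [hza] at hzdef
  obtain ⟨N, t, v, hv⟩ := Submodule.mem_span_set'.mp ha
  have hvk : ∀ i, ∃ k : Fin n → ℚ, k ∈ LinearMap.ker f ∧ ratV k = (v i : Fin n → ℝ) := by
    intro i
    obtain ⟨k, hk1, hk2⟩ := (v i).2
    exact ⟨k, hk1, hk2⟩
  choose k hk1 hk2 using hvk
  set C : ℝ := ∑ i, ‖ratV (k i)‖ with hC
  have hC0 : 0 ≤ C := Finset.sum_nonneg fun i _ => norm_nonneg _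
  set δ : ℝ := ε / (C + 1) with hδ
  have hδ0 : 0 < δ := div_pos hε (by linarith)
  have hqex : ∀ i : Fin N, ∃ q : ℚ, |t i - (q : ℝ)| < δ := by
    intro i
    obtain ⟨q, hq⟩ := exists_rat_near (t i) hδ0
    exact ⟨q, hq⟩
  choose q hq using hqex
  refine ⟨y₀ + ∑ i, q i • k i, ?_, ?_⟩
  · rw [map_add, hy₀, map_sum]
    have : ∀ i ∈ Finset.univ, f (q i • k i) = 0 := by
      intro i _
      rw [map_smul, hk1 i]
      simp
    rw [Finset.sum_congr rfl this]
    simp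
  · intro j
    have hxj : x j = (y₀ j : ℝ) + ∑ i, t i * (ratV (k i) j) := by
      have hxa : x = ratV y₀ + a := by rw [hzdef]; ring
      have hxx := congrFun hxa j
      rw [hxx, Pi.add_apply]
      congr 1
      have hzj := congrFun hv j
      rw [← hzj]
      rw [Finset.sum_apply]
      apply Finset.sum_congr rfl
      intro i _
      rw [Pi.smul_apply, smul_eq_mul, hk2 i]
    have hyj : ((y₀ + ∑ i, q i • k i) j : ℝ) = (y₀ j : ℝ) + ∑ i, (q i : ℝ) * (ratV (k i) j) := by
      have h1 : (y₀ + ∑ i, q i • k i) j = y₀ j + ∑ i, q i * k i j := by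
        simp [Finset.sum_apply]
      rw [h1]
      push_cast
      rfl
    have key : ((y₀ + ∑ i, q i • k i) j : ℝ) - x j = ∑ i, ((q i : ℝ) - t i) * (ratV (k i) j) := by
      rw [hyj, hxj, add_sub_add_left_eq_sub, ← Finset.sum_sub_distrib]
      apply Finset.sum_congr rfl
      intro i _
      ring
    rw [key]
    calc |∑ i, ((q i : ℝ) - t i) * (ratV (k i) j)|
        ≤ ∑ i, |((q i : ℝ) - t i) * (ratV (k i) j)| := Finset.abs_sum_le_sum_abs _ _
      _ ≤ ∑ i, δ * ‖ratV (k i)‖ := by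
          apply Finset.sum_le_sum
          intro i _
          rw [abs_mul]
          apply mul_le_mul
          · rw [abs_sub_comm]; exact le_of_lt (hq i)
          · exact norm_le_pi_norm (ratV (k i)) j
          · exact abs_nonneg _
          · exact le_of_lt hδ0
      _ = δ * C := by rw [← Finset.mul_sum]
      _ < δ * (C + 1) := by nlinarith
      _ = ε := by rw [hδ]; field_simp

lemma face_argmax {N : ℕ} (Q : Set (Fin N → ℝ)) (hQ : IsIntegerPolyhedron Q) (γ : Fin N → ℝ)
    (y : Fin N → ℝ) (hy : y ∈ Q) (hymax : ∀ v ∈ Q, ∑ i, γ i * v i ≤ ∑ i, γ i * y i) :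
    ∃ u, u ∈ Q ∧ IsIntegerVec u ∧ (∑ i, γ i * y i ≤ ∑ i, γ i * u i) := by
  obtain ⟨u, hu, huint⟩ := hQ {x ∈ Q | ∀ v ∈ Q, ∑ i, γ i * v i ≤ ∑ i, γ i * x i}
    ⟨⟨y, hy, hymax⟩, γ, rfl⟩
  exact ⟨u, hu.1, huint, hu.2 y hy⟩

/-- A rational polyhedron satisfying condition (★) is an integer
polyhedron. -/
theorem conditionStar_integerPolyhedron {n : ℕ} (P : Set (Fin n → ℝ))
    (hP : IsRationalPolyhedron P) (hstar : ConditionStar P) :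
    IsIntegerPolyhedron P := by
  classical
  obtain ⟨m, A, b, hPeq⟩ := hP
  rintro F ⟨⟨x, hxF⟩, γ, hF⟩
  have hxPF : x ∈ P ∧ ∀ y ∈ P, ∑ i, γ i * y i ≤ ∑ i, γ i * x i := by rw [hF] at hxF; exact hxF
  obtain ⟨hxP, hxmax⟩ := hxPF
  have hxineq : ∀ i, ∑ j, (A i j : ℝ) * x j ≤ (b i : ℝ) := by rw [hPeq] at hxP; exact hxP
  -- tight rows and the modified rational system
  set T : Fin m → Prop := fun i => ∑ j, (A i j : ℝ) * x j = (b i : ℝ) with hT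
  set A' : Matrix (Fin m) (Fin n) ℚ := fun i j => if T i then A i j else 0 with hA'
  set c : Fin m → ℚ := fun i => if T i then b i else 0 with hc
  set f : (Fin n → ℚ) →ₗ[ℚ] (Fin m → ℚ) := Matrix.toLin' A' with hfdef
  have hxc : extR f x = ratV c := by
    funext i
    rw [extR_apply]
    have hM : LinearMap.toMatrix' f = A' := by rw [hfdef, LinearMap.toMatrix'_toLin']
    rw [hM]
    by_cases hi : T i
    · have h1 : ∀ j, ((A' i j : ℚ) : ℝ) = (A i j : ℝ) := fun j => by
        show ((if T i then A i j else 0 : ℚ) : ℝ) = ((A i j : ℚ) : ℝ)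
        rw [if_pos hi]
      rw [Finset.sum_congr rfl (fun j _ => by rw [h1 j])]
      have hTi : ∑ j, (A i j : ℝ) * x j = (b i : ℝ) := hi
      rw [hTi]
      show (b i : ℝ) = ((if T i then b i else 0 : ℚ) : ℝ)
      rw [if_pos hi]
    · have h1 : ∀ j, ((A' i j : ℚ) : ℝ) = 0 := fun j => by
        show ((if T i then A i j else 0 : ℚ) : ℝ) = (0 : ℝ)
        rw [if_neg hi]
        norm_num
      rw [Finset.sum_congr rfl (fun j _ => by rw [h1 j, zero_mul])]
      rw [Finset.sum_const_zero]
      show (0 : ℝ) = ((if T i then b i else 0 : ℚ) : ℝ)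
      rw [if_neg hi]
      norm_num
  -- margins
  set s : Fin m → ℝ := fun i => ∑ j, |(A i j : ℝ)| with hs
  set g : Fin m → ℝ := fun i => (b i : ℝ) - ∑ j, (A i j : ℝ) * x j with hg
  set εf : Fin m → ℝ := fun i => g i / (s i + 1) with hεf
  have hs0 : ∀ i, 0 ≤ s i := fun i => Finset.sum_nonneg fun j _ => abs_nonneg _
  have hgpos : ∀ i, ¬ T i → 0 < g i := by
    intro i hi
    have h1 := hxineq i
    have hne : ∑ j, (A i j : ℝ) * x j ≠ (b i : ℝ) := hi
    have : ∑ j, (A i j : ℝ) * x j < (b i : ℝ) := lt_of_le_of_ne h1 hne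
    rw [hg]; simp only []; linarith
  have hεfpos : ∀ i, ¬ T i → 0 < εf i := fun i hi => div_pos (hgpos i hi) (by have := hs0 i; linarith)
  set S : Finset (Fin m) := Finset.univ.filter (fun i => ¬ T i) with hS
  set ε : ℝ := if h : S.Nonempty then S.inf' h εf else 1 with hε
  have hε0 : 0 < ε := by
    rw [hε]; split_ifs with h
    · rw [Finset.lt_inf'_iff]
      intro i hi
      exact hεfpos i (by simpa [hS] using hi)
    · norm_num
  have hεle : ∀ i, ¬ T i → ε ≤ εf i := by
    intro i hi
    have hiS : i ∈ S := by simp [hS, hi]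
    rw [hε, dif_pos ⟨i, hiS⟩]
    exact Finset.inf'_le _ hiS
  -- the rational point y in the face
  obtain ⟨y, hfy, hynear⟩ := exists_rat_solution_near f x c hxc ε hε0
  have hdiff : ∀ i, ¬ T i → |∑ j, (A i j : ℝ) * ((y j : ℝ) - x j)| < g i := by
    intro i hi
    have hne : s i + 1 ≠ 0 := by have := hs0 i; linarith
    calc |∑ j, (A i j : ℝ) * ((y j : ℝ) - x j)|
        ≤ ∑ j, |(A i j : ℝ) * ((y j : ℝ) - x j)| := Finset.abs_sum_le_sum_abs _ _
      _ ≤ ∑ j, |(A i j : ℝ)| * ε := by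
          apply Finset.sum_le_sum; intro j _
          rw [abs_mul]
          exact mul_le_mul_of_nonneg_left (le_of_lt (hynear j)) (abs_nonneg _)
      _ = s i * ε := by rw [hs, ← Finset.sum_mul]
      _ ≤ s i * εf i := mul_le_mul_of_nonneg_left (hεle i hi) (hs0 i)
      _ < (s i + 1) * εf i := by nlinarith [hεfpos i hi]
      _ = g i := by rw [hεf]; field_simp
  have hyrow_eq : ∀ i, T i → ∑ j, (A i j : ℝ) * (y j : ℝ) = (b i : ℝ) := by
    intro i hi
    have h1 : f y i = c i := congrFun hfy i
    have h2 : ∑ j, A' i j * y j = c i := by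
      rw [hfdef] at h1
      rw [Matrix.toLin'_apply] at h1
      exact h1
    have h3 : ∑ j, A i j * y j = b i := by
      have e1 : ∀ j, A' i j = A i j := fun j => by
        show (if T i then A i j else 0) = A i j
        rw [if_pos hi]
      have e2 : c i = b i := by
        show (if T i then b i else 0) = b i
        rw [if_pos hi]
      rw [← e2, ← h2]
      exact Finset.sum_congr rfl fun j _ => by rw [e1 j]
    calc ∑ j, (A i j : ℝ) * (y j : ℝ) = ((∑ j, A i j * y j : ℚ) : ℝ) := by push_cast; rfl
      _ = (b i : ℝ) := by rw [h3]
  have hyP : ratV y ∈ P := by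
    rw [hPeq]
    intro i
    show ∑ j, (A i j : ℝ) * (y j : ℝ) ≤ (b i : ℝ)
    by_cases hi : T i
    · rw [hyrow_eq i hi]
    · have h1 : ∑ j, (A i j : ℝ) * (y j : ℝ)
          = ∑ j, (A i j : ℝ) * x j + ∑ j, (A i j : ℝ) * ((y j : ℝ) - x j) := by
        rw [← Finset.sum_add_distrib]; apply Finset.sum_congr rfl; intro j _; ring
      have habs := (abs_lt.mp (hdiff i hi)).2
      have hgi : g i = (b i : ℝ) - ∑ j, (A i j : ℝ) * x j := rfl
      rw [h1]; rw [hgi] at habs; linarith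
  have hpP : (fun j => 2 * x j - (y j : ℝ)) ∈ P := by
    rw [hPeq]
    intro i
    show ∑ j, (A i j : ℝ) * (2 * x j - (y j : ℝ)) ≤ (b i : ℝ)
    have hexp : ∑ j, (A i j : ℝ) * (2 * x j - (y j : ℝ))
        = ∑ j, (A i j : ℝ) * x j - ∑ j, (A i j : ℝ) * ((y j : ℝ) - x j) := by
      rw [← Finset.sum_sub_distrib]; apply Finset.sum_congr rfl; intro j _; ring
    by_cases hi : T i
    · have h2 : ∑ j, (A i j : ℝ) * ((y j : ℝ) - x j)
          = ∑ j, (A i j : ℝ) * (y j : ℝ) - ∑ j, (A i j : ℝ) * x j := by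
        rw [← Finset.sum_sub_distrib]; apply Finset.sum_congr rfl; intro j _; ring
      have hTi : ∑ j, (A i j : ℝ) * x j = (b i : ℝ) := hi
      rw [hexp, h2, hyrow_eq i hi, hTi]
      linarith
    · have habs := (abs_lt.mp (hdiff i hi)).1
      have hgi : g i = (b i : ℝ) - ∑ j, (A i j : ℝ) * x j := rfl
      rw [hexp]; rw [hgi] at habs; linarith
  have hsum2 : ∑ i, γ i * (2 * x i - (y i : ℝ))
      = 2 * (∑ i, γ i * x i) - ∑ i, γ i * (y i : ℝ) := by
    rw [Finset.mul_sum, ← Finset.sum_sub_distrib]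
    apply Finset.sum_congr rfl; intro i _; ring
  have hyx : ∑ i, γ i * x i ≤ ∑ i, γ i * (y i : ℝ) := by
    have h1 := hxmax _ hpP
    rw [hsum2] at h1
    linarith
  -- common denominator and the integer vector w = q y
  set q : ℕ := ∏ i, (y i).den with hqdef
  have hq1 : 1 ≤ q := Nat.one_le_iff_ne_zero.mpr
    (Finset.prod_ne_zero_iff.mpr fun i _ => (y i).den_nz)
  have hwex : ∀ i, ∃ z : ℤ, ((q : ℚ)) * y i = (z : ℚ) := by
    intro i
    obtain ⟨e, he⟩ := Finset.dvd_prod_of_mem (fun i => (y i).den) (Finset.mem_univ i)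
    refine ⟨(y i).num * e, ?_⟩
    have hden : (((y i).den : ℚ)) ≠ 0 := by
      exact_mod_cast (y i).den_nz
    have hkey : ((y i).den : ℚ) * y i = ((y i).num : ℚ) := by
      have h0 := Rat.num_div_den (y i)
      rw [div_eq_iff hden] at h0
      rw [mul_comm]
      exact h0.symm
    rw [hqdef, he]
    push_cast
    rw [mul_comm ((y i).den : ℚ) (e : ℚ), mul_assoc, hkey]
    ring
  choose w hw using hwex
  have hwq : ∀ i, (w i : ℝ) = (q : ℝ) * (y i : ℝ) := by
    intro i
    have h1 : ((((q : ℚ)) * y i : ℚ) : ℝ) = ((w i : ℚ) : ℝ) := by rw [hw i]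
    push_cast at h1
    linarith
  -- apply condition (★) with k = q, r = 1
  have hone : ((1 : ℕ) : ℝ) • P = P := by rw [Nat.cast_one, one_smul]
  have hQint : IsIntegerPolyhedron
      {u ∈ (((1 : ℕ) : ℝ) • P) ∩
        ((fun yy => (fun i => ((w i : ℤ) : ℝ)) - yy) '' (((q - 1 : ℕ) : ℝ) • P)) |
        ∀ i, ((⌊(y i : ℝ)⌋ : ℤ) : ℝ) ≤ u i ∧ u i ≤ (((⌊(y i : ℝ)⌋ + 1 : ℤ)) : ℝ)} :=
    hstar q 1 hq1 w (fun i => ⌊(y i : ℝ)⌋) (fun i => ⌊(y i : ℝ)⌋ + 1)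
      (fun i => (lt_add_one _).le)
  have hy1 : ratV y ∈ ((1 : ℕ) : ℝ) • P := by rw [hone]; exact hyP
  have hy2 : ratV y ∈
      (fun yy => (fun i => ((w i : ℤ) : ℝ)) - yy) '' (((q - 1 : ℕ) : ℝ) • P) := by
    refine ⟨((q - 1 : ℕ) : ℝ) • ratV y, Set.smul_mem_smul_set hyP, ?_⟩
    funext i
    have hq1' : ((q - 1 : ℕ) : ℝ) = (q : ℝ) - 1 := by
      rw [Nat.cast_sub hq1, Nat.cast_one]
    simp only [Pi.sub_apply, Pi.smul_apply, smul_eq_mul]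
    rw [hwq i, hq1']
    show (q : ℝ) * (y i : ℝ) - ((q : ℝ) - 1) * ratV y i = ratV y i
    show (q : ℝ) * (y i : ℝ) - ((q : ℝ) - 1) * (y i : ℝ) = (y i : ℝ)
    ring
  have hybox : ∀ i, ((⌊(y i : ℝ)⌋ : ℤ) : ℝ) ≤ ratV y i
      ∧ ratV y i ≤ (((⌊(y i : ℝ)⌋ + 1 : ℤ)) : ℝ) := by
    intro i
    refine ⟨Int.floor_le _, ?_⟩
    show (y i : ℝ) ≤ (((⌊(y i : ℝ)⌋ + 1 : ℤ)) : ℝ)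
    push_cast
    exact (Int.lt_floor_add_one _).le
  have hyQ : ratV y ∈
      {u ∈ (((1 : ℕ) : ℝ) • P) ∩
        ((fun yy => (fun i => ((w i : ℤ) : ℝ)) - yy) '' (((q - 1 : ℕ) : ℝ) • P)) |
        ∀ i, ((⌊(y i : ℝ)⌋ : ℤ) : ℝ) ≤ u i ∧ u i ≤ (((⌊(y i : ℝ)⌋ + 1 : ℤ)) : ℝ)} :=
    ⟨⟨hy1, hy2⟩, hybox⟩
  have hymaxQ : ∀ v ∈
      {u ∈ (((1 : ℕ) : ℝ) • P) ∩
        ((fun yy => (fun i => ((w i : ℤ) : ℝ)) - yy) '' (((q - 1 : ℕ) : ℝ) • P)) |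
        ∀ i, ((⌊(y i : ℝ)⌋ : ℤ) : ℝ) ≤ u i ∧ u i ≤ (((⌊(y i : ℝ)⌋ + 1 : ℤ)) : ℝ)},
      ∑ i, γ i * v i ≤ ∑ i, γ i * ratV y i := by
    intro v hv
    have hvP : v ∈ P := by have h1 := hv.1.1; rwa [hone] at h1
    exact le_trans (hxmax v hvP) hyx
  obtain ⟨u, huQ, huInt, humax⟩ := face_argmax _ hQint γ (ratV y) hyQ hymaxQ
  refine ⟨u, ?_, huInt⟩
  rw [hF]
  have huP : u ∈ P := by have h1 := huQ.1.1; rwa [hone] at h1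
  refine ⟨huP, fun z hz => ?_⟩
  calc ∑ i, γ i * z i ≤ ∑ i, γ i * x i := hxmax z hz
    _ ≤ ∑ i, γ i * (y i : ℝ) := hyx
    _ ≤ ∑ i, γ i * u i := humax
end CSIPaux
end

section
/- Let P ⊆ ℝⁿ be a rational polyhedron satisfying condition (★): for every nonnegative integer k, every r ∈ {0,…,k} and every integer vector w ∈ ℤⁿ, the set rP ∩ (w − (k−r)P) is box-integer. Then every face F of P also satisfies condition (★). -/
open Finset Pointwise

variable {ι : Type*} [Fintype ι]

set_option linter.unusedSectionVars false
section
variable {ι : Type} [Fintype ι]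

def dotv (c x : ι → ℝ) : ℝ := ∑ i, c i * x i
lemma dotv_add (c x y : ι → ℝ) : dotv c (x + y) = dotv c x + dotv c y := by
  simp [dotv, mul_add, Finset.sum_add_distrib]
lemma dotv_smul (c : ι → ℝ) (t : ℝ) (x : ι → ℝ) : dotv c (t • x) = t * dotv c x := by
  simp [dotv, Finset.mul_sum, mul_comm, mul_left_comm]
lemma dotv_neg (c x : ι → ℝ) : dotv c (-x) = - dotv c x := by
  simp [dotv, ← Finset.sum_neg_distrib]
lemma dotv_sub (c x y : ι → ℝ) : dotv c (x - y) = dotv c x - dotv c y := by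
  rw [sub_eq_add_neg, dotv_add, dotv_neg, sub_eq_add_neg]
lemma dotv_isLinearMap (c : ι → ℝ) : IsLinearMap ℝ (dotv c) :=
  ⟨dotv_add c, fun t x => by rw [dotv_smul]; rfl⟩
lemma dotv_combo (Λ : ℝ) (c e x : ι → ℝ) :
    dotv (fun i => Λ * c i + e i) x = Λ * dotv c x + dotv e x := by
  simp [dotv, add_mul, Finset.sum_add_distrib, Finset.mul_sum, mul_assoc]
lemma dotv_continuous (c : ι → ℝ) : Continuous (dotv c) :=
  continuous_finset_sum _ fun i _ => (continuous_const.mul (continuous_apply i))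
lemma dotv_single [DecidableEq ι] (i : ι) (x : ι → ℝ) : dotv (Pi.single i 1) x = x i := by
  simp [dotv, Pi.single_apply, ite_mul]
lemma dotv_neg_fun (c x : ι → ℝ) : dotv (fun j => -(c j)) x = - dotv c x := by
  simp [dotv, ← Finset.sum_neg_distrib]
lemma dotv_neg_single [DecidableEq ι] (i : ι) (x : ι → ℝ) :
    dotv (fun j => -((Pi.single i (1:ℝ) : ι → ℝ) j)) x = -(x i) := by
  rw [dotv_neg_fun, dotv_single]

/-- `S` is a (real) H-polyhedron. -/
def HPoly (S : Set (ι → ℝ)) : Prop :=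
  ∃ (κ : Type) (_ : Fintype κ) (a : κ → ι → ℝ) (b : κ → ℝ),
    S = {x | ∀ i, dotv (a i) x ≤ b i}

lemma HPoly.inter {S T : Set (ι → ℝ)} (hS : HPoly S) (hT : HPoly T) : HPoly (S ∩ T) := by
  obtain ⟨κ, _, a, b, rfl⟩ := hS
  obtain ⟨κ', _, a', b', rfl⟩ := hT
  exact ⟨κ ⊕ κ', inferInstance, Sum.elim a a', Sum.elim b b', by
    ext x
    simp only [Set.mem_inter_iff, Set.mem_setOf_eq, Sum.forall, Sum.elim_inl, Sum.elim_inr]⟩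

lemma HPoly.convex {S : Set (ι → ℝ)} (hS : HPoly S) : Convex ℝ S := by
  obtain ⟨κ, _, a, b, rfl⟩ := hS
  have : {x : ι → ℝ | ∀ i, dotv (a i) x ≤ b i} = ⋂ i, {x | dotv (a i) x ≤ b i} := by
    ext x; simp
  rw [this]
  exact convex_iInter fun i => convex_halfSpace_le (dotv_isLinearMap (a i)) (b i)

lemma HPoly.isClosed {S : Set (ι → ℝ)} (hS : HPoly S) : IsClosed S := by
  obtain ⟨κ, _, a, b, rfl⟩ := hS
  have : {x : ι → ℝ | ∀ i, dotv (a i) x ≤ b i} = ⋂ i, {x | dotv (a i) x ≤ b i} := by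
    ext x; simp
  rw [this]
  exact isClosed_iInter fun i => isClosed_le (dotv_continuous (a i)) continuous_const

lemma hpoly_singleton_zero [DecidableEq ι] : HPoly ({0} : Set (ι → ℝ)) := by
  refine ⟨ι ⊕ ι, inferInstance,
    Sum.elim (fun i => Pi.single i 1) (fun i j => -((Pi.single i (1:ℝ) : ι → ℝ) j)), 0, ?_⟩
  ext x
  simp only [Set.mem_singleton_iff, Set.mem_setOf_eq, Sum.forall, Sum.elim_inl, Sum.elim_inr,
    Pi.zero_apply, dotv_neg_single, dotv_single]
  constructor
  · rintro rfl; simp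
  · rintro ⟨h1, h2⟩
    funext i
    have a1 := h1 i; have a2 := h2 i
    have : x i = 0 := le_antisymm a1 (by linarith)
    simpa using this

lemma HPoly.smul_nonneg [DecidableEq ι] {S : Set (ι → ℝ)} (hS : HPoly S) (hne : S.Nonempty)
    {r : ℝ} (hr : 0 ≤ r) : HPoly (r • S) := by
  rcases eq_or_lt_of_le hr with h0 | hpos
  · rw [← h0, Set.zero_smul_set hne]
    exact hpoly_singleton_zero
  · obtain ⟨κ, _, a, b, rfl⟩ := hS
    refine ⟨κ, inferInstance, a, fun i => r * b i, ?_⟩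
    ext x
    rw [Set.mem_smul_set_iff_inv_smul_mem₀ (ne_of_gt hpos)]
    simp only [Set.mem_setOf_eq, dotv_smul]
    constructor
    · intro h i
      have := h i
      calc dotv (a i) x = r * (r⁻¹ * dotv (a i) x) := by field_simp
        _ ≤ r * b i := by nlinarith
    · intro h i
      have h2 := h i
      have h3 : r⁻¹ * dotv (a i) x ≤ r⁻¹ * (r * b i) :=
        mul_le_mul_of_nonneg_left h2 (by positivity)
      calc r⁻¹ * dotv (a i) x ≤ r⁻¹ * (r * b i) := h3
        _ = b i := by field_simp

lemma mem_const_sub_image {W x : ι → ℝ} {T : Set (ι → ℝ)} :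
    x ∈ (fun y => W - y) '' T ↔ W - x ∈ T := by
  constructor
  · rintro ⟨y, hy, rfl⟩; simpa using hy
  · intro h; exact ⟨W - x, h, by simp⟩

lemma HPoly.const_sub {S : Set (ι → ℝ)} (hS : HPoly S) (W : ι → ℝ) :
    HPoly ((fun y => W - y) '' S) := by
  obtain ⟨κ, _, a, b, rfl⟩ := hS
  refine ⟨κ, inferInstance, fun i => fun j => -(a i j), fun i => b i - dotv (a i) W, ?_⟩
  ext x
  rw [mem_const_sub_image]
  simp only [Set.mem_setOf_eq, dotv_sub, dotv_neg_fun]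
  constructor <;> intro h i <;> have := h i <;> linarith

lemma HPoly.boxSep [DecidableEq ι] {S : Set (ι → ℝ)} (hS : HPoly S) (c d : ι → ℝ) :
    HPoly {x ∈ S | ∀ i, c i ≤ x i ∧ x i ≤ d i} := by
  obtain ⟨κ, _, a, b, rfl⟩ := hS
  refine ⟨κ ⊕ (ι ⊕ ι), inferInstance,
    Sum.elim a (Sum.elim (fun i j => -((Pi.single i (1:ℝ) : ι → ℝ) j)) (fun i => Pi.single i 1)),
    Sum.elim b (Sum.elim (fun i => -(c i)) d), ?_⟩
  ext x
  simp only [Set.mem_setOf_eq, Sum.forall, Sum.elim_inl, Sum.elim_inr, dotv_neg_single,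
    dotv_single]
  constructor
  · rintro ⟨h1, h2⟩
    exact ⟨h1, fun i => by linarith [(h2 i).1], fun i => (h2 i).2⟩
  · rintro ⟨h1, h2, h3⟩
    exact ⟨h1, fun i => ⟨by linarith [h2 i], h3 i⟩⟩
end

section
variable {ι : Type} [Fintype ι]

lemma exists_pos_eps {κ : Type} [Fintype κ] (g : κ → ℝ) (hg : ∀ i, 0 < g i) :
    ∃ ε : ℝ, 0 < ε ∧ ∀ i, ε ≤ g i := by
  classical
  by_cases h : Nonempty κ
  · obtain ⟨i0, -, hi0⟩ := Finset.exists_min_image Finset.univ g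
      ⟨Classical.arbitrary κ, Finset.mem_univ _⟩
    exact ⟨g i0, hg i0, fun i => hi0 i (Finset.mem_univ i)⟩
  · exact ⟨1, one_pos, fun i => absurd ⟨i⟩ h⟩

lemma HPoly.finite_extremePoints {S : Set (ι → ℝ)} (hS : HPoly S) :
    (S.extremePoints ℝ).Finite := by
  classical
  obtain ⟨κ, _, a, b, rfl⟩ := hS
  set S : Set (ι → ℝ) := {x | ∀ i, dotv (a i) x ≤ b i} with hSdef
  set T : (ι → ℝ) → Set κ := fun x => {i | dotv (a i) x = b i} with hT
  have : Set.InjOn T (S.extremePoints ℝ) := by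
    intro x hx y hy hxy
    by_contra hne
    set d : ι → ℝ := x - y with hd
    have hd0 : d ≠ 0 := sub_ne_zero.2 hne
    have hdT : ∀ i, dotv (a i) x = b i → dotv (a i) d = 0 := by
      intro i hi
      have hiy : dotv (a i) y = b i := by
        have : i ∈ T x := hi
        rw [hxy] at this
        exact this
      rw [hd, dotv_sub, hi, hiy, sub_self]
    have hxS : x ∈ S := hx.1
    -- choose ε
    set g : κ → ℝ := fun i =>
      if dotv (a i) d = 0 then 1 else (b i - dotv (a i) x) / |dotv (a i) d| with hg
    have hgpos : ∀ i, 0 < g i := by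
      intro i
      rw [hg]
      by_cases h : dotv (a i) d = 0
      · simp [h]
      · simp only [h, if_false]
        apply div_pos
        · rcases lt_or_eq_of_le (hxS i) with hlt | he
          · linarith
          · exact absurd (hdT i he) h
        · exact abs_pos.2 h
    obtain ⟨ε, hεpos, hεle⟩ := exists_pos_eps g hgpos
    have hkey : ∀ i, ε * |dotv (a i) d| ≤ b i - dotv (a i) x := by
      intro i
      by_cases h : dotv (a i) d = 0
      · simp [h]; linarith [hxS i]
      · have h1 : ε ≤ (b i - dotv (a i) x) / |dotv (a i) d| := by
          have := hεle i; rw [hg] at this; simpa [h] using this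
        have h2 : (0:ℝ) < |dotv (a i) d| := abs_pos.2 h
        calc ε * |dotv (a i) d| ≤ ((b i - dotv (a i) x) / |dotv (a i) d|) * |dotv (a i) d| :=
              mul_le_mul_of_nonneg_right h1 (le_of_lt h2)
          _ = b i - dotv (a i) x := div_mul_cancel₀ _ (ne_of_gt h2)
    have hmem : ∀ σ : ℝ, |σ| ≤ ε → x + σ • d ∈ S := by
      intro σ hσ i
      rw [dotv_add, dotv_smul]
      have : σ * dotv (a i) d ≤ |σ * dotv (a i) d| := le_abs_self _
      have h2 : |σ * dotv (a i) d| = |σ| * |dotv (a i) d| := abs_mul _ _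
      have h3 : |σ| * |dotv (a i) d| ≤ ε * |dotv (a i) d| :=
        mul_le_mul_of_nonneg_right hσ (abs_nonneg _)
      have := hkey i
      linarith
    have h1 : x + ε • d ∈ S := hmem ε (by rw [abs_of_pos hεpos])
    have h2 : x + (-ε) • d ∈ S := hmem (-ε) (by rw [abs_neg, abs_of_pos hεpos])
    have hseg : x ∈ openSegment ℝ (x + ε • d) (x + (-ε) • d) := by
      refine ⟨1/2, 1/2, by norm_num, by norm_num, by norm_num, ?_⟩
      module
    have := (hx.2 h1 h2 hseg)
    have : ε • d = 0 := by
      have h := congrArg (fun z => z - x) this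
      simpa using h
    rcases smul_eq_zero.1 this with h | h
    · exact absurd h (ne_of_gt hεpos)
    · exact hd0 h
  have hfin : (T '' (S.extremePoints ℝ)).Finite := Set.toFinite _
  exact Set.Finite.of_finite_image hfin this

lemma HPoly.eq_convexHull_extremePoints {S : Set (ι → ℝ)} (hS : HPoly S)
    (hcomp : IsCompact S) : S = convexHull ℝ (S.extremePoints ℝ) := by
  have h1 := closure_convexHull_extremePoints hcomp hS.convex
  have h2 : IsClosed (convexHull ℝ (S.extremePoints ℝ)) :=
    hS.finite_extremePoints.isClosed_convexHull (𝕜 := ℝ)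
  rw [h2.closure_eq] at h1
  exact h1.symm

end

section
variable {ι : Type} [Fintype ι]

lemma dotv_finsum {α : Type*} (c : ι → ℝ) (t : Finset α) (f : α → ι → ℝ) :
    dotv c (∑ a ∈ t, f a) = ∑ a ∈ t, dotv c (f a) :=
  map_sum (dotv_isLinearMap c).mk' f t

lemma hull_repr {V : Set (ι → ℝ)} (hV : V.Finite) {x : ι → ℝ} (hx : x ∈ convexHull ℝ V) :
    ∃ w : (ι → ℝ) → ℝ, (∀ y ∈ V, 0 ≤ w y) ∧ (∑ y ∈ hV.toFinset, w y = 1) ∧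
      ∀ c : ι → ℝ, dotv c x = ∑ y ∈ hV.toFinset, w y * dotv c y := by
  rw [hV.convexHull_eq] at hx
  obtain ⟨w, hw0, hw1, hcm⟩ := hx
  refine ⟨w, hw0, hw1, fun c => ?_⟩
  rw [← hcm, Finset.centerMass_eq_of_sum_1 _ _ hw1, dotv_finsum]
  congr 1; ext y; rw [id_eq, dotv_smul]

lemma hull_dotv_le {V : Set (ι → ℝ)} (hV : V.Finite) {cc : ι → ℝ} {M : ℝ}
    (hb : ∀ v ∈ V, dotv cc v ≤ M) {x : ι → ℝ} (hx : x ∈ convexHull ℝ V) :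
    dotv cc x ≤ M := by
  obtain ⟨w, hw0, hw1, hrep⟩ := hull_repr hV hx
  rw [hrep cc]
  calc ∑ y ∈ hV.toFinset, w y * dotv cc y ≤ ∑ y ∈ hV.toFinset, w y * M := by
        refine Finset.sum_le_sum fun y hy => ?_
        have hyV : y ∈ V := hV.mem_toFinset.1 hy
        exact mul_le_mul_of_nonneg_left (hb y hyV) (hw0 y hyV)
    _ = M := by rw [← Finset.sum_mul, hw1, one_mul]

lemma hull_dotv_eq {V : Set (ι → ℝ)} (hV : V.Finite) {cc g : ι → ℝ} {M N : ℝ}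
    (hb : ∀ v ∈ V, dotv cc v ≤ M) (heq : ∀ v ∈ V, dotv cc v = M → dotv g v = N)
    {x : ι → ℝ} (hx : x ∈ convexHull ℝ V) (hxM : dotv cc x = M) : dotv g x = N := by
  obtain ⟨w, hw0, hw1, hrep⟩ := hull_repr hV hx
  have hzero : ∑ y ∈ hV.toFinset, w y * (M - dotv cc y) = 0 := by
    have := hrep cc
    rw [hxM] at this
    calc ∑ y ∈ hV.toFinset, w y * (M - dotv cc y)
        = ∑ y ∈ hV.toFinset, (w y * M - w y * dotv cc y) := by
          congr 1; ext y; ring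
      _ = (∑ y ∈ hV.toFinset, w y * M) - ∑ y ∈ hV.toFinset, w y * dotv cc y :=
          Finset.sum_sub_distrib _ _
      _ = M - M := by rw [← Finset.sum_mul, hw1, one_mul, ← this]
      _ = 0 := sub_self M
  have hterm : ∀ y ∈ hV.toFinset, w y * (M - dotv cc y) = 0 := by
    rw [← Finset.sum_eq_zero_iff_of_nonneg]
    · exact hzero
    · intro y hy
      have hyV : y ∈ V := hV.mem_toFinset.1 hy
      have := hb y hyV
      have := hw0 y hyV
      nlinarith
  have : dotv g x = ∑ y ∈ hV.toFinset, w y * N := by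
    rw [hrep g]
    refine Finset.sum_congr rfl fun y hy => ?_
    have hyV : y ∈ V := hV.mem_toFinset.1 hy
    rcases mul_eq_zero.1 (hterm y hy) with h | h
    · rw [h, zero_mul, zero_mul]
    · have hccy : dotv cc y = M := by linarith
      rw [heq y hyV hccy]
  rw [this, ← Finset.sum_mul, hw1, one_mul]

end

/-- Condition (★) is inherited by faces. -/
theorem conditionStar_face {n : ℕ} (P : Set (Fin n → ℝ))
    (hP : IsRationalPolyhedron P) (hstar : ConditionStar P)
    (F : Set (Fin n → ℝ)) (hF : IsFace P F) :
    ConditionStar F := by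
  classical
  obtain ⟨⟨x₀, hx₀F⟩, c, hFc⟩ := hF
  have hPpoly : HPoly P := by
    obtain ⟨m, A, b, hPeq⟩ := hP
    exact ⟨Fin m, inferInstance, fun i j => (A i j : ℝ), fun i => (b i : ℝ), by rw [hPeq]; rfl⟩
  have hx₀F' := hx₀F
  rw [hFc] at hx₀F'
  have hx₀P : x₀ ∈ P := hx₀F'.1
  have hPne : P.Nonempty := ⟨x₀, hx₀P⟩
  have hmax : ∀ y ∈ P, dotv c y ≤ dotv c x₀ := hx₀F'.2
  set δ := dotv c x₀ with hδ
  have hFeq : F = {x ∈ P | dotv c x = δ} := by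
    rw [hFc]; ext x
    simp only [Set.mem_setOf_eq]
    constructor
    · rintro ⟨hxP, hx⟩
      exact ⟨hxP, le_antisymm (hmax x hxP) (hx x₀ hx₀P)⟩
    · rintro ⟨hxP, hx⟩
      exact ⟨hxP, fun y hy => le_of_le_of_eq (hmax y hy) hx.symm⟩
  have hFP : F ⊆ P := fun x hx => by rw [hFeq] at hx; exact hx.1
  have hP_le : ∀ t : ℝ, 0 ≤ t → ∀ x ∈ t • P, dotv c x ≤ t * δ := by
    rintro t ht x ⟨y, hy, rfl⟩
    rw [dotv_smul]
    exact mul_le_mul_of_nonneg_left (hmax y hy) ht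
  have hF_eq : ∀ t : ℝ, ∀ x ∈ t • F, dotv c x = t * δ := by
    rintro t x ⟨y, hy, rfl⟩
    rw [hFeq] at hy
    rw [dotv_smul, hy.2]
  have hP_mem : ∀ t : ℝ, ∀ x ∈ t • P, dotv c x = t * δ → x ∈ t • F := by
    rintro t x ⟨y, hy, rfl⟩ hx
    by_cases ht : t = 0
    · exact ⟨x₀, hx₀F, by simp [ht]⟩
    · rw [dotv_smul] at hx
      have hyδ : dotv c y = δ := mul_left_cancel₀ ht hx
      exact ⟨y, by rw [hFeq]; exact ⟨hy, hyδ⟩, rfl⟩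
  intro k r hrk w c' d' hcd G hG
  obtain ⟨⟨x₂, hx₂G⟩, e, hGe⟩ := hG
  set WR : Fin n → ℝ := fun i => (w i : ℝ) with hWR
  set SF : Set (Fin n → ℝ) :=
    {x ∈ ((r : ℝ) • F) ∩ ((fun y => WR - y) '' (((k - r : ℕ) : ℝ) • F)) |
      ∀ i, (c' i : ℝ) ≤ x i ∧ x i ≤ (d' i : ℝ)} with hSF
  set K : Set (Fin n → ℝ) :=
    {x ∈ ((r : ℝ) • P) ∩ ((fun y => WR - y) '' (((k - r : ℕ) : ℝ) • P)) |
      ∀ i, (c' i : ℝ) ≤ x i ∧ x i ≤ (d' i : ℝ)} with hK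
  have hIPK : IsIntegerPolyhedron K := hstar k r hrk w c' d' hcd
  have memSF : ∀ x, x ∈ SF ↔
      ((x ∈ (r : ℝ) • F ∧ WR - x ∈ ((k - r : ℕ) : ℝ) • F) ∧
        ∀ i, (c' i : ℝ) ≤ x i ∧ x i ≤ (d' i : ℝ)) := by
    intro x
    rw [hSF]
    simp only [Set.mem_setOf_eq, Set.mem_inter_iff, mem_const_sub_image]
  have memK : ∀ x, x ∈ K ↔
      ((x ∈ (r : ℝ) • P ∧ WR - x ∈ ((k - r : ℕ) : ℝ) • P) ∧
        ∀ i, (c' i : ℝ) ≤ x i ∧ x i ≤ (d' i : ℝ)) := by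
    intro x
    rw [hK]
    simp only [Set.mem_setOf_eq, Set.mem_inter_iff, mem_const_sub_image]
  have hSFK : SF ⊆ K := by
    intro x hx
    rw [memSF] at hx
    rw [memK]
    exact ⟨⟨Set.smul_set_mono hFP hx.1.1, Set.smul_set_mono hFP hx.1.2⟩, hx.2⟩
  have hx₂G' := hx₂G
  rw [hGe] at hx₂G'
  have hx₂SF : x₂ ∈ SF := hx₂G'.1
  have hmaxG : ∀ y ∈ SF, dotv e y ≤ dotv e x₂ := hx₂G'.2
  set μ := dotv e x₂ with hμ
  have hGmem : ∀ x ∈ SF, dotv e x = μ → x ∈ G := by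
    intro x hx hxe
    rw [hGe]
    exact ⟨hx, fun y hy => le_of_le_of_eq (hmaxG y hy) hxe.symm⟩
  -- key equality
  have hx₂r : dotv c x₂ = (r : ℝ) * δ := hF_eq _ _ ((memSF x₂).1 hx₂SF).1.1
  have hx₂s : dotv c (WR - x₂) = ((k - r : ℕ) : ℝ) * δ := hF_eq _ _ ((memSF x₂).1 hx₂SF).1.2
  have keyEq : dotv c WR = (r : ℝ) * δ + ((k - r : ℕ) : ℝ) * δ := by
    have h := hx₂s
    rw [dotv_sub, hx₂r] at h
    linarith
  have hKle : ∀ x ∈ K, dotv c x ≤ (r : ℝ) * δ := fun x hx =>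
    hP_le _ (Nat.cast_nonneg r) _ ((memK x).1 hx).1.1
  have hKmem : ∀ x ∈ K, dotv c x = (r : ℝ) * δ → x ∈ SF := by
    intro x hx hxc
    rw [memK] at hx
    rw [memSF]
    refine ⟨⟨hP_mem _ _ hx.1.1 hxc, hP_mem _ _ hx.1.2 ?_⟩, hx.2⟩
    rw [dotv_sub, hxc, keyEq]
    ring
  -- K is a compact polytope
  have hKpoly : HPoly K := by
    rw [hK]
    exact ((hPpoly.smul_nonneg hPne (Nat.cast_nonneg r)).inter
      ((hPpoly.smul_nonneg hPne (Nat.cast_nonneg (k - r))).const_sub WR)).boxSep _ _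
  have hKcomp : IsCompact K := by
    have hsub : K ⊆ Set.pi Set.univ fun i => Set.Icc ((c' i : ℝ)) ((d' i : ℝ)) := by
      intro x hx
      rw [memK] at hx
      exact fun i _ => ⟨(hx.2 i).1, (hx.2 i).2⟩
    exact (isCompact_univ_pi fun i => isCompact_Icc).of_isClosed_subset hKpoly.isClosed hsub
  have hVfin : (K.extremePoints ℝ).Finite := hKpoly.finite_extremePoints
  have hKhull : K = convexHull ℝ (K.extremePoints ℝ) :=
    hKpoly.eq_convexHull_extremePoints hKcomp
  have hVK : K.extremePoints ℝ ⊆ K := extremePoints_subset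
  set rδ := (r : ℝ) * δ with hrδ
  set Λ := 1 + ∑ v ∈ hVfin.toFinset, max 0 ((dotv e v - μ) / (rδ - dotv c v)) with hΛdef
  have hΛ1 : 1 ≤ Λ := by
    rw [hΛdef]
    have h0 : (0:ℝ) ≤ ∑ v ∈ hVfin.toFinset, max 0 ((dotv e v - μ) / (rδ - dotv c v)) :=
      Finset.sum_nonneg fun v _ => le_max_left 0 _
    linarith
  have hΛkey : ∀ v ∈ K.extremePoints ℝ, dotv c v < rδ →
      dotv e v - μ < Λ * (rδ - dotv c v) := by
    intro v hv hlt
    have hq : (dotv e v - μ) / (rδ - dotv c v) ≤ Λ - 1 := by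
      have hle : max 0 ((dotv e v - μ) / (rδ - dotv c v)) ≤
          ∑ u ∈ hVfin.toFinset, max 0 ((dotv e u - μ) / (rδ - dotv c u)) :=
        Finset.single_le_sum (f := fun u => max (0:ℝ) ((dotv e u - μ) / (rδ - dotv c u)))
          (fun u _ => le_max_left 0 _) (hVfin.mem_toFinset.2 hv)
      have h2 := le_max_right 0 ((dotv e v - μ) / (rδ - dotv c v))
      rw [hΛdef]
      linarith
    have hpos : 0 < rδ - dotv c v := by linarith
    have h2 : dotv e v - μ = ((dotv e v - μ) / (rδ - dotv c v)) * (rδ - dotv c v) :=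
      (div_mul_cancel₀ _ (ne_of_gt hpos)).symm
    calc dotv e v - μ = ((dotv e v - μ) / (rδ - dotv c v)) * (rδ - dotv c v) := h2
      _ ≤ (Λ - 1) * (rδ - dotv c v) := mul_le_mul_of_nonneg_right hq (le_of_lt hpos)
      _ < Λ * (rδ - dotv c v) := by nlinarith
  set cc : Fin n → ℝ := fun i => Λ * c i + e i with hcc
  have hccdot : ∀ x, dotv cc x = Λ * dotv c x + dotv e x := fun x => dotv_combo Λ c e x
  set M := Λ * rδ + μ with hM
  have hVle : ∀ v ∈ K.extremePoints ℝ, dotv cc v ≤ M := by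
    intro v hv
    have hvK : v ∈ K := hVK hv
    rcases lt_or_eq_of_le (hKle v hvK) with hlt | heq
    · have h1 := hΛkey v hv hlt
      have h2 : Λ * (rδ - dotv c v) = Λ * rδ - Λ * dotv c v := by ring
      rw [hccdot, hM]
      linarith
    · have hvSF : v ∈ SF := hKmem v hvK heq
      have h1 := hmaxG v hvSF
      rw [hccdot, heq, hM]
      linarith
  have hVeq : ∀ v ∈ K.extremePoints ℝ, dotv cc v = M → dotv c v = rδ ∧ dotv e v = μ := by
    intro v hv hvM
    have hvK : v ∈ K := hVK hv
    rcases lt_or_eq_of_le (hKle v hvK) with hlt | heq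
    · exfalso
      have h1 := hΛkey v hv hlt
      have h2 : Λ * (rδ - dotv c v) = Λ * rδ - Λ * dotv c v := by ring
      rw [hccdot, hM] at hvM
      linarith
    · refine ⟨heq, ?_⟩
      rw [hccdot, heq, hM] at hvM
      linarith
  have hKle' : ∀ x ∈ K, dotv cc x ≤ M := fun x hx =>
    hull_dotv_le hVfin hVle (hKhull ▸ hx)
  have hx₂K : x₂ ∈ K := hSFK hx₂SF
  have hx₂cc : dotv cc x₂ = M := by rw [hccdot, hx₂r, hM, hμ]
  -- the exposed face of K determined by cc
  have hG'face : IsFace K {x ∈ K | ∀ y ∈ K, ∑ i, cc i * y i ≤ ∑ i, cc i * x i} :=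
    ⟨⟨x₂, hx₂K, fun y hy => le_of_le_of_eq (hKle' y hy) hx₂cc.symm⟩, cc, rfl⟩
  obtain ⟨xs, hxsG', hxsint⟩ := hIPK _ hG'face
  have hxsK : xs ∈ K := hxsG'.1
  have hxscc : dotv cc xs = M :=
    le_antisymm (hKle' xs hxsK) (le_of_eq_of_le hx₂cc.symm (hxsG'.2 x₂ hx₂K))
  have hxsc : dotv c xs = rδ :=
    hull_dotv_eq hVfin hVle (fun v hv h => (hVeq v hv h).1) (hKhull ▸ hxsK) hxscc
  have hxse : dotv e xs = μ :=
    hull_dotv_eq hVfin hVle (fun v hv h => (hVeq v hv h).2) (hKhull ▸ hxsK) hxscc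
  exact ⟨xs, hGmem xs (hKmem xs hxsK hxsc) hxse, hxsint⟩
end

section
/- Let P ⊆ ℝⁿ be a rational polyhedron satisfying condition (★): for every nonnegative integer k, every r ∈ {0,…,k} and every integer vector w ∈ ℤⁿ, the set rP ∩ (w − (k−r)P) is box-integer. Then for every pair of integer vectors c ≤ d in ℤⁿ, the polyhedron P' := {x ∈ P | c ≤ x ≤ d} also satisfies condition (★). -/
open Finset Pointwise

variable {ι : Type*} [Fintype ι]

lemma empty_int (T : Set (ι → ℝ)) (h : T = ∅) : IsIntegerPolyhedron T := by
  rintro F ⟨⟨x, hx⟩, cc, hc⟩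
  rw [hc] at hx
  exact absurd hx.1 (by simp [h])

lemma mem_reflect (W : ι → ℝ) (A : Set (ι → ℝ)) (x : ι → ℝ) :
    x ∈ (fun y => W - y) '' A ↔ W - x ∈ A := by
  constructor
  · rintro ⟨y, hy, rfl⟩; simpa using hy
  · intro h; exact ⟨W - x, h, by simp⟩

lemma smul_box_mem (P : Set (ι → ℝ)) (c d : ι → ℤ) (a : ℕ)
    (hne : {x ∈ P | ∀ i, (c i : ℝ) ≤ x i ∧ x i ≤ (d i : ℝ)}.Nonempty) (x : ι → ℝ) :
    x ∈ (a : ℝ) • {x ∈ P | ∀ i, (c i : ℝ) ≤ x i ∧ x i ≤ (d i : ℝ)} ↔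
    x ∈ (a : ℝ) • P ∧ ∀ i, ((if a = 0 then 0 else a * c i : ℤ) : ℝ) ≤ x i ∧
      x i ≤ ((if a = 0 then 0 else a * d i : ℤ) : ℝ) := by
  rcases Nat.eq_zero_or_pos a with h0 | hpos
  · subst h0
    have hPne : P.Nonempty := hne.mono (Set.sep_subset _ _) |>.imp (fun _ h => h) |>.elim
      (fun y hy => ⟨y, hy⟩)
    simp only [Nat.cast_zero, Set.zero_smul_set hne, Set.zero_smul_set hPne, if_pos rfl]
    constructor
    · rintro h
      refine ⟨h, fun i => ?_⟩
      simp only [Set.mem_zero] at h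
      subst h
      simp
    · exact fun h => h.1
  · have ha : (a : ℝ) ≠ 0 := by positivity
    have ha' : (0 : ℝ) < a := by positivity
    rw [Set.mem_smul_set_iff_inv_smul_mem₀ ha, Set.mem_smul_set_iff_inv_smul_mem₀ ha]
    simp only [Set.mem_setOf_eq, Pi.smul_apply, smul_eq_mul, if_neg hpos.ne']
    constructor
    · rintro ⟨h1, h2⟩
      refine ⟨h1, fun i => ?_⟩
      obtain ⟨l, r⟩ := h2 i
      push_cast
      have key : (a : ℝ) * ((a : ℝ)⁻¹ * x i) = x i := by field_simp
      constructor
      · linarith [mul_le_mul_of_nonneg_left l ha'.le, key]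
      · linarith [mul_le_mul_of_nonneg_left r ha'.le, key]
    · rintro ⟨h1, h2⟩
      refine ⟨h1, fun i => ?_⟩
      obtain ⟨l, r⟩ := h2 i
      push_cast at l r
      constructor
      · rw [inv_mul_eq_div, le_div_iff₀ ha']; nlinarith
      · rw [inv_mul_eq_div, div_le_iff₀ ha']; nlinarith


/-- Condition (★) is inherited by intersections with integer boxes. -/
theorem conditionStar_box {n : ℕ} (P : Set (Fin n → ℝ))
    (hP : IsRationalPolyhedron P) (hstar : ConditionStar P)
    (c d : Fin n → ℤ) (hcd : ∀ i, c i ≤ d i) :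
    ConditionStar {x ∈ P | ∀ i, (c i : ℝ) ≤ x i ∧ x i ≤ (d i : ℝ)} := by
  intro k r hr w e f hef
  rcases Set.eq_empty_or_nonempty {x ∈ P | ∀ i, (c i : ℝ) ≤ x i ∧ x i ≤ (d i : ℝ)}
    with hQe | hQne
  · apply empty_int
    rw [hQe]
    ext x
    simp
  · set E : Fin n → ℤ := fun i => max (e i) (max (if r = 0 then 0 else r * c i)
      (w i - (if k - r = 0 then 0 else (k - r : ℕ) * d i))) with hE
    set F : Fin n → ℤ := fun i => min (f i) (min (if r = 0 then 0 else r * d i)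
      (w i - (if k - r = 0 then 0 else (k - r : ℕ) * c i))) with hF
    by_cases hEF : ∀ i, E i ≤ F i
    · have hres := hstar k r hr w E F hEF
      have heq :
          {x ∈ ((r : ℝ) • {x ∈ P | ∀ i, (c i : ℝ) ≤ x i ∧ x i ≤ (d i : ℝ)}) ∩
              ((fun y => (fun i => (w i : ℝ)) - y) ''
                (((k - r : ℕ) : ℝ) • {x ∈ P | ∀ i, (c i : ℝ) ≤ x i ∧ x i ≤ (d i : ℝ)})) |
            ∀ i, (e i : ℝ) ≤ x i ∧ x i ≤ (f i : ℝ)} =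
          {x ∈ ((r : ℝ) • P) ∩
              ((fun y => (fun i => (w i : ℝ)) - y) '' (((k - r : ℕ) : ℝ) • P)) |
            ∀ i, (E i : ℝ) ≤ x i ∧ x i ≤ (F i : ℝ)} := by
        ext x
        simp only [Set.mem_setOf_eq, Set.mem_inter_iff, mem_reflect,
          smul_box_mem P c d r hQne, smul_box_mem P c d (k - r) hQne, Pi.sub_apply, hE, hF]
        constructor
        · rintro ⟨⟨⟨hxP, hbx1⟩, hxR, hbx2⟩, hbox⟩
          refine ⟨⟨hxP, hxR⟩, fun i => ?_⟩
          obtain ⟨l1, u1⟩ := hbx1 i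
          obtain ⟨l2, u2⟩ := hbx2 i
          obtain ⟨l3, u3⟩ := hbox i
          push_cast at l1 u1 l2 u2 ⊢
          constructor
          · refine max_le l3 (max_le l1 ?_)
            linarith
          · refine le_min u3 (le_min u1 ?_)
            linarith
        · rintro ⟨⟨hxP, hxR⟩, hbox⟩
          refine ⟨⟨⟨hxP, fun i => ?_⟩, hxR, fun i => ?_⟩, fun i => ?_⟩ <;>
          · have hb := hbox i
            push_cast [max_le_iff, le_min_iff] at hb
            push_cast
            constructor <;>
              linarith [hb.1.1, hb.1.2.1, hb.1.2.2, hb.2.1, hb.2.2.1, hb.2.2.2]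
      rw [heq]
      exact hres
    · push_neg at hEF
      obtain ⟨i, hi⟩ := hEF
      apply empty_int
      ext x
      simp only [Set.mem_setOf_eq, Set.mem_inter_iff, mem_reflect,
        smul_box_mem P c d r hQne, smul_box_mem P c d (k - r) hQne, Pi.sub_apply,
        Set.mem_empty_iff_false, iff_false, not_and]
      rintro ⟨⟨hxP, hbx1⟩, hxR, hbx2⟩ hbox
      obtain ⟨l1, u1⟩ := hbx1 i
      obtain ⟨l2, u2⟩ := hbx2 i
      obtain ⟨l3, u3⟩ := hbox i
      push_cast at l1 u1 l2 u2
      have hcast : (E i : ℝ) ≤ (F i : ℝ) := by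
        rw [hE, hF]
        push_cast
        refine max_le (le_min ?_ (le_min ?_ ?_)) (max_le (le_min ?_ (le_min ?_ ?_))
          (le_min ?_ (le_min ?_ ?_))) <;> linarith
      exact absurd (by exact_mod_cast hcast) (not_le.mpr hi)
end

section
/- Let P ⊆ ℝⁿ be a rational polyhedron satisfying condition (★): for every nonnegative integer k, every r ∈ {0,…,k} and every integer vector w ∈ ℤⁿ, the set rP ∩ (w − (k−r)P) is box-integer. Then P itself is box-integer. -/
open Finset Pointwise

variable {ι : Type*} [Fintype ι]

def dotq {k : ℕ} (a x : Fin k → ℚ) : ℚ := ∑ j, a j * x j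
def dotR {k : ℕ} (a : Fin k → ℚ) (x : Fin k → ℝ) : ℝ := ∑ j, (a j : ℝ) * x j
def linR {k : ℕ} (c z : Fin k → ℝ) : ℝ := ∑ j, c j * z j
def SolR {k : ℕ} (LQ : List ((Fin k → ℚ) × ℚ)) : Set (Fin k → ℝ) :=
  {x | ∀ r ∈ LQ, dotR r.1 x ≤ (r.2 : ℝ)}

lemma dotR_cast {k : ℕ} (a : Fin k → ℚ) (x : Fin k → ℚ) :
    dotR a (fun j => (x j : ℝ)) = ((dotq a x : ℚ) : ℝ) := by
  simp [dotR, dotq]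

lemma dotR_eq_linR {k : ℕ} (a : Fin k → ℚ) (x : Fin k → ℝ) :
    dotR a x = linR (fun j => (a j : ℝ)) x := rfl

lemma dotR_neg {k : ℕ} (a : Fin k → ℚ) (x : Fin k → ℝ) :
    dotR (-a) x = - dotR a x := by
  simp [dotR]

lemma linR_smul {k : ℕ} (c : Fin k → ℝ) (s : ℝ) (z : Fin k → ℝ) :
    linR c (s • z) = s * linR c z := by
  simp [linR, Finset.mul_sum, mul_left_comm]

lemma linR_sum {k : ℕ} {α : Type*} (c : Fin k → ℝ) (s : Finset α) (f : α → (Fin k → ℝ)) :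
    linR c (∑ i ∈ s, f i) = ∑ i ∈ s, linR c (f i) := by
  simp only [linR, Finset.sum_apply, Finset.mul_sum]
  rw [Finset.sum_comm]

lemma linR_comb {k : ℕ} (c a b d : Fin k → ℝ) (s : ℝ) :
    linR c (a + s • (b - d)) = linR c a + s * (linR c b - linR c d) := by
  simp only [linR, Pi.add_apply, Pi.smul_apply, Pi.sub_apply, smul_eq_mul, mul_add, mul_sub,
    Finset.sum_add_distrib, Finset.mul_sum]
  rw [Finset.sum_sub_distrib]
  congr 1
  congr 1 <;> exact Finset.sum_congr rfl fun j _ => by ring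

lemma sol_iff_get {k : ℕ} (LQ : List ((Fin k → ℚ) × ℚ)) (z : Fin k → ℝ) :
    z ∈ SolR LQ ↔ ∀ i : Fin LQ.length, dotR (LQ.get i).1 z ≤ ((LQ.get i).2 : ℝ) := by
  constructor
  · intro h i; simpa using h _ (List.get_mem LQ i)
  · intro h r hr
    obtain ⟨i, rfl⟩ := List.mem_iff_get.1 hr
    exact h i

lemma fm_rat_sol {k : ℕ} : ∀ (L : List ((Fin k → ℚ) × ℚ)),
    (∃ x : Fin k → ℝ, ∀ r ∈ L, dotR r.1 x ≤ (r.2 : ℝ)) →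
    ∃ y : Fin k → ℚ, ∀ r ∈ L, dotq r.1 y ≤ r.2 := by
  induction k with
  | zero =>
    rintro L ⟨x, hx⟩
    refine ⟨fun _ => 0, fun r hr => ?_⟩
    have := hx r hr
    simp only [dotR, Finset.univ_eq_empty, Finset.sum_empty] at this
    have h : (0:ℚ) ≤ r.2 := by exact_mod_cast this
    simpa [dotq]
  | succ k ih =>
    rintro L ⟨x, hx⟩
    classical
    set lst := Fin.last k with hlst
    set comb : ((Fin (k+1) → ℚ) × ℚ) → ((Fin (k+1) → ℚ) × ℚ) → ((Fin k → ℚ) × ℚ) :=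
      fun p m => (fun j => (-(m.1 lst)) * p.1 j.castSucc + p.1 lst * m.1 j.castSucc,
              (-(m.1 lst)) * p.2 + p.1 lst * m.2) with hcomb
    set zeros := L.filter (fun r => r.1 lst = 0) with hzeros
    set pos := L.filter (fun r => 0 < r.1 lst) with hposdef
    set neg := L.filter (fun r => r.1 lst < 0) with hnegdef
    set newL := zeros.map (fun r => (fun j => r.1 j.castSucc, r.2)) ++ (pos.product neg).map (fun pm => comb pm.1 pm.2) with hnewL
    have hsplitR : ∀ (a : Fin (k+1) → ℚ) (z : Fin (k+1) → ℝ),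
        dotR a z = dotR (fun j => a j.castSucc) (fun j => z j.castSucc) + (a lst : ℝ) * z lst := by
      intro a z
      simpa [dotR] using Fin.sum_univ_castSucc (fun j => (a j : ℝ) * z j)
    have hsplitq : ∀ (a : Fin (k+1) → ℚ) (z : Fin (k+1) → ℚ),
        dotq a z = dotq (fun j => a j.castSucc) (fun j => z j.castSucc) + a lst * z lst := by
      intro a z
      simpa [dotq] using Fin.sum_univ_castSucc (fun j => a j * z j)
    have haddR : ∀ (a b : Fin k → ℚ) (u v : ℚ) (z : Fin k → ℝ),
        dotR (fun j => u * a j + v * b j) z = (u:ℝ) * dotR a z + (v:ℝ) * dotR b z := by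
      intro a b u v z
      simp only [dotR, Finset.mul_sum, ← Finset.sum_add_distrib]
      refine Finset.sum_congr rfl fun j _ => by push_cast; ring
    have haddq : ∀ (a b : Fin k → ℚ) (u v : ℚ) (z : Fin k → ℚ),
        dotq (fun j => u * a j + v * b j) z = u * dotq a z + v * dotq b z := by
      intro a b u v z
      simp only [dotq, Finset.mul_sum, ← Finset.sum_add_distrib]
      exact Finset.sum_congr rfl fun j _ => by ring
    have hnewsol : ∃ x' : Fin k → ℝ, ∀ r ∈ newL, dotR r.1 x' ≤ (r.2 : ℝ) := by
      refine ⟨fun j => x j.castSucc, fun r hr => ?_⟩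
      rcases List.mem_append.1 hr with h | h
      · rcases List.mem_map.1 h with ⟨s, hs, rfl⟩
        rcases List.mem_filter.1 hs with ⟨hsL, hs0⟩
        have h0 : s.1 lst = 0 := by simpa using hs0
        have := hx s hsL
        rw [hsplitR] at this
        simpa [h0] using this
      · rcases List.mem_map.1 h with ⟨pm, hpm, rfl⟩
        have hpm' : pm.1 ∈ pos ∧ pm.2 ∈ neg := by
          have := List.pair_mem_product.1 (show (pm.1, pm.2) ∈ pos.product neg by simpa using hpm)
          exact this
        rcases List.mem_filter.1 hpm'.1 with ⟨hpL, hp0⟩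
        rcases List.mem_filter.1 hpm'.2 with ⟨hmL, hm0⟩
        have hα : 0 < pm.1.1 lst := by simpa using hp0
        have hβ : pm.2.1 lst < 0 := by simpa using hm0
        have h1 := hx pm.1 hpL
        have h2 := hx pm.2 hmL
        rw [hsplitR] at h1 h2
        have hex : dotR (comb pm.1 pm.2).1 (fun j => x j.castSucc)
            = ((-(pm.2.1 lst) : ℚ) : ℝ) * dotR (fun j => pm.1.1 j.castSucc) (fun j => x j.castSucc)
              + ((pm.1.1 lst : ℚ) : ℝ) * dotR (fun j => pm.2.1 j.castSucc) (fun j => x j.castSucc) :=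
          haddR _ _ _ _ _
        have hα' : (0:ℝ) < ((pm.1.1 lst : ℚ) : ℝ) := by exact_mod_cast hα
        have hβ' : ((pm.2.1 lst : ℚ):ℝ) < 0 := by exact_mod_cast hβ
        rw [hex]
        have hc2 : (((comb pm.1 pm.2).2 : ℚ) : ℝ)
            = ((-(pm.2.1 lst):ℚ):ℝ) * ((pm.1.2:ℚ):ℝ) + ((pm.1.1 lst : ℚ):ℝ) * ((pm.2.2:ℚ):ℝ) := by
          show (((-(pm.2.1 lst)) * pm.1.2 + pm.1.1 lst * pm.2.2 : ℚ) : ℝ) = _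
          push_cast; ring
        rw [hc2]
        push_cast at h1 h2 ⊢
        nlinarith [h1, h2, hα', hβ']
    obtain ⟨y, hy⟩ := ih newL hnewsol
    set upf : ((Fin (k+1) → ℚ) × ℚ) → ℚ := fun r => (r.2 - dotq (fun j => r.1 j.castSucc) y) / r.1 lst with hupf
    set U := (pos.map upf).toFinset with hUdef
    set Lo := (neg.map upf).toFinset with hLodef
    have key : ∀ l ∈ Lo, ∀ u ∈ U, l ≤ u := by
      intro l hl u hu
      rcases List.mem_map.1 (List.mem_toFinset.1 hl) with ⟨m, hm, rfl⟩
      rcases List.mem_map.1 (List.mem_toFinset.1 hu) with ⟨p, hp, rfl⟩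
      rcases List.mem_filter.1 hm with ⟨hmL, hm0⟩
      rcases List.mem_filter.1 hp with ⟨hpL, hp0⟩
      have hα : 0 < p.1 lst := by simpa using hp0
      have hβ : m.1 lst < 0 := by simpa using hm0
      have hrow : comb p m ∈ newL := by
        refine List.mem_append.2 (Or.inr (List.mem_map.2 ⟨(p, m), ?_, rfl⟩))
        exact List.pair_mem_product.2 ⟨hp, hm⟩
      have hcon := hy _ hrow
      have hex : dotq (comb p m).1 y
          = (-(m.1 lst)) * dotq (fun j => p.1 j.castSucc) y + (p.1 lst) * dotq (fun j => m.1 j.castSucc) y :=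
        haddq _ _ _ _ _
      rw [hex] at hcon
      have hc2 : (comb p m).2 = (-(m.1 lst)) * p.2 + p.1 lst * m.2 := rfl
      rw [hc2] at hcon
      have e1 : m.1 lst * upf m = m.2 - dotq (fun j => m.1 j.castSucc) y := by
        rw [hupf]; exact mul_div_cancel₀ _ (ne_of_lt hβ)
      have e2 : p.1 lst * upf p = p.2 - dotq (fun j => p.1 j.castSucc) y := by
        rw [hupf]; exact mul_div_cancel₀ _ (ne_of_gt hα)
      nlinarith [e1, e2, hcon, hα, hβ, mul_pos hα (neg_pos.2 hβ)]
    have hT : ∃ t : ℚ, (∀ l ∈ Lo, l ≤ t) ∧ (∀ u ∈ U, t ≤ u) := by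
      by_cases hU : U.Nonempty
      · exact ⟨U.min' hU, fun l hl => Finset.le_min' _ _ _ (fun u hu => key l hl u hu),
          fun u hu => Finset.min'_le _ _ hu⟩
      · by_cases hL : Lo.Nonempty
        · exact ⟨Lo.max' hL, fun l hl => Finset.le_max' _ _ hl,
            fun u hu => absurd ⟨u, hu⟩ hU⟩
        · exact ⟨0, fun l hl => absurd ⟨l, hl⟩ hL, fun u hu => absurd ⟨u, hu⟩ hU⟩
    obtain ⟨t, htl, htu⟩ := hT
    refine ⟨Fin.snoc y t, fun r hr => ?_⟩
    have h1 : (fun j : Fin k => (Fin.snoc y t : Fin (k+1) → ℚ) j.castSucc) = y := by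
      funext j; simp
    have h2 : (Fin.snoc y t : Fin (k+1) → ℚ) lst = t := by
      rw [hlst]; simp
    have hsp : dotq r.1 (Fin.snoc y t) = dotq (fun j => r.1 j.castSucc) y + r.1 lst * t := by
      rw [hsplitq, h1, h2]
    rw [hsp]
    rcases lt_trichotomy (r.1 lst) 0 with h0 | h0 | h0
    · have hrneg : r ∈ neg := List.mem_filter.2 ⟨hr, by simpa using h0⟩
      have hmem : upf r ∈ Lo := List.mem_toFinset.2 (List.mem_map.2 ⟨r, hrneg, rfl⟩)
      have := htl _ hmem
      rw [hupf] at this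
      have := (div_le_iff_of_neg h0).1 this
      linarith
    · have hrz : r ∈ zeros := List.mem_filter.2 ⟨hr, by simpa using h0⟩
      have hrow : ((fun j => r.1 j.castSucc, r.2) : (Fin k → ℚ) × ℚ) ∈ newL :=
        List.mem_append.2 (Or.inl (List.mem_map.2 ⟨r, hrz, rfl⟩))
      have := hy _ hrow
      simpa [h0] using this
    · have hrpos : r ∈ pos := List.mem_filter.2 ⟨hr, by simpa using h0⟩
      have hmem : upf r ∈ U := List.mem_toFinset.2 (List.mem_map.2 ⟨r, hrpos, rfl⟩)
      have := htu _ hmem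
      rw [hupf] at this
      have := (le_div_iff₀ h0).1 this
      linarith


lemma rational_point_in_face {k : ℕ} (LQ : List ((Fin k → ℚ) × ℚ)) (cc : Fin k → ℝ)
    (F : Set (Fin k → ℝ)) (hne : F.Nonempty)
    (hF : F = {x ∈ SolR LQ | ∀ y ∈ SolR LQ, linR cc y ≤ linR cc x}) :
    ∃ x : Fin k → ℚ, (fun j => (x j : ℝ)) ∈ F := by
  classical
  obtain ⟨xs, hxs⟩ := hne
  have hxsQ : xs ∈ SolR LQ := (hF ▸ hxs).1
  have hxsM : ∀ y ∈ SolR LQ, linR cc y ≤ linR cc xs := (hF ▸ hxs).2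
  have Fchar : ∀ z, z ∈ F ↔ (z ∈ SolR LQ ∧ linR cc xs ≤ linR cc z) := by
    intro z
    rw [hF]
    constructor
    · rintro ⟨hz, hm⟩; exact ⟨hz, hm xs hxsQ⟩
    · rintro ⟨hz, hm⟩; exact ⟨hz, fun y hy => le_trans (hxsM y hy) hm⟩
  have hFval : ∀ z ∈ F, linR cc z = linR cc xs := by
    intro z hz
    exact le_antisymm (hxsM z ((Fchar z).1 hz).1) ((Fchar z).1 hz).2
  have hFQ : ∀ z ∈ F, z ∈ SolR LQ := fun z hz => ((Fchar z).1 hz).1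
  set row : Fin LQ.length → (Fin k → ℚ) × ℚ := fun i => LQ.get i with hrowdef
  set J : Finset (Fin LQ.length) :=
    Finset.univ.filter (fun i => ¬ ∀ z ∈ F, dotR (row i).1 z = ((row i).2 : ℝ)) with hJ
  have hEq : ∀ i, i ∉ J → ∀ z ∈ F, dotR (row i).1 z = ((row i).2 : ℝ) := by
    intro i hi
    by_contra hcon
    exact hi (Finset.mem_filter.2 ⟨Finset.mem_univ i, hcon⟩)
  have hJs : ∀ i ∈ J, ∃ z ∈ F, dotR (row i).1 z < ((row i).2 : ℝ) := by
    intro i hi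
    have h2 := (Finset.mem_filter.1 hi).2
    push_neg at h2
    obtain ⟨z, hz, hne'⟩ := h2
    exact ⟨z, hz, lt_of_le_of_ne (hFQ z hz _ (by simpa [hrowdef] using List.get_mem LQ i.1 i.2)) hne'⟩
  choose! u hu1 hu2 using hJs
  set x0 : Fin k → ℝ := if hJne : J.Nonempty then (J.card : ℝ)⁻¹ • ∑ i ∈ J, u i else xs with hx0
  have hmain : x0 ∈ F ∧ ∀ i ∈ J, dotR (row i).1 x0 < ((row i).2 : ℝ) := by
    rw [hx0]
    split_ifs with hJne
    · have hpos : (0:ℝ) < (J.card : ℝ) := by exact_mod_cast Finset.card_pos.2 hJne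
      have hval : ∀ (i : Fin LQ.length),
          dotR (row i).1 ((J.card : ℝ)⁻¹ • ∑ j ∈ J, u j)
            = (J.card : ℝ)⁻¹ * ∑ j ∈ J, dotR (row i).1 (u j) := by
        intro i
        rw [dotR_eq_linR, linR_smul, linR_sum]
        rfl
      have hle : ∀ i (j : Fin LQ.length), j ∈ J → dotR (row i).1 (u j) ≤ ((row i).2 : ℝ) := by
        intro i j hj
        exact hFQ _ (hu1 j hj) _ (by simpa [hrowdef] using List.get_mem LQ i.1 i.2)
      constructor
      · rw [Fchar]
        constructor
        · rw [sol_iff_get]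
          intro i
          rw [show LQ.get i = row i from rfl, hval]
          have : ∑ j ∈ J, dotR (row i).1 (u j) ≤ (J.card : ℝ) * ((row i).2 : ℝ) := by
            calc ∑ j ∈ J, dotR (row i).1 (u j) ≤ ∑ j ∈ J, ((row i).2 : ℝ) :=
                  Finset.sum_le_sum (fun j hj => hle i j hj)
            _ = (J.card : ℝ) * ((row i).2 : ℝ) := by rw [Finset.sum_const, nsmul_eq_mul]
          calc (J.card : ℝ)⁻¹ * ∑ j ∈ J, dotR (row i).1 (u j)
              ≤ (J.card : ℝ)⁻¹ * ((J.card : ℝ) * ((row i).2 : ℝ)) :=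
                mul_le_mul_of_nonneg_left this (by positivity)
          _ = ((row i).2 : ℝ) := by
                rw [← mul_assoc, inv_mul_cancel₀ (ne_of_gt hpos), one_mul]
        · have : linR cc ((J.card : ℝ)⁻¹ • ∑ j ∈ J, u j)
              = (J.card : ℝ)⁻¹ * ∑ j ∈ J, linR cc (u j) := by rw [linR_smul, linR_sum]
          rw [this]
          have heach : ∀ j ∈ J, linR cc (u j) = linR cc xs := fun j hj => hFval _ (hu1 j hj)
          rw [Finset.sum_congr rfl heach, Finset.sum_const, nsmul_eq_mul]
          rw [← mul_assoc, inv_mul_cancel₀ (ne_of_gt hpos), one_mul]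
      · intro i hi
        rw [hval]
        have hstrict : ∑ j ∈ J, dotR (row i).1 (u j) < (J.card : ℝ) * ((row i).2 : ℝ) := by
          have := Finset.sum_lt_sum (fun j hj => hle i j hj) ⟨i, hi, hu2 i hi⟩
          calc ∑ j ∈ J, dotR (row i).1 (u j) < ∑ j ∈ J, ((row i).2 : ℝ) := this
          _ = (J.card : ℝ) * ((row i).2 : ℝ) := by rw [Finset.sum_const, nsmul_eq_mul]
        calc (J.card : ℝ)⁻¹ * ∑ j ∈ J, dotR (row i).1 (u j)
            < (J.card : ℝ)⁻¹ * ((J.card : ℝ) * ((row i).2 : ℝ)) :=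
              by exact mul_lt_mul_of_pos_left hstrict (by positivity)
        _ = ((row i).2 : ℝ) := by
              rw [← mul_assoc, inv_mul_cancel₀ (ne_of_gt hpos), one_mul]
    · refine ⟨hxs, fun i hi => absurd ⟨i, hi⟩ hJne⟩
  obtain ⟨hx0F, hx0strict⟩ := hmain
  have hx0Q : x0 ∈ SolR LQ := hFQ _ hx0F
  -- the extended system
  set LF : List ((Fin k → ℚ) × ℚ) :=
    LQ ++ (LQ.filter (fun r => ∀ z ∈ F, dotR r.1 z = (r.2:ℝ))).map (fun r => (-r.1, -r.2)) with hLF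
  have hLFsol : ∃ x : Fin k → ℝ, ∀ r ∈ LF, dotR r.1 x ≤ (r.2 : ℝ) := by
    refine ⟨x0, fun r hr => ?_⟩
    rcases List.mem_append.1 hr with h | h
    · exact hx0Q r h
    · rcases List.mem_map.1 h with ⟨s, hs, rfl⟩
      rcases List.mem_filter.1 hs with ⟨hsL, hs0⟩
      have heq : dotR s.1 x0 = (s.2 : ℝ) := by
        have := of_decide_eq_true hs0
        exact this x0 hx0F
      show dotR (-s.1) x0 ≤ ((-s.2 : ℚ) : ℝ)
      rw [dotR_neg, heq]
      push_cast
      exact le_refl _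
  obtain ⟨y, hy⟩ := fm_rat_sol LF hLFsol
  set yR : Fin k → ℝ := fun j => (y j : ℝ) with hyR
  have hyQ : yR ∈ SolR LQ := by
    intro r hr
    have := hy r (List.mem_append.2 (Or.inl hr))
    rw [hyR, dotR_cast]
    exact_mod_cast this
  have hyEq : ∀ r ∈ LQ, (∀ z ∈ F, dotR r.1 z = (r.2:ℝ)) → ((r.2:ℝ)) ≤ dotR r.1 yR := by
    intro r hr hpred
    have hmem : ((-r.1, -r.2) : (Fin k → ℚ) × ℚ) ∈ LF := by
      refine List.mem_append.2 (Or.inr (List.mem_map.2 ⟨r, ?_, rfl⟩))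
      exact List.mem_filter.2 ⟨hr, decide_eq_true hpred⟩
    have := hy _ hmem
    have h2 : dotR (-r.1) yR ≤ ((-r.2 : ℚ) : ℝ) := by
      rw [hyR, dotR_cast]; exact_mod_cast this
    rw [dotR_neg] at h2
    push_cast at h2
    linarith
  -- perturbation: find ε > 0
  set Δ : Fin LQ.length → ℝ := fun i => dotR (row i).1 x0 - dotR (row i).1 yR with hΔ
  set g : Fin LQ.length → ℝ :=
    fun i => (((row i).2 : ℝ) - dotR (row i).1 x0) / (1 + |Δ i|) with hg
  set ε : ℝ := if hJne : J.Nonempty then J.inf' hJne g else 1 with hε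
  have hgpos : ∀ i ∈ J, 0 < g i := by
    intro i hi
    have := hx0strict i hi
    rw [hg]
    have h1 : (0:ℝ) < 1 + |Δ i| := by positivity
    apply div_pos (by linarith) h1
  have hεpos : 0 < ε := by
    rw [hε]
    split_ifs with hJne
    · rw [Finset.lt_inf'_iff]
      exact fun i hi => hgpos i hi
    · exact one_pos
  have hεkey : ∀ i ∈ J, dotR (row i).1 x0 + ε * Δ i ≤ ((row i).2 : ℝ) := by
    intro i hi
    have hJne : J.Nonempty := ⟨i, hi⟩
    have hεle : ε ≤ g i := by
      rw [hε]; simp only [dif_pos hJne]; exact Finset.inf'_le g hi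
    set δ : ℝ := ((row i).2 : ℝ) - dotR (row i).1 x0 with hδ
    have hδpos : 0 < δ := by rw [hδ]; have := hx0strict i hi; linarith
    have hgi : g i = δ / (1 + |Δ i|) := rfl
    have h1 : (0:ℝ) < 1 + |Δ i| := by positivity
    have step1 : ε * Δ i ≤ ε * |Δ i| :=
      mul_le_mul_of_nonneg_left (le_abs_self _) (le_of_lt hεpos)
    have step2 : ε * |Δ i| ≤ g i * |Δ i| :=
      mul_le_mul_of_nonneg_right hεle (abs_nonneg _)
    have step3 : g i * |Δ i| ≤ δ := by
      rw [hgi, div_mul_eq_mul_div, div_le_iff₀ h1]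
      nlinarith [abs_nonneg (Δ i), hδpos.le]
    have : ε * Δ i ≤ δ := le_trans step1 (le_trans step2 step3)
    rw [hδ] at this
    linarith
  -- the perturbed point z is in SolR LQ
  set z : Fin k → ℝ := x0 + ε • (x0 - yR) with hz
  have hdz : ∀ i : Fin LQ.length, dotR (row i).1 z = dotR (row i).1 x0 + ε * Δ i := by
    intro i
    simp only [hΔ]
    rw [hz, dotR_eq_linR, linR_comb]
    simp only [dotR_eq_linR]
  have hzQ : z ∈ SolR LQ := by
    rw [sol_iff_get]
    intro i
    rw [show LQ.get i = row i from rfl, hdz]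
    by_cases hi : i ∈ J
    · exact hεkey i hi
    · have hrl : row i ∈ LQ := by simpa [hrowdef] using List.get_mem LQ i.1 i.2
      have heq0 : dotR (row i).1 x0 = ((row i).2 : ℝ) := hEq i hi x0 hx0F
      have heqy : dotR (row i).1 yR = ((row i).2 : ℝ) :=
        le_antisymm (hyQ _ hrl) (hyEq _ hrl (hEq i hi))
      simp only [hΔ]
      rw [heq0, heqy]
      simp
  -- conclude
  have hlcz : linR cc z = linR cc x0 + ε * (linR cc x0 - linR cc yR) := by
    rw [hz, linR_comb]
  have hx0val : linR cc x0 = linR cc xs := hFval _ hx0F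
  have hmaxz : linR cc z ≤ linR cc xs := hxsM z hzQ
  have hyval : linR cc xs ≤ linR cc yR := by
    rw [hlcz, hx0val] at hmaxz
    nlinarith [hεpos]
  exact ⟨y, (Fchar yR).2 ⟨hyQ, hyval⟩⟩


lemma dot_unit {k : ℕ} (j : Fin k) (x : Fin k → ℝ) :
    dotR (fun j' => if j' = j then (1:ℚ) else 0) x = x j := by
  simp [dotR, apply_ite (fun q : ℚ => (q:ℝ)), ite_mul, Finset.sum_ite_eq']

lemma dot_negunit {k : ℕ} (j : Fin k) (x : Fin k → ℝ) :
    dotR (fun j' => if j' = j then (-1:ℚ) else 0) x = - x j := by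
  simp [dotR, apply_ite (fun q : ℚ => (q:ℝ)), ite_mul, Finset.sum_ite_eq']

lemma linR_smul_sub {k : ℕ} (c a b : Fin k → ℝ) (s t : ℝ) :
    linR c (s • a - t • b) = s * linR c a - t * linR c b := by
  simp only [linR, Pi.sub_apply, Pi.smul_apply, smul_eq_mul, mul_sub,
    Finset.sum_sub_distrib, Finset.mul_sum]
  congr 1 <;> exact Finset.sum_congr rfl fun j _ => by ring


/-- A rational polyhedron satisfying condition (★) is box-integer. -/
theorem conditionStar_boxInteger {n : ℕ} (P : Set (Fin n → ℝ))
    (hP : IsRationalPolyhedron P) (hstar : ConditionStar P) :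
    IsBoxInteger P := by
  classical
  obtain ⟨m, A, b, hPeq⟩ := hP
  intro c d hcd F hF
  obtain ⟨hFne, cc, hFeq⟩ := hF
  set Q : Set (Fin n → ℝ) := {x ∈ P | ∀ i, (c i : ℝ) ≤ x i ∧ x i ≤ (d i : ℝ)} with hQdef
  -- a rational inequality system describing Q
  set LQ : List ((Fin n → ℚ) × ℚ) :=
    (List.finRange m).map (fun i => (fun j => A i j, b i))
    ++ ((List.finRange n).map (fun j => ((fun j' => if j' = j then (1:ℚ) else 0), ((d j : ℤ) : ℚ)))
    ++ (List.finRange n).map (fun j => ((fun j' => if j' = j then (-1:ℚ) else 0), ((-(c j) : ℤ) : ℚ)))) with hLQ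
  have hQeq : Q = SolR LQ := by
    ext x
    constructor
    · rintro ⟨hxP, hbox⟩ r hr
      rw [hPeq] at hxP
      rcases List.mem_append.1 hr with h | h
      · rcases List.mem_map.1 h with ⟨i, _, rfl⟩
        exact hxP i
      · rcases List.mem_append.1 h with h2 | h2
        · rcases List.mem_map.1 h2 with ⟨j, _, rfl⟩
          show dotR _ x ≤ _
          rw [dot_unit]
          have := (hbox j).2
          push_cast
          exact this
        · rcases List.mem_map.1 h2 with ⟨j, _, rfl⟩
          show dotR _ x ≤ _
          rw [dot_negunit]
          have := (hbox j).1
          push_cast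
          linarith
    · intro hx
      have hrowA : ∀ i : Fin m, ((fun j => A i j, b i) : (Fin n → ℚ) × ℚ) ∈ LQ := fun i =>
        List.mem_append.2 (Or.inl (List.mem_map.2 ⟨i, List.mem_finRange i, rfl⟩))
      have hrowd : ∀ j : Fin n,
          (((fun j' => if j' = j then (1:ℚ) else 0), ((d j : ℤ) : ℚ)) : (Fin n → ℚ) × ℚ) ∈ LQ := fun j =>
        List.mem_append.2 (Or.inr (List.mem_append.2 (Or.inl (List.mem_map.2 ⟨j, List.mem_finRange j, rfl⟩))))
      have hrowc : ∀ j : Fin n,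
          (((fun j' => if j' = j then (-1:ℚ) else 0), ((-(c j) : ℤ) : ℚ)) : (Fin n → ℚ) × ℚ) ∈ LQ := fun j =>
        List.mem_append.2 (Or.inr (List.mem_append.2 (Or.inr (List.mem_map.2 ⟨j, List.mem_finRange j, rfl⟩))))
      refine ⟨?_, ?_⟩
      · rw [hPeq]
        intro i
        exact hx _ (hrowA i)
      · intro j
        constructor
        · have h2 := hx _ (hrowc j)
          rw [show dotR (fun j' => if j' = j then (-1:ℚ) else 0) x = -x j from dot_negunit j x] at h2
          push_cast at h2
          linarith
        · have h2 := hx _ (hrowd j)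
          rw [show dotR (fun j' => if j' = j then (1:ℚ) else 0) x = x j from dot_unit j x] at h2
          push_cast at h2
          linarith
  -- obtain a rational point in the face F
  obtain ⟨x, hxF⟩ : ∃ x : Fin n → ℚ, (fun j => (x j : ℝ)) ∈ F := by
    refine rational_point_in_face LQ cc F hFne ?_
    rw [hFeq, hQeq]
    rfl
  set xR : Fin n → ℝ := fun j => (x j : ℝ) with hxRdef
  have hxQ : xR ∈ Q := (hFeq ▸ hxF).1
  have hmax : ∀ y ∈ Q, linR cc y ≤ linR cc xR := (hFeq ▸ hxF).2
  have hxP : xR ∈ P := hxQ.1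
  have hxbox : ∀ i, (c i : ℝ) ≤ xR i ∧ xR i ≤ (d i : ℝ) := hxQ.2
  have hxRapp : ∀ i, xR i = ((x i : ℚ) : ℝ) := fun i => rfl
  have hxboxq : ∀ i, (c i : ℚ) ≤ x i ∧ x i ≤ (d i : ℚ) := by
    intro i
    constructor
    · have h : (c i : ℝ) ≤ ((x i : ℚ) : ℝ) := (hxbox i).1
      exact_mod_cast h
    · have h : ((x i : ℚ) : ℝ) ≤ (d i : ℝ) := (hxbox i).2
      exact_mod_cast h
  -- common denominator
  set q : ℕ := ∏ i, (x i).den with hqdef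
  have hqpos : 0 < q := Finset.prod_pos (fun i _ => (x i).pos)
  have hq1 : 1 ≤ q := hqpos
  have hex : ∀ i, ∃ z : ℤ, (z : ℚ) = (q : ℚ) * x i := by
    intro i
    have hdvd : (x i).den ∣ q := Finset.dvd_prod_of_mem _ (Finset.mem_univ i)
    rcases hdvd with ⟨t, ht⟩
    refine ⟨(x i).num * t, ?_⟩
    have hd : ((x i).den : ℚ) ≠ 0 := by positivity
    have hxnum : ((x i).num : ℚ) = x i * (x i).den := by exact_mod_cast (Rat.mul_den_eq_num (x i)).symm
    push_cast [ht, hxnum]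
    ring
  choose w hw using hex
  have hwR : ∀ i, ((w i : ℤ) : ℝ) = (q : ℝ) * ((x i : ℚ) : ℝ) := by
    intro i
    exact_mod_cast hw i
  -- apply condition star with k = q, r = 1
  have hSbox := hstar q 1 hq1 w
  set S : Set (Fin n → ℝ) :=
    (((1:ℕ) : ℝ) • P) ∩
      ((fun y => (fun i => ((w i : ℤ) : ℝ)) - y) '' (((q - 1 : ℕ) : ℝ) • P)) with hSdef
  set c' : Fin n → ℤ := fun i => ⌊x i⌋ with hc'def
  set d' : Fin n → ℤ := fun i => ⌈x i⌉ with hd'def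
  have hcd' : ∀ i, c' i ≤ d' i := fun i => Int.floor_le_ceil (x i)
  have hIT := hSbox c' d' hcd'
  set T : Set (Fin n → ℝ) := {y ∈ S | ∀ i, (c' i : ℝ) ≤ y i ∧ y i ≤ (d' i : ℝ)} with hTdef
  have hone : ((1:ℕ) : ℝ) = (1:ℝ) := Nat.cast_one
  -- xR belongs to T
  have hxT : xR ∈ T := by
    refine ⟨⟨?_, ?_⟩, ?_⟩
    · rw [hone, one_smul]; exact hxP
    · refine ⟨((q - 1 : ℕ) : ℝ) • xR, Set.smul_mem_smul_set hxP, ?_⟩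
      funext i
      show ((w i : ℤ) : ℝ) - ((q - 1 : ℕ) : ℝ) * xR i = xR i
      rw [hwR i, hxRapp i, Nat.cast_sub hq1]
      push_cast
      ring
    · intro i
      constructor
      · show ((⌊x i⌋ : ℤ) : ℝ) ≤ xR i
        rw [hxRapp i]
        exact_mod_cast Int.floor_le (x i)
      · show xR i ≤ ((⌈x i⌉ : ℤ) : ℝ)
        rw [hxRapp i]
        exact_mod_cast Int.le_ceil (x i)
  -- the box [c', d'] sits inside [c, d]
  have hc'c : ∀ i, (c i : ℝ) ≤ (c' i : ℝ) := by
    intro i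
    have : c i ≤ c' i := by
      rw [hc'def]
      exact Int.le_floor.2 (by exact_mod_cast (hxboxq i).1)
    exact_mod_cast this
  have hd'd : ∀ i, (d' i : ℝ) ≤ (d i : ℝ) := by
    intro i
    have : d' i ≤ d i := by
      rw [hd'def]
      exact Int.ceil_le.2 (by exact_mod_cast (hxboxq i).2)
    exact_mod_cast this
  -- every point of T has the same cc-value as xR
  have hTval : ∀ y ∈ T, linR cc y = linR cc xR := by
    rintro y ⟨⟨hy1, hy2⟩, hybox⟩
    have hyP : y ∈ P := by
      have h := hy1
      rw [hone, one_smul] at h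
      exact h
    have hyQ : y ∈ Q := by
      refine ⟨hyP, fun i => ⟨le_trans (hc'c i) (hybox i).1, le_trans (hybox i).2 (hd'd i)⟩⟩
    have hupper : linR cc y ≤ linR cc xR := hmax y hyQ
    rcases hy2 with ⟨p, hp, hpe⟩
    rcases hp with ⟨p', hp', rfl⟩
    have hyco : ∀ i, y i = (q : ℝ) * xR i - ((q:ℝ) - 1) * p' i := by
      intro i
      rw [← hpe]
      show ((w i : ℤ) : ℝ) - ((q - 1 : ℕ) : ℝ) * p' i = (q : ℝ) * xR i - ((q:ℝ) - 1) * p' i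
      rw [hwR i, hxRapp i, Nat.cast_sub hq1]
      push_cast
      ring
    have hyvec : y = (q : ℝ) • xR - ((q:ℝ) - 1) • p' := by
      funext i
      rw [hyco i, Pi.sub_apply, Pi.smul_apply, Pi.smul_apply, smul_eq_mul, smul_eq_mul]
    have hylin : linR cc y = (q:ℝ) * linR cc xR - ((q:ℝ) - 1) * linR cc p' := by
      rw [hyvec, linR_smul_sub]
    have hlower : linR cc xR ≤ linR cc y := by
      rcases eq_or_lt_of_le hq1 with hq | hq
      · -- q = 1
        rw [hylin, ← hq]
        norm_num
      · -- q ≥ 2 : p' lies in Q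
        have hq2 : (2:ℕ) ≤ q := hq
        have hqR : (1:ℝ) < (q:ℝ) := by exact_mod_cast hq
        have hp'box : ∀ i, (c i : ℝ) ≤ p' i ∧ p' i ≤ (d i : ℝ) := by
          intro i
          have hco : ((q:ℝ) - 1) * p' i = (q : ℝ) * ((x i : ℚ) : ℝ) - y i := by
            rw [hyco i, hxRapp i]; ring
          have hyl : ((c' i : ℤ) : ℝ) ≤ y i := (hybox i).1
          have hyu : y i ≤ ((d' i : ℤ) : ℝ) := (hybox i).2
          -- integer facts in ℚ
          have key1 : (q:ℚ) * x i - (⌊x i⌋ : ℚ) ≤ ((q:ℚ) - 1) * ((d i : ℤ) : ℚ) := by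
            by_cases hxi : ((⌊x i⌋ : ℤ) : ℚ) = x i
            · have hq0 : (0:ℚ) ≤ (q:ℚ) - 1 := by
                have : (1:ℚ) ≤ (q:ℚ) := by exact_mod_cast hq1
                linarith
              linarith [mul_le_mul_of_nonneg_left (hxboxq i).2 hq0, hxi]
            · have hfl : ((⌊x i⌋ : ℤ) : ℚ) < x i := lt_of_le_of_ne (Int.floor_le (x i)) hxi
              have h1 : ⌊x i⌋ + 1 ≤ d i := by
                have : ((⌊x i⌋ : ℤ) : ℚ) < ((d i : ℤ) : ℚ) := lt_of_lt_of_le hfl (hxboxq i).2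
                have : ⌊x i⌋ < d i := by exact_mod_cast this
                omega
              have h2 : w i ≤ q * ⌊x i⌋ + q - 1 := by
                have hlt : (w i : ℚ) < (q : ℚ) * ((⌊x i⌋ : ℤ) : ℚ) + (q:ℚ) := by
                  rw [hw i]
                  have := Int.lt_floor_add_one (x i)
                  have hqq : (0:ℚ) < (q:ℚ) := by exact_mod_cast hqpos
                  nlinarith [this, hqq]
                have h5 : w i < q * ⌊x i⌋ + q := by exact_mod_cast hlt
                have h6 := Int.lt_iff_add_one_le.1 h5
                linarith
              have h3 : w i - ⌊x i⌋ ≤ ((q:ℤ) - 1) * d i := by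
                have h4 : ((q:ℤ) - 1) * (⌊x i⌋ + 1) ≤ ((q:ℤ) - 1) * d i := by
                  apply mul_le_mul_of_nonneg_left h1
                  have : (1:ℤ) ≤ (q:ℤ) := by exact_mod_cast hq1
                  linarith
                have hq' : (q:ℤ) * ⌊x i⌋ + (q:ℤ) - 1 - ⌊x i⌋ = ((q:ℤ) - 1) * (⌊x i⌋ + 1) := by ring
                linarith
              calc (q:ℚ) * x i - (⌊x i⌋ : ℚ) = (w i : ℚ) - (⌊x i⌋ : ℚ) := by rw [hw i]
              _ ≤ (((q:ℤ) - 1) * d i : ℤ) := by exact_mod_cast h3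
              _ = ((q:ℚ) - 1) * ((d i : ℤ) : ℚ) := by push_cast; ring
          have key2 : ((q:ℚ) - 1) * ((c i : ℤ) : ℚ) ≤ (q:ℚ) * x i - (⌈x i⌉ : ℚ) := by
            by_cases hxi : ((⌊x i⌋ : ℤ) : ℚ) = x i
            · have hceil : ⌈x i⌉ = ⌊x i⌋ := by
                rw [← hxi]; simp
              rw [hceil]
              have hq0 : (0:ℚ) ≤ (q:ℚ) - 1 := by
                have : (1:ℚ) ≤ (q:ℚ) := by exact_mod_cast hq1
                linarith
              linarith [mul_le_mul_of_nonneg_left (hxboxq i).1 hq0, hxi]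
            · have hfl : ((⌊x i⌋ : ℤ) : ℚ) < x i := lt_of_le_of_ne (Int.floor_le (x i)) hxi
              have hceil : ⌈x i⌉ = ⌊x i⌋ + 1 := by
                have ha : ⌈x i⌉ ≤ ⌊x i⌋ + 1 := Int.ceil_le.2 (by push_cast; exact (Int.lt_floor_add_one (x i)).le)
                have hb : ⌊x i⌋ < ⌈x i⌉ := by
                  have := lt_of_lt_of_le hfl (Int.le_ceil (x i))
                  exact_mod_cast this
                omega
              have h1 : c i ≤ ⌊x i⌋ := Int.le_floor.2 (by exact_mod_cast (hxboxq i).1)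
              have h2 : q * ⌊x i⌋ + 1 ≤ w i := by
                have hlt : (q : ℚ) * ((⌊x i⌋ : ℤ) : ℚ) < (w i : ℚ) := by
                  rw [hw i]
                  have hqq : (0:ℚ) < (q:ℚ) := by exact_mod_cast hqpos
                  nlinarith [hfl, hqq]
                have h5 : q * ⌊x i⌋ < w i := by exact_mod_cast hlt
                exact Int.lt_iff_add_one_le.1 h5
              have h3 : ((q:ℤ) - 1) * c i ≤ w i - (⌊x i⌋ + 1) := by
                have h4 : ((q:ℤ) - 1) * c i ≤ ((q:ℤ) - 1) * ⌊x i⌋ := by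
                  apply mul_le_mul_of_nonneg_left h1
                  have : (1:ℤ) ≤ (q:ℤ) := by exact_mod_cast hq1
                  linarith
                have hq' : ((q:ℤ) - 1) * ⌊x i⌋ = (q:ℤ) * ⌊x i⌋ - ⌊x i⌋ := by ring
                linarith
              calc ((q:ℚ) - 1) * ((c i : ℤ) : ℚ) = (((q:ℤ) - 1) * c i : ℤ) := by push_cast; ring
              _ ≤ ((w i - (⌊x i⌋ + 1) : ℤ) : ℚ) := by exact_mod_cast h3
              _ = (q:ℚ) * x i - ((⌊x i⌋ : ℚ) + 1) := by rw [← hw i]; push_cast; ring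
              _ = (q:ℚ) * x i - (⌈x i⌉ : ℚ) := by rw [hceil]; push_cast; ring
          constructor
          · -- c i ≤ p' i
            have hkey : ((q:ℝ) - 1) * (c i : ℝ) ≤ (q:ℝ) * ((x i : ℚ) : ℝ) - ((⌈x i⌉ : ℤ) : ℝ) := by
              exact_mod_cast key2
            have hcc : ((q:ℝ) - 1) * (c i : ℝ) ≤ ((q:ℝ) - 1) * p' i := by
              rw [hco]
              have : y i ≤ ((⌈x i⌉ : ℤ) : ℝ) := hyu
              linarith
            have hq0 : (0:ℝ) < (q:ℝ) - 1 := by linarith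
            exact le_of_mul_le_mul_left hcc hq0
          · have hkey : (q:ℝ) * ((x i : ℚ) : ℝ) - ((⌊x i⌋ : ℤ) : ℝ) ≤ ((q:ℝ) - 1) * (d i : ℝ) := by
              exact_mod_cast key1
            have hcc : ((q:ℝ) - 1) * p' i ≤ ((q:ℝ) - 1) * (d i : ℝ) := by
              rw [hco]
              have : ((⌊x i⌋ : ℤ) : ℝ) ≤ y i := hyl
              linarith
            have hq0 : (0:ℝ) < (q:ℝ) - 1 := by linarith
            exact le_of_mul_le_mul_left hcc hq0
        have hp'Q : p' ∈ Q := ⟨hp', hp'box⟩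
        have hp'le : linR cc p' ≤ linR cc xR := hmax p' hp'Q
        have hq0 : (0:ℝ) ≤ (q:ℝ) - 1 := by
          have : (1:ℝ) ≤ (q:ℝ) := by exact_mod_cast hq1
          linarith
        rw [hylin]
        nlinarith [hp'le, hq0]
    exact le_antisymm hupper hlower
  -- apply integrality of T to the face given by cc
  obtain ⟨z, hzG, hzint⟩ :=
    hIT {y ∈ T | ∀ u ∈ T, ∑ i, cc i * u i ≤ ∑ i, cc i * y i}
      ⟨⟨xR, hxT, fun u hu => le_of_eq (hTval u hu)⟩, cc, rfl⟩
  have hzT : z ∈ T := hzG.1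
  have hzP : z ∈ P := by
    have h := hzT.1.1
    rw [hone, one_smul] at h
    exact h
  have hzQ : z ∈ Q :=
    ⟨hzP, fun i => ⟨le_trans (hc'c i) (hzT.2 i).1, le_trans (hzT.2 i).2 (hd'd i)⟩⟩
  have hzval : linR cc z = linR cc xR := hTval z hzT
  refine ⟨z, ?_, hzint⟩
  rw [hFeq]
  exact ⟨hzQ, fun y hy => le_trans (hmax y hy) (le_of_eq hzval.symm)⟩
end

section
/- Let Q₁, Q₂ ⊆ ℝⁿ be polytopes and let y be a vertex (extreme point) of Q₁ ∩ Q₂. For i = 1, 2, let F_i be the inclusionwise minimal face of Q_i containing y, and let H_i be the affine hull of F_i. Then H₁ ∩ H₂ = {y}. -/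
open Finset Pointwise
open Matrix

variable {ι : Type*} [Fintype ι]

/-- A polytope: the convex hull of finitely many points. -/
def IsPolytope (Q : Set (ι → ℝ)) : Prop :=
  ∃ S : Finset (ι → ℝ), Q = convexHull ℝ (S : Set (ι → ℝ))

set_option linter.unusedSectionVars false

lemma sum_dotProduct' (S : Finset (ι → ℝ)) (f : (ι → ℝ) → (ι → ℝ)) (w : ι → ℝ) :
    (∑ s ∈ S, f s) ⬝ᵥ w = ∑ s ∈ S, f s ⬝ᵥ w := by
  classical
  induction S using Finset.induction with
  | empty => simp [dotProduct]
  | insert a s h ih => simp [Finset.sum_insert h, add_dotProduct, ih]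

/-- Farkas' lemma, Fin-indexed version. -/
lemma farkas_fin : ∀ (m : ℕ) (a : Fin m → (ι → ℝ)) (b : ι → ℝ),
    (∃ μ : Fin m → ℝ, (∀ i, 0 ≤ μ i) ∧ b = ∑ i, μ i • a i) ∨
    (∃ f : ι → ℝ, (∀ i, f ⬝ᵥ a i ≤ 0) ∧ 0 < f ⬝ᵥ b) := by
  intro m
  induction m with
  | zero =>
    intro a b
    by_cases hb : b = 0
    · exact Or.inl ⟨0, fun i => le_rfl, by simp [hb]⟩
    · refine Or.inr ⟨b, fun i => i.elim0, ?_⟩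
      have : b ⬝ᵥ b ≠ 0 := fun h => hb ((dotProduct_self_eq_zero).1 h)
      have h2 : 0 ≤ b ⬝ᵥ b := Finset.sum_nonneg fun i _ => mul_self_nonneg _
      exact lt_of_le_of_ne h2 (Ne.symm this)
  | succ m ih =>
    intro a b
    set a0 := a 0 with ha0
    set a' : Fin m → (ι → ℝ) := fun i => a i.succ with ha'
    rcases ih a' b with ⟨μ, hμ, hb⟩ | ⟨y, hy, hyb⟩
    · refine Or.inl ⟨Fin.cons 0 μ, ?_, ?_⟩
      · intro i
        refine Fin.cases ?_ ?_ i
        · simp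
        · intro j; simpa using hμ j
      · rw [Fin.sum_univ_succ]
        simpa using hb
    · by_cases h0 : y ⬝ᵥ a0 ≤ 0
      · refine Or.inr ⟨y, ?_, hyb⟩
        intro i
        refine Fin.cases h0 (fun j => hy j) i
      · push_neg at h0
        have hα : y ⬝ᵥ a0 ≠ 0 := ne_of_gt h0
        set α := y ⬝ᵥ a0 with hαdef
        set π : (ι → ℝ) → (ι → ℝ) := fun v => v - (y ⬝ᵥ v / α) • a0 with hπ
        rcases ih (fun i => π (a' i)) (π b) with ⟨μ, hμ, hb⟩ | ⟨z, hz, hzb⟩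
        · -- b is in the cone
          set c : ℝ := (y ⬝ᵥ b - ∑ i, μ i * (y ⬝ᵥ a' i)) / α with hc
          have hcnn : 0 ≤ c := by
            apply div_nonneg _ (le_of_lt h0)
            have h1 : ∑ i, μ i * (y ⬝ᵥ a' i) ≤ 0 :=
              Finset.sum_nonpos fun i _ => mul_nonpos_of_nonneg_of_nonpos (hμ i) (hy i)
            linarith
          refine Or.inl ⟨Fin.cons c μ, ?_, ?_⟩
          · intro i
            refine Fin.cases (by simpa using hcnn) (fun j => by simpa using hμ j) i
          · rw [Fin.sum_univ_succ]
            simp only [Fin.cons_zero, Fin.cons_succ]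
            have hb' : b - (y ⬝ᵥ b / α) • a0 = ∑ i, μ i • (a' i - (y ⬝ᵥ a' i / α) • a0) := hb
            have expand : ∑ i, μ i • (a' i - (y ⬝ᵥ a' i / α) • a0)
                = ∑ i, μ i • a' i - (∑ i, μ i * (y ⬝ᵥ a' i / α)) • a0 := by
              rw [Finset.sum_smul]
              rw [← Finset.sum_sub_distrib]
              congr 1
              ext i
              rw [smul_sub, smul_smul]
            rw [expand] at hb'
            have hco : c = y ⬝ᵥ b / α - ∑ i, μ i * (y ⬝ᵥ a' i / α) := by
              rw [hc, sub_div, Finset.sum_div]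
              congr 1
              exact Finset.sum_congr rfl fun i _ => mul_div_assoc _ _ _
            rw [hco]
            linear_combination (norm := module) hb'
        · -- separating functional for projected system
          refine Or.inr ⟨z - (z ⬝ᵥ a0 / α) • y, ?_, ?_⟩
          · intro i
            refine Fin.cases ?_ ?_ i
            · rw [sub_dotProduct, smul_dotProduct]
              simp only [smul_eq_mul, ← hαdef, ← ha0]
              rw [div_mul_cancel₀ _ hα]
              simp
            · intro j
              have := hz j
              rw [hπ] at this
              simp only [dotProduct_sub, dotProduct_smul, smul_eq_mul] at this
              rw [sub_dotProduct, smul_dotProduct]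
              simp only [smul_eq_mul]
              have : z ⬝ᵥ a' j - y ⬝ᵥ a' j / α * (z ⬝ᵥ a0) ≤ 0 := this
              calc z ⬝ᵥ a j.succ - z ⬝ᵥ a0 / α * (y ⬝ᵥ a j.succ)
                  = z ⬝ᵥ a' j - y ⬝ᵥ a' j / α * (z ⬝ᵥ a0) := by rw [ha']; ring
                _ ≤ 0 := this
          · have := hzb
            rw [hπ] at this
            simp only [dotProduct_sub, dotProduct_smul, smul_eq_mul] at this
            rw [sub_dotProduct, smul_dotProduct]
            simp only [smul_eq_mul]
            calc (0:ℝ) < z ⬝ᵥ b - y ⬝ᵥ b / α * (z ⬝ᵥ a0) := this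
              _ = z ⬝ᵥ b - z ⬝ᵥ a0 / α * (y ⬝ᵥ b) := by ring

/-- Farkas' lemma, Finset version. -/
lemma farkas_finset (S : Finset (ι → ℝ)) (v : (ι → ℝ) → (ι → ℝ)) (b : ι → ℝ) :
    (∃ μ : (ι → ℝ) → ℝ, (∀ s ∈ S, 0 ≤ μ s) ∧ b = ∑ s ∈ S, μ s • v s) ∨
    (∃ f : ι → ℝ, (∀ s ∈ S, f ⬝ᵥ v s ≤ 0) ∧ 0 < f ⬝ᵥ b) := by
  classical
  set e := S.equivFin with he
  rcases farkas_fin S.card (fun i => v ((e.symm i : _))) b with ⟨ν, hν, hb⟩ | ⟨f, hf, hfb⟩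
  · refine Or.inl ⟨fun t => if h : t ∈ S then ν (e ⟨t, h⟩) else 0, ?_, ?_⟩
    · intro s hs; simp only [dif_pos hs]; exact hν _
    · rw [hb]
      rw [← Finset.sum_coe_sort S (fun t => (if h : t ∈ S then ν (e ⟨t, h⟩) else 0) • v t)]
      refine (Fintype.sum_equiv e _ _ fun s => ?_).symm
      simp [dif_pos s.2]
  · refine Or.inr ⟨f, fun s hs => ?_, hfb⟩
    have := hf (e ⟨s, hs⟩)
    simpa using this

lemma shrink {Q : Set (ι → ℝ)} (hQ : Convex ℝ Q) {y d : ι → ℝ} (hy : y ∈ Q)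
    {ε ε' : ℝ} (hε : 0 < ε) (h0 : 0 ≤ ε') (hle : ε' ≤ ε) (h : y + ε • d ∈ Q) :
    y + ε' • d ∈ Q := by
  have key : y + ε' • d = (1 - ε'/ε) • y + (ε'/ε) • (y + ε • d) := by
    have hne : ε ≠ 0 := ne_of_gt hε
    rw [smul_add, smul_smul, div_mul_cancel₀ _ hne]
    module
  rw [key]
  exact hQ hy h (by rw [sub_nonneg, div_le_one hε]; exact hle) (by positivity)
    (sub_add_cancel _ _)

/-- If `d` is a nonnegative combination of `s - y` for `s ∈ S`, then moving slightly from `y`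
in direction `d` stays in the convex hull. -/
lemma cone_dir_mem {S : Finset (ι → ℝ)} {y d : ι → ℝ} (hy : y ∈ convexHull ℝ (S : Set (ι → ℝ)))
    (μ : (ι → ℝ) → ℝ) (hμ : ∀ s ∈ S, 0 ≤ μ s) (hd : d = ∑ s ∈ S, μ s • (s - y)) :
    ∃ ε : ℝ, 0 < ε ∧ y + ε • d ∈ convexHull ℝ (S : Set (ι → ℝ)) := by
  classical
  set M := ∑ s ∈ S, μ s with hM
  have hM0 : 0 ≤ M := Finset.sum_nonneg hμ
  by_cases hMz : M = 0
  · have hall : ∀ s ∈ S, μ s = 0 := (Finset.sum_eq_zero_iff_of_nonneg hμ).1 (hM ▸ hMz)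
    have : d = 0 := by
      rw [hd]; exact Finset.sum_eq_zero fun s hs => by rw [hall s hs, zero_smul]
    exact ⟨1, one_pos, by simp [this, hy]⟩
  · have hMpos : 0 < M := lt_of_le_of_ne hM0 (Ne.symm hMz)
    set p : ι → ℝ := M⁻¹ • ∑ s ∈ S, μ s • s with hp
    have hpQ : p ∈ convexHull ℝ (S : Set (ι → ℝ)) := by
      have := Finset.centerMass_mem_convexHull S hμ hMpos (fun s hs => Finset.mem_coe.2 hs)
      rw [Finset.centerMass] at this
      simpa [hp] using this
    have hd2 : d = (∑ s ∈ S, μ s • s) - M • y := by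
      rw [hd]
      simp only [smul_sub]
      rw [Finset.sum_sub_distrib, ← Finset.sum_smul]
    have h3 : (1:ℝ) - M/(M+1) = 1/(M+1) := by field_simp; ring
    refine ⟨1 / (M + 1), by positivity, ?_⟩
    have key : y + (1 / (M + 1)) • d = (1 - M / (M + 1)) • y + (M / (M + 1)) • p := by
      rw [hd2, hp, smul_smul]
      have h1 : M / (M + 1) * M⁻¹ = 1/(M+1) := by
        rw [div_mul_eq_mul_div, mul_inv_cancel₀ hMz]
      rw [h1, h3]
      match_scalars
      · field_simp; ring
      · ring
    rw [key]
    exact (convex_convexHull ℝ _) hy hpQ (by rw [h3]; positivity)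
      (by positivity) (sub_add_cancel _ _)

lemma dotProduct_sum' (S : Finset (ι → ℝ)) (f : (ι → ℝ) → (ι → ℝ)) (w : ι → ℝ) :
    w ⬝ᵥ (∑ s ∈ S, f s) = ∑ s ∈ S, w ⬝ᵥ f s := by
  classical
  induction S using Finset.induction with
  | empty => simp [dotProduct]
  | insert a s h ih => simp [Finset.sum_insert h, dotProduct_add, ih]

/-- Key lemma: if `F` is the minimal face of the polytope `Q` containing `y`, then for every
`x ∈ F` one can move from `y` away from `x` and stay in `Q`. -/
lemma minimal_face_back {Q F : Set (ι → ℝ)} (hQ : IsPolytope Q) (hF : IsFace Q F)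
    {y : ι → ℝ} (hyF : y ∈ F) (hmin : ∀ G, IsFace Q G → y ∈ G → F ⊆ G)
    {x : ι → ℝ} (hx : x ∈ F) : ∃ ε : ℝ, 0 < ε ∧ y + ε • (y - x) ∈ Q := by
  classical
  obtain ⟨S, rfl⟩ := hQ
  have hFQ : F ⊆ convexHull ℝ (S : Set (ι → ℝ)) := by
    obtain ⟨-, c₀, hFe⟩ := hF; rw [hFe]; exact fun z hz => hz.1
  have hyQ : y ∈ convexHull ℝ (S : Set (ι → ℝ)) := hFQ hyF
  set Good : (ι → ℝ) → Prop := fun s =>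
    ∃ μ : (ι → ℝ) → ℝ, (∀ t ∈ S, 0 ≤ μ t) ∧ y - s = ∑ t ∈ S, μ t • (t - y) with hGood
  -- choose separating functionals for "bad" points of S
  have hsep : ∀ s, ∃ f : ι → ℝ, (s ∈ S ∧ ¬ Good s) →
      (∀ t ∈ S, f ⬝ᵥ (t - y) ≤ 0) ∧ 0 < f ⬝ᵥ (y - s) := by
    intro s
    by_cases h : s ∈ S ∧ ¬ Good s
    · rcases farkas_finset S (fun t => t - y) (y - s) with ⟨μ, hμ, hrep⟩ | ⟨f, hf, hfb⟩
      · exact absurd ⟨μ, hμ, hrep⟩ h.2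
      · exact ⟨f, fun _ => ⟨hf, hfb⟩⟩
    · exact ⟨0, fun hc => absurd hc h⟩
  choose f hf using hsep
  set B := S.filter (fun s => ¬ Good s) with hB
  set c : ι → ℝ := ∑ s ∈ B, f s with hc
  have hcB : ∀ s ∈ B, s ∈ S ∧ ¬ Good s := fun s hs => by
    rw [hB, Finset.mem_filter] at hs; exact hs
  have hc1 : ∀ t ∈ S, c ⬝ᵥ (t - y) ≤ 0 := by
    intro t ht
    rw [hc, sum_dotProduct']
    exact Finset.sum_nonpos fun s hs => (hf s (hcB s hs)).1 t ht
  have hc2 : ∀ s ∈ B, 0 < c ⬝ᵥ (y - s) := by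
    intro s hs
    rw [hc, sum_dotProduct']
    refine Finset.sum_pos' (fun s' hs' => ?_) ⟨s, hs, (hf s (hcB s hs)).2⟩
    have h1 : f s' ⬝ᵥ (s - y) ≤ 0 := (hf s' (hcB s' hs')).1 s (hcB s hs).1
    rw [← neg_sub s y, dotProduct_neg]
    linarith
  have hQle : ∀ z ∈ convexHull ℝ (S : Set (ι → ℝ)), c ⬝ᵥ z ≤ c ⬝ᵥ y := by
    intro z hz
    have hlin : IsLinearMap ℝ (fun w : ι → ℝ => c ⬝ᵥ w) :=
      ⟨fun a b => dotProduct_add c a b, fun r a => by rw [dotProduct_smul]⟩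
    have hsub : convexHull ℝ (S : Set (ι → ℝ)) ⊆ {w | c ⬝ᵥ w ≤ c ⬝ᵥ y} := by
      apply convexHull_min
      · intro s hs
        have := hc1 s (Finset.mem_coe.1 hs)
        rw [dotProduct_sub] at this
        simpa [sub_nonpos] using this
      · exact convex_halfSpace_le hlin _
    exact hsub hz
  -- G is a face of Q containing y, hence contains F, hence x
  have hGface : IsFace (convexHull ℝ (S : Set (ι → ℝ)))
      {z ∈ convexHull ℝ (S : Set (ι → ℝ)) |
        ∀ w ∈ convexHull ℝ (S : Set (ι → ℝ)), ∑ i, c i * w i ≤ ∑ i, c i * z i} :=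
    ⟨⟨y, hyQ, fun w hw => hQle w hw⟩, c, rfl⟩
  have hxG := hmin _ hGface ⟨hyQ, fun w hw => hQle w hw⟩ hx
  obtain ⟨hxQ, hxmax⟩ := hxG
  have hxy : c ⬝ᵥ x = c ⬝ᵥ y := le_antisymm (hQle x hxQ) (hxmax y hyQ)
  -- representation of x as a convex combination
  have hxQ' := hxQ
  rw [Finset.convexHull_eq, Set.mem_setOf_eq] at hxQ'
  obtain ⟨w, hw0, hw1, hwx⟩ := hxQ'
  rw [Finset.centerMass_eq_of_sum_1 _ _ hw1] at hwx
  have hxy2 : x - y = ∑ s ∈ S, w s • (s - y) := by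
    simp only [smul_sub]
    rw [Finset.sum_sub_distrib, ← Finset.sum_smul, hw1, one_smul]
    simp only [id] at hwx
    rw [hwx]
  -- all bad points have zero weight
  have hterm : ∀ s ∈ S, w s * (c ⬝ᵥ (s - y)) = 0 := by
    have hsum : ∑ s ∈ S, w s * (c ⬝ᵥ (s - y)) = 0 := by
      have h1 : c ⬝ᵥ (x - y) = ∑ s ∈ S, w s * (c ⬝ᵥ (s - y)) := by
        rw [hxy2, dotProduct_sum']
        exact Finset.sum_congr rfl fun s _ => by rw [dotProduct_smul]; rfl
      rw [dotProduct_sub, hxy, sub_self] at h1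
      exact h1.symm
    have hnp : ∀ s ∈ S, w s * (c ⬝ᵥ (s - y)) ≤ 0 :=
      fun s hs => mul_nonpos_of_nonneg_of_nonpos (hw0 s hs) (hc1 s hs)
    intro s hs
    exact (Finset.sum_eq_zero_iff_of_nonpos hnp).1 hsum s hs
  have hwB : ∀ s ∈ B, w s = 0 := by
    intro s hs
    have hneg : c ⬝ᵥ (s - y) < 0 := by
      have := hc2 s hs
      rw [← neg_sub s y, dotProduct_neg] at this
      linarith
    have := hterm s (hcB s hs).1
    rcases mul_eq_zero.1 this with h | h
    · exact h
    · exact absurd h (ne_of_lt hneg)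
  -- choose good decompositions
  have hgoodsel : ∀ s, ∃ ν : (ι → ℝ) → ℝ, Good s →
      (∀ t ∈ S, 0 ≤ ν t) ∧ y - s = ∑ t ∈ S, ν t • (t - y) := by
    intro s
    by_cases h : Good s
    · obtain ⟨ν, h1, h2⟩ := h
      exact ⟨ν, fun _ => ⟨h1, h2⟩⟩
    · exact ⟨0, fun hc => absurd hc h⟩
  choose ν hν using hgoodsel
  set g : (ι → ℝ) → (ι → ℝ) → ℝ := fun s => if Good s then ν s else 0 with hg
  set μ' : (ι → ℝ) → ℝ := fun t => ∑ s ∈ S, w s * g s t with hμ'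
  have hμ'0 : ∀ t ∈ S, 0 ≤ μ' t := by
    intro t ht
    refine Finset.sum_nonneg fun s hs => mul_nonneg (hw0 s hs) ?_
    rw [hg]
    by_cases h : Good s
    · simp only [if_pos h]; exact (hν s h).1 t ht
    · simp [if_neg h]
  have hdrep : y - x = ∑ t ∈ S, μ' t • (t - y) := by
    have h1 : y - x = ∑ s ∈ S, w s • (y - s) := by
      have := hxy2
      have h2 : y - x = -(x - y) := by ring_nf
      rw [h2, this, ← Finset.sum_neg_distrib]
      exact Finset.sum_congr rfl fun s _ => by rw [← smul_neg]; congr 1; ring_nf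
    have h2 : ∀ s ∈ S, w s • (y - s) = w s • (∑ t ∈ S, g s t • (t - y)) := by
      intro s hs
      by_cases hws : w s = 0
      · simp [hws]
      · have hGs : Good s := by
          by_contra hbad
          exact hws (hwB s (Finset.mem_filter.2 ⟨hs, hbad⟩))
        rw [hg]
        simp only [if_pos hGs]
        rw [(hν s hGs).2]
    rw [h1, Finset.sum_congr rfl h2]
    simp only [Finset.smul_sum, smul_smul]
    rw [Finset.sum_comm]
    exact Finset.sum_congr rfl fun t _ => by rw [hμ', ← Finset.sum_smul]
  exact cone_dir_mem hyQ μ' hμ'0 hdrep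

lemma comb {Q : Set (ι → ℝ)} (hQ : Convex ℝ Q) {y d₁ d₂ : ι → ℝ} {ε₁ ε₂ : ℝ}
    (hp1 : 0 < ε₁) (hp2 : 0 < ε₂) (h1 : y + ε₁ • d₁ ∈ Q) (h2 : y + ε₂ • d₂ ∈ Q) :
    y + (ε₁ * ε₂ / (ε₁ + ε₂)) • (d₁ + d₂) ∈ Q := by
  have hs : 0 < ε₁ + ε₂ := by linarith
  have key : y + (ε₁ * ε₂ / (ε₁ + ε₂)) • (d₁ + d₂)
      = (ε₂ / (ε₁ + ε₂)) • (y + ε₁ • d₁) + (ε₁ / (ε₁ + ε₂)) • (y + ε₂ • d₂) := by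
    match_scalars <;> field_simp <;> ring
  rw [key]
  exact hQ h1 h2 (by positivity) (by positivity) (by field_simp; ring)

/-- Every direction towards the affine span of the minimal face containing `y` is
two-sidedly feasible at `y`. -/
lemma span_dir {Q F : Set (ι → ℝ)} (hQ : IsPolytope Q) (hconv : Convex ℝ Q)
    (hF : IsFace Q F) {y : ι → ℝ} (hyF : y ∈ F)
    (hmin : ∀ G, IsFace Q G → y ∈ G → F ⊆ G)
    {z : ι → ℝ} (hz : z ∈ (affineSpan ℝ F : Set (ι → ℝ))) :
    ∃ ε : ℝ, 0 < ε ∧ y + ε • (z - y) ∈ Q ∧ y + ε • (y - z) ∈ Q := by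
  classical
  have hFQ : F ⊆ Q := by
    obtain ⟨-, c₀, hFe⟩ := hF; rw [hFe]; exact fun w hw => hw.1
  have hyQ : y ∈ Q := hFQ hyF
  set L : Submodule ℝ (ι → ℝ) :=
    { carrier := {d | ∃ ε : ℝ, 0 < ε ∧ y + ε • d ∈ Q ∧ y + ε • (-d) ∈ Q}
      zero_mem' := ⟨1, one_pos, by simpa using hyQ, by simpa using hyQ⟩
      add_mem' := by
        rintro d₁ d₂ ⟨ε₁, hp1, h1a, h1b⟩ ⟨ε₂, hp2, h2a, h2b⟩
        refine ⟨ε₁ * ε₂ / (ε₁ + ε₂), by positivity, comb hconv hp1 hp2 h1a h2a, ?_⟩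
        have := comb hconv hp1 hp2 h1b h2b
        rwa [neg_add d₁ d₂]
      smul_mem' := by
        rintro c d ⟨ε, hp, ha, hb⟩
        rcases lt_trichotomy c 0 with hc | hc | hc
        · have hc0 : c ≠ 0 := ne_of_lt hc
          refine ⟨ε / (-c), div_pos hp (by linarith), ?_, ?_⟩
          · have : (ε / (-c)) • (c • d) = ε • (-d) := by
              rw [smul_smul, smul_neg, ← neg_smul]; congr 1
              rw [div_mul_eq_mul_div, div_neg, mul_div_cancel_right₀ _ hc0]
            rwa [this]
          · have : (ε / (-c)) • (-(c • d)) = ε • d := by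
              rw [smul_neg, smul_smul, ← neg_smul]; congr 1
              rw [div_mul_eq_mul_div, div_neg, mul_div_cancel_right₀ _ hc0, neg_neg]
            rwa [this]
        · subst hc
          exact ⟨1, one_pos, by simpa using hyQ, by simpa using hyQ⟩
        · have hc0 : c ≠ 0 := ne_of_gt hc
          refine ⟨ε / c, by positivity, ?_, ?_⟩
          · have : (ε / c) • (c • d) = ε • d := by
              rw [smul_smul]; congr 1
              rw [div_mul_eq_mul_div, mul_div_cancel_right₀ _ hc0]
            rwa [this]
          · have : (ε / c) • (-(c • d)) = ε • (-d) := by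
              rw [smul_neg, smul_smul, ← smul_neg]; congr 1
              rw [div_mul_eq_mul_div, mul_div_cancel_right₀ _ hc0]
            rwa [this] } with hL
  have hFL : ∀ u ∈ F, u - y ∈ L := by
    intro u hu
    obtain ⟨ε₀, hε₀, hback⟩ := minimal_face_back hQ hF hyF hmin hu
    refine ⟨min ε₀ 1, by positivity, ?_, ?_⟩
    · have h1 : y + (1:ℝ) • (u - y) ∈ Q := by simpa using hFQ hu
      exact shrink hconv hyQ one_pos (by positivity) (min_le_right _ _) h1
    · have heq : y + ε₀ • (y - u) = y + ε₀ • (-(u - y)) := by rw [neg_sub]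
      rw [heq] at hback
      exact shrink hconv hyQ hε₀ (by positivity) (min_le_left _ _) hback
  have hspan : vectorSpan ℝ F ≤ L := by
    rw [vectorSpan_def, Submodule.span_le]
    intro v hv
    rw [Set.mem_vsub] at hv
    obtain ⟨u, hu, w, hw, rfl⟩ := hv
    have : u -ᵥ w = (u - y) - (w - y) := by rw [vsub_eq_sub]; abel
    rw [this]
    exact sub_mem (hFL u hu) (hFL w hw)
  have hzy : z - y ∈ L := by
    have hyS : y ∈ affineSpan ℝ F := subset_affineSpan ℝ F hyF
    have hzS : z ∈ affineSpan ℝ F := hz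
    have := AffineSubspace.vsub_mem_direction hzS hyS
    rw [direction_affineSpan] at this
    exact hspan this
  obtain ⟨ε, hε, ha, hb⟩ := hzy
  exact ⟨ε, hε, ha, by rwa [neg_sub] at hb⟩

/-- If `y` is a vertex of the intersection of two polytopes `Q₁, Q₂`
and `F₁, F₂` are the minimal faces of `Q₁, Q₂` containing `y`, then the affine hulls
of `F₁` and `F₂` intersect exactly in `y`. -/
theorem affineSpan_minimal_faces_inter {n : ℕ} (Q₁ Q₂ : Set (Fin n → ℝ))
    (hQ₁ : IsPolytope Q₁) (hQ₂ : IsPolytope Q₂)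
    (y : Fin n → ℝ) (hy : y ∈ Set.extremePoints ℝ (Q₁ ∩ Q₂))
    (F₁ F₂ : Set (Fin n → ℝ))
    (hF₁ : IsFace Q₁ F₁) (hyF₁ : y ∈ F₁)
    (hmin₁ : ∀ F, IsFace Q₁ F → y ∈ F → F₁ ⊆ F)
    (hF₂ : IsFace Q₂ F₂) (hyF₂ : y ∈ F₂)
    (hmin₂ : ∀ F, IsFace Q₂ F → y ∈ F → F₂ ⊆ F) :
    (affineSpan ℝ F₁ : Set (Fin n → ℝ)) ∩ (affineSpan ℝ F₂ : Set (Fin n → ℝ)) = {y} := by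
  have hconv₁ : Convex ℝ Q₁ := by
    obtain ⟨S, rfl⟩ := hQ₁; exact convex_convexHull ℝ _
  have hconv₂ : Convex ℝ Q₂ := by
    obtain ⟨S, rfl⟩ := hQ₂; exact convex_convexHull ℝ _
  ext z
  simp only [Set.mem_inter_iff, Set.mem_singleton_iff]
  constructor
  · rintro ⟨hz₁, hz₂⟩
    obtain ⟨ε₁, hε₁, h1a, h1b⟩ := span_dir hQ₁ hconv₁ hF₁ hyF₁ hmin₁ hz₁
    obtain ⟨ε₂, hε₂, h2a, h2b⟩ := span_dir hQ₂ hconv₂ hF₂ hyF₂ hmin₂ hz₂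
    set ε := min ε₁ ε₂ with hε
    have hεpos : 0 < ε := lt_min hε₁ hε₂
    have hyQ₁ : y ∈ Q₁ := by
      obtain ⟨-, c₀, hFe⟩ := hF₁
      rw [hFe] at hyF₁; exact hyF₁.1
    have hyQ₂ : y ∈ Q₂ := by
      obtain ⟨-, c₀, hFe⟩ := hF₂
      rw [hFe] at hyF₂; exact hyF₂.1
    have ha : y + ε • (z - y) ∈ Q₁ ∩ Q₂ :=
      ⟨shrink hconv₁ hyQ₁ hε₁ (le_of_lt hεpos) (min_le_left _ _) h1a,
       shrink hconv₂ hyQ₂ hε₂ (le_of_lt hεpos) (min_le_right _ _) h2a⟩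
    have hb : y + ε • (y - z) ∈ Q₁ ∩ Q₂ :=
      ⟨shrink hconv₁ hyQ₁ hε₁ (le_of_lt hεpos) (min_le_left _ _) h1b,
       shrink hconv₂ hyQ₂ hε₂ (le_of_lt hεpos) (min_le_right _ _) h2b⟩
    have hseg : y ∈ openSegment ℝ (y + ε • (z - y)) (y + ε • (y - z)) := by
      refine ⟨1/2, 1/2, by norm_num, by norm_num, by norm_num, ?_⟩
      module
    have := hy.2 ha hb hseg
    have h0 : ε • (z - y) = 0 := by
      have h1 := this
      rwa [add_eq_left] at h1
    rcases smul_eq_zero.1 h0 with h | h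
    · exact absurd h (ne_of_gt hεpos)
    · exact sub_eq_zero.1 h
  · rintro rfl
    exact ⟨subset_affineSpan ℝ F₁ hyF₁, subset_affineSpan ℝ F₂ hyF₂⟩
end

section
/- Let P ⊆ ℝⁿ be a polytope, let m ≤ n, let π : ℝⁿ → ℝᵐ be the projection onto the first m coordinates, and let w ∈ ℝᵐ with π⁻¹({w}) ∩ P ≠ ∅. Let F be an inclusionwise minimal face of P among the faces of P intersecting π⁻¹({w}), i.e., F intersects π⁻¹({w}) and no face of P properly contained in F intersects π⁻¹({w}). Then the restriction of π to F is injective. -/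
open Finset Pointwise

variable {ι : Type*} [Fintype ι]

open scoped Classical

/-- The linear functional given by a coefficient vector. -/
def lin (c x : ι → ℝ) : ℝ := ∑ i, c i * x i

lemma lin_isLinearMap (c : ι → ℝ) : IsLinearMap ℝ (lin c) := by
  constructor
  · intro x y
    simp [lin, mul_add, Finset.sum_add_distrib]
  · intro a x
    simp [lin, Finset.mul_sum, mul_left_comm]

lemma lin_add_apply (N : ℝ) (c g x : ι → ℝ) :
    lin (fun i => N * c i + g i) x = N * lin c x + lin g x := by
  simp [lin, add_mul, Finset.sum_add_distrib, Finset.mul_sum, mul_assoc]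

lemma lin_centerMass (S : Finset (ι → ℝ)) (w : (ι → ℝ) → ℝ) (hw : ∑ s ∈ S, w s = 1)
    (c : ι → ℝ) : lin c (S.centerMass w id) = ∑ s ∈ S, w s * lin c s := by
  rw [Finset.centerMass_eq_of_sum_1 _ _ hw]
  let L := IsLinearMap.mk' (lin c) (lin_isLinearMap c)
  have : lin c (∑ s ∈ S, w s • id s) = L (∑ s ∈ S, w s • id s) := rfl
  rw [this, map_sum]
  refine Finset.sum_congr rfl fun s _ => ?_
  rw [map_smul]
  simp [L, smul_eq_mul]

/-- The exposed face of a polytope given by a functional is the convex hull of the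
vertices maximizing that functional. -/
lemma faceA (S : Finset (ι → ℝ)) (hS : S.Nonempty) (c : ι → ℝ) :
    {x ∈ convexHull ℝ (S : Set (ι → ℝ)) |
        ∀ y ∈ convexHull ℝ (S : Set (ι → ℝ)), lin c y ≤ lin c x}
      = convexHull ℝ
          ((S.filter fun s => lin c s = S.sup' hS (lin c)) : Set (ι → ℝ)) := by
  set M := S.sup' hS (lin c) with hM
  set T := S.filter fun s => lin c s = M with hT
  have hub : ∀ x ∈ convexHull ℝ (S : Set (ι → ℝ)), lin c x ≤ M := fun x hx =>
    convexHull_min (fun s hs => Finset.le_sup' (lin c) (Finset.mem_coe.mp hs))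
      (convex_halfSpace_le (lin_isLinearMap c) M) hx
  obtain ⟨s₀, hs₀S, hs₀⟩ := Finset.exists_mem_eq_sup' hS (lin c)
  have hTS : (T : Set (ι → ℝ)) ⊆ (S : Set (ι → ℝ)) := by
    exact_mod_cast Finset.coe_subset.mpr (Finset.filter_subset _ _)
  have hlb : ∀ x ∈ convexHull ℝ (T : Set (ι → ℝ)), M ≤ lin c x := fun x hx =>
    convexHull_min (fun s hs => (Finset.mem_filter.mp (Finset.mem_coe.mp hs)).2.ge)
      (convex_halfSpace_ge (lin_isLinearMap c) M) hx
  ext x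
  constructor
  · rintro ⟨hxS, hxmax⟩
    have hxM : lin c x = M := by
      refine le_antisymm (hub x hxS) ?_
      have := hxmax s₀ (subset_convexHull ℝ _ hs₀S)
      rw [hM, hs₀]; exact this
    have hxS' := hxS
    rw [Finset.convexHull_eq] at hxS'
    obtain ⟨w, hw0, hw1, hwx⟩ := hxS'
    have hsum : ∑ s ∈ S, w s * lin c s = M := by
      rw [← lin_centerMass S w hw1 c, hwx, hxM]
    have hzero : ∀ s ∈ S, w s * (M - lin c s) = 0 := by
      have htot : ∑ s ∈ S, w s * (M - lin c s) = 0 := by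
        have : ∑ s ∈ S, w s * (M - lin c s)
            = (∑ s ∈ S, w s) * M - ∑ s ∈ S, w s * lin c s := by
          rw [Finset.sum_mul, ← Finset.sum_sub_distrib]
          exact Finset.sum_congr rfl fun s _ => by ring
        rw [this, hw1, one_mul, hsum, sub_self]
      exact (Finset.sum_eq_zero_iff_of_nonneg fun s hs =>
        mul_nonneg (hw0 s hs) (sub_nonneg.mpr (Finset.le_sup' (lin c) hs))).mp htot
    have hwT : ∀ s ∈ S, s ∉ T → w s = 0 := by
      intro s hsS hsT
      have hne : M - lin c s ≠ 0 := by
        intro h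
        exact hsT (Finset.mem_filter.mpr ⟨hsS, by linarith [sub_eq_zero.mp h]⟩)
      have := hzero s hsS
      rcases mul_eq_zero.mp this with h | h
      · exact h
      · exact absurd h hne
    have hsumT : ∑ s ∈ T, w s = 1 := by
      rw [← hw1]
      exact (Finset.sum_subset (Finset.filter_subset _ _)
        (fun s hs hns => hwT s hs hns)).symm ▸ rfl
    have hxT : T.centerMass w id = x := by
      rw [Finset.centerMass_eq_of_sum_1 _ _ hsumT, ← hwx,
        Finset.centerMass_eq_of_sum_1 _ _ hw1]
      exact Finset.sum_subset (Finset.filter_subset _ _)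
        (fun s hs hns => by rw [hwT s hs hns, zero_smul])
    exact hxT ▸ Finset.centerMass_id_mem_convexHull T
      (fun s hs => hw0 s (Finset.filter_subset _ _ hs)) (hsumT ▸ one_pos)
  · intro hx
    have hxS : x ∈ convexHull ℝ (S : Set (ι → ℝ)) := convexHull_mono hTS hx
    exact ⟨hxS, fun y hy => le_trans (hub y hy) (hlb x hx)⟩

/-- Given a face `F` of a polytope, a point `q ∈ F` maximizing a functional `g` over `F`,
and a point `u₀ ∈ F` with strictly smaller `g`-value, there is a face of the polytope
contained in `F`, containing `q` but not `u₀`. -/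
lemma exists_smaller_face (S : Finset (ι → ℝ)) (hS : S.Nonempty) (c : ι → ℝ)
    (F : Set (ι → ℝ))
    (hFc : F = {x ∈ convexHull ℝ (S : Set (ι → ℝ)) |
        ∀ y ∈ convexHull ℝ (S : Set (ι → ℝ)), lin c y ≤ lin c x})
    (g q u₀ : ι → ℝ) (hq : q ∈ F) (hsup : ∀ u ∈ F, lin g u ≤ lin g q)
    (hu₀ : u₀ ∈ F) (hlt : lin g u₀ < lin g q) :
    ∃ F', IsFace (convexHull ℝ (S : Set (ι → ℝ))) F' ∧ F' ⊆ F ∧ q ∈ F' ∧ u₀ ∉ F' := by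
  set M := S.sup' hS (lin c) with hM
  set T := S.filter fun s => lin c s = M with hTdef
  have hFT : F = convexHull ℝ (T : Set (ι → ℝ)) := by rw [hFc, faceA S hS c]
  have hT : T.Nonempty := by
    obtain ⟨s₀, hs₀S, hs₀⟩ := Finset.exists_mem_eq_sup' hS (lin c)
    exact ⟨s₀, Finset.mem_filter.mpr ⟨hs₀S, hs₀.symm⟩⟩
  set M' := T.sup' hT (lin g) with hM'
  set U := T.filter fun s => lin g s = M' with hUdef
  have hU : U.Nonempty := by
    obtain ⟨t₀, ht₀T, ht₀⟩ := Finset.exists_mem_eq_sup' hT (lin g)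
    exact ⟨t₀, Finset.mem_filter.mpr ⟨ht₀T, ht₀.symm⟩⟩
  have hUT : U ⊆ T := Finset.filter_subset _ _
  have hTS : T ⊆ S := Finset.filter_subset _ _
  have hqT : q ∈ convexHull ℝ (T : Set (ι → ℝ)) := hFT ▸ hq
  have hqU : q ∈ convexHull ℝ (U : Set (ι → ℝ)) := by
    rw [← faceA T hT g]
    exact ⟨hqT, fun y hy => hsup y (hFT ▸ hy)⟩
  -- choose N
  obtain ⟨u, huU⟩ := hU
  have huT : u ∈ T := hUT huU
  have huS : u ∈ S := hTS huT
  have huM' : lin g u = M' := (Finset.mem_filter.mp huU).2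
  set Gsup := S.sup' hS (lin g) with hGsup
  set Ginf := S.inf' hS (lin g) with hGinf
  have hGinfM' : Ginf ≤ M' := huM' ▸ Finset.inf'_le (lin g) huS
  obtain ⟨N, hN0, hkey⟩ :
      ∃ N : ℝ, 0 < N ∧ ∀ s ∈ S, s ∉ T →
        N * lin c s + lin g s < N * M + M' := by
    by_cases hST : (S \ T).Nonempty
    · set δ := (S \ T).inf' hST fun s => M - lin c s with hδdef
      have hδ : 0 < δ := by
        rw [hδdef, Finset.lt_inf'_iff]
        intro s hs
        obtain ⟨hsS, hsT⟩ := Finset.mem_sdiff.mp hs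
        have h1 : lin c s ≤ M := Finset.le_sup' (lin c) hsS
        have h2 : lin c s ≠ M := fun h => hsT (Finset.mem_filter.mpr ⟨hsS, h⟩)
        have := lt_of_le_of_ne h1 h2
        linarith
      refine ⟨(Gsup - Ginf + 1) / δ, ?_, ?_⟩
      · apply div_pos _ hδ
        have : Ginf ≤ Gsup := le_trans (Finset.inf'_le (lin g) huS)
          (Finset.le_sup' (lin g) huS)
        linarith
      · intro s hsS hsT
        set N := (Gsup - Ginf + 1) / δ with hNdef
        have hN0 : 0 < N := by
          apply div_pos _ hδ
          have : Ginf ≤ Gsup := le_trans (Finset.inf'_le (lin g) huS)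
            (Finset.le_sup' (lin g) huS)
          linarith
        have hδle : δ ≤ M - lin c s :=
          Finset.inf'_le _ (Finset.mem_sdiff.mpr ⟨hsS, hsT⟩)
        have hcs : lin c s ≤ M - δ := by linarith
        have hgs : lin g s ≤ Gsup := Finset.le_sup' (lin g) hsS
        have hNc : N * lin c s ≤ N * (M - δ) :=
          mul_le_mul_of_nonneg_left hcs hN0.le
        have hNδ : N * δ = Gsup - Ginf + 1 := by
          rw [hNdef, div_mul_cancel₀]
          exact hδ.ne'
        nlinarith
    · exact ⟨1, one_pos, fun s hsS hsT =>
        absurd (Finset.mem_sdiff.mpr ⟨hsS, hsT⟩) (by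
          rw [Finset.not_nonempty_iff_eq_empty] at hST
          simp [hST])⟩
  set c' : ι → ℝ := fun i => N * c i + g i with hc'def
  have hc' : ∀ x, lin c' x = N * lin c x + lin g x := fun x => lin_add_apply N c g x
  have hkey2 : ∀ s ∈ S, lin c' s ≤ N * M + M' ∧ (lin c' s = N * M + M' ↔ s ∈ U) := by
    intro s hsS
    by_cases hsT : s ∈ T
    · have hcs : lin c s = M := (Finset.mem_filter.mp hsT).2
      have hgs : lin g s ≤ M' := Finset.le_sup' (lin g) hsT
      rw [hc', hcs]
      constructor
      · linarith
      · constructor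
        · intro h
          exact Finset.mem_filter.mpr ⟨hsT, by linarith⟩
        · intro h
          have := (Finset.mem_filter.mp h).2
          linarith
    · have := hkey s hsS hsT
      rw [hc']
      refine ⟨this.le, ?_, fun h => absurd (hUT h) hsT⟩
      intro h; linarith
  have hsupc' : S.sup' hS (lin c') = N * M + M' := by
    refine le_antisymm (Finset.sup'_le _ _ fun s hs => (hkey2 s hs).1) ?_
    have := Finset.le_sup' (lin c') huS
    rw [(hkey2 u huS).2.mpr huU] at this
    exact this
  have hfiltc' : (S.filter fun s => lin c' s = S.sup' hS (lin c')) = U := by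
    ext s
    rw [Finset.mem_filter, hsupc']
    constructor
    · rintro ⟨hsS, h⟩
      exact (hkey2 s hsS).2.mp h
    · intro h
      have hsS := hTS (hUT h)
      exact ⟨hsS, (hkey2 s hsS).2.mpr h⟩
  set F' := {x ∈ convexHull ℝ (S : Set (ι → ℝ)) |
      ∀ y ∈ convexHull ℝ (S : Set (ι → ℝ)), lin c' y ≤ lin c' x} with hF'def
  have hF'U : F' = convexHull ℝ (U : Set (ι → ℝ)) := by
    rw [hF'def, faceA S hS c', hfiltc']
  have hqF' : q ∈ F' := hF'U ▸ hqU
  refine ⟨F', ⟨⟨q, hqF'⟩, c', rfl⟩, ?_, hqF', ?_⟩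
  · rw [hF'U, hFT]
    exact convexHull_mono (by exact_mod_cast Finset.coe_subset.mpr hUT)
  · intro hu₀F'
    have h1 : M' ≤ lin g u₀ := by
      have : u₀ ∈ convexHull ℝ (U : Set (ι → ℝ)) := hF'U ▸ hu₀F'
      exact convexHull_min (fun s hs => (Finset.mem_filter.mp (Finset.mem_coe.mp hs)).2.ge)
        (convex_halfSpace_ge (lin_isLinearMap g) M') this
    have h2 : lin g q ≤ M' := by
      have : convexHull ℝ (T : Set (ι → ℝ)) ⊆ {x | lin g x ≤ M'} :=
        convexHull_min (fun s hs => Finset.le_sup' (lin g) (Finset.mem_coe.mp hs))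
          (convex_halfSpace_le (lin_isLinearMap g) M')
      exact this hqT
    linarith

/-- Supporting-hyperplane lemma: if `q ∈ F` (convex), `z = x₀ - y₀ ≠ 0` with
`x₀, y₀ ∈ F`, and the ray `q + ℝ₊ z` leaves `F` immediately, then there is a linear
functional maximized over `F` at `q` and not constant on `F`. -/
lemma exists_support (F : Set (ι → ℝ)) (hFconv : Convex ℝ F)
    (q : ι → ℝ) (hqF : q ∈ F) (z : ι → ℝ) (hz : z ≠ 0)
    (x₀ y₀ : ι → ℝ) (hx₀ : x₀ ∈ F) (hy₀ : y₀ ∈ F) (hzxy : z = x₀ - y₀)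
    (hray : ∀ ε : ℝ, 0 < ε → q + ε • z ∉ F) :
    ∃ g u₀, u₀ ∈ F ∧ (∀ u ∈ F, lin g u ≤ lin g q) ∧ lin g u₀ < lin g q := by
  set D : Set (ι → ℝ) := (fun u => u - q) '' F with hDdef
  have hDconv : Convex ℝ D := by
    have := hFconv.translate (-q)
    convert this using 2
    ext u
    simp [sub_eq_neg_add]
    exact sub_eq_neg_add _ _
  set V : Submodule ℝ (ι → ℝ) := Submodule.span ℝ D with hVdef
  have hDV : D ⊆ (V : Set (ι → ℝ)) := Submodule.subset_span
  have hzV : z ∈ V := by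
    have h1 : x₀ - q ∈ V := hDV ⟨x₀, hx₀, rfl⟩
    have h2 : y₀ - q ∈ V := hDV ⟨y₀, hy₀, rfl⟩
    have : z = (x₀ - q) - (y₀ - q) := by rw [hzxy]; ring
    rw [this]
    exact sub_mem h1 h2
  set s : Set V := V.subtype ⁻¹' D with hsdef
  have hs0 : (0 : V) ∈ s := by
    show ((0 : V) : ι → ℝ) ∈ D
    exact ⟨q, hqF, by simp⟩
  have hsconv : Convex ℝ s := hDconv.linear_preimage V.subtype
  have hspan : Submodule.span ℝ s = ⊤ := by
    apply Submodule.map_injective_of_injective V.injective_subtype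
    rw [Submodule.map_span, Submodule.map_top, Submodule.range_subtype]
    have : V.subtype '' s = D := by
      rw [hsdef]
      show Subtype.val '' (Subtype.val ⁻¹' D) = D
      rw [Set.image_preimage_eq_inter_range, Subtype.range_coe]
      exact Set.inter_eq_self_of_subset_left hDV
    rw [this, ← hVdef]
  have haff : affineSpan ℝ s = ⊤ := by
    rw [AffineSubspace.affineSpan_eq_top_iff_vectorSpan_eq_top_of_nonempty ℝ ↥V ↥V ⟨0, hs0⟩]
    refine le_antisymm le_top ?_
    rw [← hspan]
    apply Submodule.span_le.mpr
    intro a ha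
    have := vsub_mem_vectorSpan ℝ ha hs0
    simpa using this
  have hint : (interior s).Nonempty :=
    hsconv.interior_nonempty_iff_affineSpan_eq_top.mpr haff
  have h0ni : (0 : V) ∉ interior s := by
    intro h0
    set zv : V := ⟨z, hzV⟩ with hzvdef
    have hzv : zv ≠ 0 := by
      intro h
      apply hz
      have := congrArg (Subtype.val) h
      simpa [hzvdef] using this
    have hnzv : 0 < ‖zv‖ := norm_pos_iff.mpr hzv
    obtain ⟨r, hr, hball⟩ := Metric.mem_nhds_iff.mp (mem_interior_iff_mem_nhds.mp h0)
    set ε := r / (2 * ‖zv‖) with hεdef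
    have hε : 0 < ε := div_pos hr (by linarith)
    have hmem : ε • zv ∈ Metric.ball (0 : V) r := by
      rw [mem_ball_zero_iff]
      have hnorm : ‖ε • zv‖ = ε * ‖zv‖ := by
        simp [norm_smul, abs_of_pos hε]
      rw [hnorm, hεdef]
      rw [div_mul_eq_mul_div, mul_comm (2 : ℝ) ‖zv‖, ← div_div, mul_div_assoc,
        div_self hnzv.ne', mul_one]
      linarith
    have hsmem : ε • zv ∈ s := hball hmem
    have : ((ε • zv : V) : ι → ℝ) ∈ D := hsmem
    obtain ⟨u, huF, hu⟩ := this
    apply hray ε hε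
    have h1 : u - q = ε • z := by
      have : (fun u => u - q) u = ε • z := by
        rw [hu]; simp; rfl
      simpa using this
    have : u = q + ε • z := sub_eq_iff_eq_add'.mp h1
    rw [← this]; exact huF
  obtain ⟨f, hf⟩ := geometric_hahn_banach_open_point hsconv.interior isOpen_interior h0ni
  have hf0 : ∀ a ∈ interior s, f a < 0 := by
    intro a ha
    have := hf a ha
    rwa [map_zero] at this
  obtain ⟨b, hb⟩ := hint
  have hfs : ∀ a ∈ s, f a ≤ 0 := by
    intro a ha
    by_contra hpos
    push_neg at hpos
    have hfb : f b < 0 := hf0 b hb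
    set t := f a / (f a - f b) with htdef
    have hden : 0 < f a - f b := by linarith
    have ht0 : 0 < t := div_pos hpos hden
    have ht1 : t < 1 := (div_lt_one hden).mpr (by linarith)
    have hmem : (1 - t) • a + t • b ∈ interior s :=
      hsconv.combo_self_interior_mem_interior ha hb (by linarith) ht0 (by ring)
    have hval := hf0 _ hmem
    rw [map_add, map_smul, map_smul] at hval
    have htmul : t * (f a - f b) = f a := div_mul_cancel₀ _ hden.ne'
    simp only [smul_eq_mul] at hval
    nlinarith
  obtain ⟨W, hW⟩ := Submodule.exists_isCompl V
  set proj : (ι → ℝ) →ₗ[ℝ] V := V.projectionOnto W hW with hprojdef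
  set gl : (ι → ℝ) →ₗ[ℝ] ℝ := (f : V →ₗ[ℝ] ℝ).comp proj with hgldef
  set g : ι → ℝ := fun i => gl fun j => if i = j then 1 else 0 with hgdef
  have hgl : ∀ x, lin g x = gl x := by
    intro x
    rw [LinearMap.pi_apply_eq_sum_univ gl x]
    refine Finset.sum_congr rfl fun i _ => ?_
    rw [smul_eq_mul, mul_comm]
  have hglV : ∀ (v : V), gl (v : ι → ℝ) = f v := by
    intro v
    rw [hgldef]
    simp only [LinearMap.comp_apply]
    rw [hprojdef, Submodule.linearProjOfIsCompl_apply_left hW v]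
    rfl
  have hbs : b ∈ s := interior_subset hb
  have hbD : ((b : V) : ι → ℝ) ∈ D := hbs
  obtain ⟨u₀, hu₀F, hu₀⟩ := hbD
  refine ⟨g, u₀, hu₀F, ?_, ?_⟩
  · intro u hu
    have h2 : u - q ∈ D := ⟨u, hu, rfl⟩
    have h3 : (⟨u - q, hDV h2⟩ : V) ∈ s := h2
    have h4 : f ⟨u - q, hDV h2⟩ ≤ 0 := hfs _ h3
    have h5 : lin g u - lin g q = gl (u - q) := by rw [hgl, hgl, map_sub]
    rw [hglV ⟨u - q, hDV h2⟩] at h5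
    linarith
  · have h5 : lin g u₀ - lin g q = gl (u₀ - q) := by rw [hgl, hgl, map_sub]
    have hu₀' : u₀ - q = ((b : V) : ι → ℝ) := hu₀
    rw [hu₀'] at h5
    rw [hglV b] at h5
    have := hf0 b hb
    linarith

/-- If `F` is an inclusionwise minimal face of a polytope `P` among
the faces intersecting the fiber `π⁻¹({w})` of the projection onto the first `m`
coordinates, then `π` is injective on `F`. -/
theorem projection_injective_on_minimal_face {m n : ℕ} (hmn : m ≤ n)
    (P : Set (Fin n → ℝ)) (hP : IsPolytope P)
    (π : (Fin n → ℝ) → (Fin m → ℝ)) (hπ : π = fun x (i : Fin m) => x (Fin.castLE hmn i))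
    (w : Fin m → ℝ) (hw : (π ⁻¹' {w} ∩ P).Nonempty)
    (F : Set (Fin n → ℝ)) (hF : IsFace P F)
    (hFw : (F ∩ π ⁻¹' {w}).Nonempty)
    (hmin : ∀ F', IsFace P F' → F' ⊆ F → (F' ∩ π ⁻¹' {w}).Nonempty → F' = F) :
    Set.InjOn π F := by
  obtain ⟨S, hPS⟩ := hP
  obtain ⟨hFne, c, hFc⟩ := hF
  intro a ha b hb hab
  by_contra hne
  set z := a - b with hzdef
  have hz : z ≠ 0 := sub_ne_zero.mpr hne
  have hzm : ∀ j : Fin m, z (Fin.castLE hmn j) = 0 := by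
    intro j
    rw [hπ] at hab
    have := congrFun hab j
    simp only at this
    simp [hzdef, this]
  have hS : S.Nonempty := by
    obtain ⟨p₀, _, hp₀⟩ := hw
    rcases S.eq_empty_or_nonempty with h | h
    · rw [h] at hPS
      simp [convexHull_empty] at hPS
      rw [hPS] at hp₀
      exact absurd hp₀ (Set.notMem_empty _)
    · exact h
  have hFcLin : F = {x ∈ convexHull ℝ (S : Set (Fin n → ℝ)) |
      ∀ y ∈ convexHull ℝ (S : Set (Fin n → ℝ)), lin c y ≤ lin c x} := by
    rw [hPS] at hFc
    exact hFc
  have hFT := hFcLin.trans (faceA S hS c)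
  have hFconv : Convex ℝ F := hFT ▸ convex_convexHull ℝ _
  have hFcomp : IsCompact F := hFT ▸ ((Finset.finite_toSet _).isCompact_convexHull (𝕜 := ℝ))
  have hπcont : Continuous π := by
    rw [hπ]
    exact continuous_pi fun i => continuous_apply _
  have hfib_closed : IsClosed (π ⁻¹' {w}) := isClosed_singleton.preimage hπcont
  have hQcomp : IsCompact (F ∩ π ⁻¹' {w}) := hFcomp.inter_right hfib_closed
  have hdcont : ContinuousOn (lin z) (F ∩ π ⁻¹' {w}) := by
    apply Continuous.continuousOn
    exact continuous_finset_sum _ fun i _ => continuous_const.mul (continuous_apply i)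
  obtain ⟨q, hqQ, hqmax⟩ := hQcomp.exists_isMaxOn hFw hdcont
  have hqF : q ∈ F := hqQ.1
  have hqw : π q = w := hqQ.2
  have hzz : 0 < lin z z := by
    have hex : ∃ i, z i ≠ 0 := by
      by_contra h
      push_neg at h
      exact hz (funext h)
    obtain ⟨i, hi⟩ := hex
    refine Finset.sum_pos' (fun i _ => mul_self_nonneg _) ⟨i, Finset.mem_univ i, ?_⟩
    exact mul_self_pos.mpr hi
  have hray : ∀ ε : ℝ, 0 < ε → q + ε • z ∉ F := by
    intro ε hε hmem
    have hfib : π (q + ε • z) = w := by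
      rw [hπ]
      funext j
      have hq : q (Fin.castLE hmn j) = w j := by
        rw [hπ] at hqw
        exact congrFun hqw j
      simp [hzm j, hq]
    have hle := hqmax (Set.mem_inter hmem (by simp [hfib]))
    have heq : lin z (q + ε • z) = lin z q + ε * lin z z := by
      simp [lin, mul_add, Finset.sum_add_distrib, Finset.mul_sum, mul_left_comm]
    simp only [Set.mem_setOf_eq] at hle
    rw [heq] at hle
    nlinarith
  obtain ⟨g, u₀, hu₀F, hgsup, hglt⟩ :=
    exists_support F hFconv q hqF z hz a b ha hb hzdef hray
  obtain ⟨F', hF'face, hF'sub, hqF', hu₀F'⟩ :=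
    exists_smaller_face S hS c F hFcLin g q u₀ hqF hgsup hu₀F hglt
  have hPface : IsFace P F' := by rw [hPS]; exact hF'face
  have hF'eq : F' = F := hmin F' hPface hF'sub ⟨q, hqF', by simp [hqw]⟩
  exact hu₀F' (hF'eq ▸ hu₀F)
end

section
/- Let A be an m × n totally unimodular matrix with real entries, let b ∈ ℤᵐ, and let P := {x ∈ ℝⁿ | Ax ≤ b}. Then P satisfies condition (★): for every nonnegative integer k, every r ∈ {0,…,k} and every integer vector w ∈ ℤⁿ, the set rP ∩ (w − (k−r)P) is box-integer. -/
open Finset Pointwise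

variable {ι : Type*} [Fintype ι]

namespace TUStar

open Matrix


open Matrix

/-- linear functional given by dot product with `r`, as a linear map in `r`. -/
def rowFuncL (n : ℕ) : (Fin n → ℝ) →ₗ[ℝ] Module.Dual ℝ (Fin n → ℝ) where
  toFun r :=
    { toFun := fun u => ∑ j, r j * u j
      map_add' := fun u v => by simp [mul_add, Finset.sum_add_distrib]
      map_smul' := fun a u => by
        simp only [Pi.smul_apply, smul_eq_mul, RingHom.id_apply, Finset.mul_sum]
        exact Finset.sum_congr rfl fun j _ => by ring }
  map_add' r s := by
    refine LinearMap.ext fun u => ?_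
    simp [add_mul, Finset.sum_add_distrib]
  map_smul' a r := by
    refine LinearMap.ext fun u => ?_
    simp only [Pi.smul_apply, smul_eq_mul, RingHom.id_apply, LinearMap.coe_mk, AddHom.coe_mk,
      LinearMap.smul_apply, Finset.mul_sum]
    exact Finset.sum_congr rfl fun j _ => by ring

theorem tu_polyhedron_isIntegerPolyhedron {n : ℕ} {I : Type*} [Fintype I]
    (M : Matrix I (Fin n) ℝ) (hM : M.IsTotallyUnimodular) (d : I → ℤ)
    (lo hi : Fin n → ℝ)
    (hsub : {x : Fin n → ℝ | ∀ i, ∑ j, M i j * x j ≤ (d i : ℝ)} ⊆ Set.Icc lo hi) :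
    IsIntegerPolyhedron {x : Fin n → ℝ | ∀ i, ∑ j, M i j * x j ≤ (d i : ℝ)} := by
  classical
  set Q : Set (Fin n → ℝ) := {x : Fin n → ℝ | ∀ i, ∑ j, M i j * x j ≤ (d i : ℝ)} with hQ
  have hcont : ∀ (v : Fin n → ℝ), Continuous fun x : Fin n → ℝ => ∑ j, v j * x j :=
    fun v => continuous_finset_sum _ fun j _ => continuous_const.mul (continuous_apply j)
  have hQclosed : IsClosed Q := by
    have : Q = ⋂ i, {x : Fin n → ℝ | ∑ j, M i j * x j ≤ (d i : ℝ)} := by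
      ext x; simp [hQ, Set.mem_iInter]
    rw [this]
    exact isClosed_iInter fun i => isClosed_le (hcont _) continuous_const
  have hQcompact : IsCompact Q :=
    IsCompact.of_isClosed_subset (isCompact_Icc) hQclosed hsub
  have hQconvex : Convex ℝ Q := by
    intro x hx y hy a b ha hb hab
    intro i
    have hxi := hx i
    have hyi := hy i
    have : ∑ j, M i j * (a • x + b • y) j
        = a * ∑ j, M i j * x j + b * ∑ j, M i j * y j := by
      rw [Finset.mul_sum, Finset.mul_sum, ← Finset.sum_add_distrib]
      exact Finset.sum_congr rfl fun j _ => by simp [Pi.add_apply]; ring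
    rw [this]
    have hd : a * (d i : ℝ) + b * (d i : ℝ) = (d i : ℝ) := by rw [← add_mul, hab, one_mul]
    nlinarith [mul_le_mul_of_nonneg_left hxi ha, mul_le_mul_of_nonneg_left hyi hb]
  intro F hF
  obtain ⟨hFne, c, hFeq⟩ := hF
  have hFQ : F ⊆ Q := by rw [hFeq]; exact fun x hx => hx.1
  have hFclosed : IsClosed F := by
    have : F = Q ∩ ⋂ y ∈ Q, {x : Fin n → ℝ | ∑ i, c i * y i ≤ ∑ i, c i * x i} := by
      rw [hFeq]; ext x
      simp only [Set.mem_inter_iff, Set.mem_iInter, Set.mem_setOf_eq]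
    rw [this]
    exact hQclosed.inter (isClosed_biInter fun y _ => isClosed_le continuous_const (hcont c))
  have hFcompact : IsCompact F := IsCompact.of_isClosed_subset hQcompact hFclosed hFQ
  have hlin : ∀ (v x u : Fin n → ℝ) (t : ℝ),
      ∑ j, v j * (x + t • u) j = ∑ j, v j * x j + t * ∑ j, v j * u j := by
    intro v x u t
    rw [Finset.mul_sum, ← Finset.sum_add_distrib]
    exact Finset.sum_congr rfl fun j _ => by simp [Pi.add_apply]; ring
  obtain ⟨x, hxext⟩ := hFcompact.extremePoints_nonempty hFne
  rw [mem_extremePoints] at hxext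
  obtain ⟨hxF, hxext⟩ := hxext
  have hxQopt : x ∈ Q ∧ ∀ y ∈ Q, ∑ i, c i * y i ≤ ∑ i, c i * x i := by
    rw [hFeq] at hxF; exact hxF
  obtain ⟨hxQ, hxopt⟩ := hxQopt
  set T : Set I := {i | ∑ j, M i j * x j = (d i : ℝ)} with hT
  by_cases hKex : ∃ u : Fin n → ℝ, u ≠ 0 ∧ ∀ i ∈ T, ∑ j, M i j * u j = 0
  · exfalso
    obtain ⟨u, hu0, huT⟩ := hKex
    set du : I → ℝ := fun i => ∑ j, M i j * u j with hdu
    set slack : I → ℝ := fun i => (d i : ℝ) - ∑ j, M i j * x j with hslack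
    have hslack_nonneg : ∀ i, 0 ≤ slack i := fun i => sub_nonneg.mpr (hxQ i)
    have hslack_pos : ∀ i, i ∉ T → 0 < slack i := by
      intro i hi
      rcases lt_or_eq_of_le (hxQ i) with h | h
      · simpa [hslack] using sub_pos.mpr h
      · exact absurd h hi
    set cands : Finset ℝ :=
      insert (1:ℝ) (Finset.univ.image fun i => if du i = 0 ∨ i ∈ T then 1 else slack i / |du i|)
      with hcands
    have hcne : cands.Nonempty := ⟨1, by simp [hcands]⟩
    set ε : ℝ := cands.min' hcne with hε
    have hεpos : 0 < ε := by
      rw [hε, Finset.lt_min'_iff]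
      intro y hy
      rw [hcands] at hy
      simp only [Finset.mem_insert, Finset.mem_image] at hy
      rcases hy with rfl | ⟨i, -, rfl⟩
      · norm_num
      · split_ifs with h
        · norm_num
        · push_neg at h
          exact div_pos (hslack_pos i h.2) (abs_pos.mpr h.1)
    have hεle : ∀ i, i ∉ T → ε * |du i| ≤ slack i := by
      intro i hiT
      by_cases h0 : du i = 0
      · simpa [h0] using hslack_nonneg i
      · have hmem : slack i / |du i| ∈ cands := by
          rw [hcands]
          refine Finset.mem_insert_of_mem (Finset.mem_image.mpr ⟨i, Finset.mem_univ i, ?_⟩)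
          rw [if_neg (by tauto)]
        have h1 : ε ≤ slack i / |du i| := Finset.min'_le _ _ hmem
        exact (le_div_iff₀ (abs_pos.mpr h0)).mp h1
    have hmem : ∀ t : ℝ, |t| ≤ ε → x + t • u ∈ Q := by
      intro t ht i
      rw [hlin (M i) x u t]
      by_cases hiT : i ∈ T
      · rw [huT i hiT, mul_zero, add_zero]
        exact le_of_eq hiT
      · have h1 : t * du i ≤ |t| * |du i| := by
          calc t * du i ≤ |t * du i| := le_abs_self _
          _ = |t| * |du i| := abs_mul _ _
        have h2 : |t| * |du i| ≤ ε * |du i| :=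
          mul_le_mul_of_nonneg_right ht (abs_nonneg _)
        have := hεle i hiT
        have hsi : (d i : ℝ) = ∑ j, M i j * x j + slack i := by rw [hslack]; ring
        rw [hsi]
        have : t * du i ≤ slack i := le_trans h1 (le_trans h2 this)
        linarith
    have hp : x + ε • u ∈ Q := hmem ε (by rw [abs_of_pos hεpos])
    have hm : x + (-ε) • u ∈ Q := hmem (-ε) (by rw [abs_neg, abs_of_pos hεpos])
    have h1 : ∑ i, c i * x i + ε * ∑ i, c i * u i ≤ ∑ i, c i * x i := by
      have := hxopt _ hp; rwa [hlin c x u ε] at this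
    have h2 : ∑ i, c i * x i + (-ε) * ∑ i, c i * u i ≤ ∑ i, c i * x i := by
      have := hxopt _ hm; rwa [hlin c x u (-ε)] at this
    have hcu0 : ∑ i, c i * u i = 0 := by nlinarith
    have hpF : x + ε • u ∈ F := by
      rw [hFeq]
      refine ⟨hp, fun y hy => ?_⟩
      rw [hlin c x u ε, hcu0, mul_zero, add_zero]
      exact hxopt y hy
    have hmF : x + (-ε) • u ∈ F := by
      rw [hFeq]
      refine ⟨hm, fun y hy => ?_⟩
      rw [hlin c x u (-ε), hcu0, mul_zero, add_zero]
      exact hxopt y hy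
    have hseg : x ∈ openSegment ℝ (x + (-ε) • u) (x + ε • u) := by
      refine ⟨1/2, 1/2, by norm_num, by norm_num, by norm_num, ?_⟩
      module
    have := (hxext _ hmF _ hpF hseg).2
    apply hu0
    have : ε • u = 0 := by
      have h := this
      rwa [add_eq_left] at h
    exact (smul_eq_zero.mp this).resolve_left (ne_of_gt hεpos)
  · -- rows tight at x span everything; extract an invertible integer subsystem
    push_neg at hKex
    refine ⟨x, hxF, ?_⟩
    have hns : ∀ u : Fin n → ℝ, u ≠ 0 → ∃ i ∈ T, ∑ j, M i j * u j ≠ 0 := hKex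
    set s : Set (Module.Dual ℝ (Fin n → ℝ)) := (fun i => rowFuncL n (M i)) '' T with hs
    have hspan : Submodule.span ℝ s = ⊤ := by
      apply Submodule.span_eq_top_of_ne_zero
      intro z hz
      obtain ⟨i, hiT, hi⟩ := hns z hz
      exact ⟨rowFuncL n (M i), ⟨i, hiT, rfl⟩, hi⟩
    obtain ⟨t, hts, htspan, htli⟩ := exists_linearIndependent ℝ s
    rw [hspan] at htspan
    haveI : Fintype t := (htli.setFinite).fintype
    have hbtop : ⊤ ≤ Submodule.span ℝ (Set.range ((↑) : t → Module.Dual ℝ (Fin n → ℝ))) := by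
      rw [Subtype.range_coe, htspan]
    let bas : Module.Basis t ℝ (Module.Dual ℝ (Fin n → ℝ)) := Module.Basis.mk htli hbtop
    have hcard : Fintype.card t = n := by
      have h1 := Module.finrank_eq_card_basis bas
      rw [Subspace.dual_finrank_eq, Module.finrank_fin_fun] at h1
      omega
    let e : Fin n ≃ t := (Fintype.equivFinOfCardEq hcard).symm
    have hchoice : ∀ v : t, ∃ i ∈ T, rowFuncL n (M i) = (v : Module.Dual ℝ (Fin n → ℝ)) :=
      fun v => hts v.2
    choose gi hgiT hgiv using hchoice
    set g : Fin n → I := fun k => gi (e k) with hg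
    have hgT : ∀ k, g k ∈ T := fun k => hgiT (e k)
    have hrowli : LinearIndependent ℝ (fun k : Fin n => M (g k)) := by
      have h1 : LinearIndependent ℝ (fun k : Fin n => ((e k : t) : Module.Dual ℝ (Fin n → ℝ))) :=
        htli.comp e e.injective
      refine LinearIndependent.of_comp (rowFuncL n) ?_
      have h2 : ((rowFuncL n) ∘ fun k : Fin n => M (g k))
          = fun k : Fin n => ((e k : t) : Module.Dual ℝ (Fin n → ℝ)) := by
        funext k; exact hgiv (e k)
      rw [h2]; exact h1
    set B : Matrix (Fin n) (Fin n) ℝ := M.submatrix g id with hB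
    have hdet0 : B.det ≠ 0 := by
      intro hdet
      have hdetT : Bᵀ.det = 0 := by rw [Matrix.det_transpose]; exact hdet
      obtain ⟨v, hv0, hveq⟩ := (Matrix.exists_mulVec_eq_zero_iff).mpr hdetT
      have : ∑ k, v k • M (g k) = 0 := by
        funext j
        have h1 := congrFun hveq j
        simp only [Matrix.mulVec, dotProduct, Matrix.transpose_apply, Pi.zero_apply] at h1
        rw [Finset.sum_apply]
        simp only [Pi.smul_apply, smul_eq_mul, Pi.zero_apply]
        calc ∑ k, v k * M (g k) j = ∑ k, B k j * v k :=
              Finset.sum_congr rfl fun k _ => by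
                have : B k j = M (g k) j := rfl
                rw [this]; ring
        _ = 0 := h1
      have := Fintype.linearIndependent_iff.mp hrowli v this
      exact hv0 (funext this)
    have hdetB : ∃ sgn : SignType, (sgn : ℝ) = B.det := by
      have h := (Matrix.isTotallyUnimodular_iff M).mp hM n g id
      rwa [← hB] at h
    -- integer matrix
    set B₀ : Matrix (Fin n) (Fin n) ℤ := Matrix.of fun k j => round (B k j) with hB₀def
    have hB₀ : ∀ k j, ((B₀ k j : ℤ) : ℝ) = B k j := by
      intro k j
      obtain ⟨sg, hsg⟩ := hM.apply (g k) j
      have hBkj : B k j = M (g k) j := rfl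
      rw [hB₀def]
      simp only [Matrix.of_apply]
      rw [hBkj, ← hsg]
      have hm1 : ((-1:ℝ)) = ((-1 : ℤ) : ℝ) := by norm_num
      have h1' : ((1:ℝ)) = ((1 : ℤ) : ℝ) := by norm_num
      have h0' : ((0:ℝ)) = ((0 : ℤ) : ℝ) := by norm_num
      cases sg with
      | zero =>
        rw [SignType.zero_eq_zero, SignType.coe_zero, h0', round_intCast]
      | neg =>
        rw [SignType.neg_eq_neg_one, SignType.coe_neg_one, hm1, round_intCast]
      | pos =>
        rw [SignType.pos_eq_one, SignType.coe_one, h1', round_intCast]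
    have hBmap : B = B₀.map (Int.cast : ℤ → ℝ) := by
      ext k j; simp [Matrix.map_apply, hB₀]
    have hdetcast : ((B₀.det : ℤ) : ℝ) = B.det := by
      have h2 : (B₀.map (Int.cast : ℤ → ℝ)).det = ((B₀.det : ℤ) : ℝ) := by
        have h3 := (Int.castRingHom ℝ).map_det B₀
        rw [RingHom.mapMatrix_apply] at h3
        simpa using h3.symm
      rw [hBmap, h2]
    have hdetunit : IsUnit B₀.det := by
      obtain ⟨sgn, hsgn⟩ := hdetB
      rw [Int.isUnit_iff]
      cases sgn with
      | zero => exfalso; apply hdet0; rw [← hsgn]; simp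
      | pos =>
        left
        have : ((B₀.det : ℤ) : ℝ) = 1 := by rw [hdetcast, ← hsgn]; simp
        exact_mod_cast this
      | neg =>
        right
        have : ((B₀.det : ℤ) : ℝ) = -1 := by rw [hdetcast, ← hsgn]; simp
        exact_mod_cast this
    set dI : Fin n → ℤ := fun k => d (g k) with hdI
    set z : Fin n → ℤ := (B₀⁻¹).mulVec dI with hz
    have hzsol : B₀.mulVec z = dI := by
      rw [hz, Matrix.mulVec_mulVec, Matrix.mul_nonsing_inv _ hdetunit, Matrix.one_mulVec]
    have hcast : B.mulVec (fun j => (z j : ℝ)) = fun k => (dI k : ℝ) := by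
      funext k
      have h1 := congrFun hzsol k
      simp only [Matrix.mulVec, dotProduct] at h1 ⊢
      have : ((∑ j, B₀ k j * z j : ℤ) : ℝ) = ((dI k : ℤ) : ℝ) := by rw [h1]
      push_cast at this
      rw [← this]
      exact Finset.sum_congr rfl fun j _ => by rw [← hB₀ k j]
    have hBx : B.mulVec x = fun k => (dI k : ℝ) := by
      funext k
      simp only [Matrix.mulVec, dotProduct]
      have := hgT k
      simp only [hT, Set.mem_setOf_eq] at this
      rw [← this]
      exact Finset.sum_congr rfl fun j _ => by simp [hB, Matrix.submatrix_apply]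
    have hdetBunit : IsUnit B.det := (Ne.isUnit hdet0)
    have hxz : x = fun j => (z j : ℝ) := by
      calc x = (1 : Matrix (Fin n) (Fin n) ℝ).mulVec x := (Matrix.one_mulVec x).symm
      _ = (B⁻¹ * B).mulVec x := by rw [Matrix.nonsing_inv_mul _ hdetBunit]
      _ = B⁻¹.mulVec (B.mulVec x) := (Matrix.mulVec_mulVec _ _ _).symm
      _ = B⁻¹.mulVec (B.mulVec (fun j => (z j : ℝ))) := by rw [hBx, hcast]
      _ = (B⁻¹ * B).mulVec (fun j => (z j : ℝ)) := Matrix.mulVec_mulVec _ _ _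
      _ = (fun j => (z j : ℝ)) := by rw [Matrix.nonsing_inv_mul _ hdetBunit, Matrix.one_mulVec]
    exact fun j => ⟨z j, congrFun hxz j⟩


lemma fromRows_neg_tu {R : Type*} [CommRing R] {m' n' : Type*} {A : Matrix m' n' R}
    (hA : A.IsTotallyUnimodular) : (Matrix.fromRows A (-A)).IsTotallyUnimodular := by
  rw [Matrix.isTotallyUnimodular_iff]
  intro k f g
  set τ : Fin k → SignType := fun i => (f i).elim (fun _ => 1) (fun _ => -1) with hτ
  set f' : Fin k → m' := fun i => (f i).elim id id with hf'
  have hrow : (Matrix.fromRows A (-A)).submatrix f g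
      = Matrix.diagonal (fun i => (τ i : R)) * (A.submatrix f' g) := by
    ext i j
    rw [Matrix.diagonal_mul]
    cases hfi : f i <;>
      simp [Matrix.submatrix, hτ, hf', hfi]
  rw [hrow, Matrix.det_mul, Matrix.det_diagonal]
  have h1 : ∏ i, ((τ i : R)) = ((∏ i, τ i : SignType) : R) := by
    induction (Finset.univ : Finset (Fin k)) using Finset.induction with
    | empty => simp
    | insert a s h ih => rw [Finset.prod_insert h, Finset.prod_insert h, SignType.coe_mul, ih]
  obtain ⟨s, hs⟩ := (A.isTotallyUnimodular_iff.mp hA) k f' g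
  exact ⟨(∏ i, τ i) * s, by rw [SignType.coe_mul, ← h1, hs]⟩

lemma isIntegerPolyhedron_of_all_integer {Q : Set (ι → ℝ)}
    (h : ∀ x ∈ Q, IsIntegerVec x) : IsIntegerPolyhedron Q := by
  intro F hF
  obtain ⟨⟨x, hxF⟩, c, hFeq⟩ := hF
  refine ⟨x, hxF, h x ?_⟩
  rw [hFeq] at hxF
  exact hxF.1

lemma isBoxInteger_of_all_integer {Q : Set (ι → ℝ)}
    (h : ∀ x ∈ Q, IsIntegerVec x) : IsBoxInteger Q := by
  intro c d _
  exact isIntegerPolyhedron_of_all_integer (fun x hx => h x hx.1)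

lemma mem_smul_polyhedron {m n : ℕ} (A : Matrix (Fin m) (Fin n) ℝ) (β : Fin m → ℝ)
    {t : ℝ} (ht : 0 < t) (x : Fin n → ℝ) :
    x ∈ t • {y : Fin n → ℝ | ∀ i, ∑ j, A i j * y j ≤ β i} ↔
      ∀ i, ∑ j, A i j * x j ≤ t * β i := by
  rw [Set.mem_smul_set_iff_inv_smul_mem₀ (ne_of_gt ht)]
  simp only [Set.mem_setOf_eq]
  have hkey : ∀ i, ∑ j, A i j * (t⁻¹ • x) j = t⁻¹ * ∑ j, A i j * x j := by
    intro i
    rw [Finset.mul_sum]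
    exact Finset.sum_congr rfl fun j _ => by
      simp only [Pi.smul_apply, smul_eq_mul]; ring
  constructor
  · intro h i
    have h2 := h i
    rw [hkey i] at h2
    have h3 := mul_le_mul_of_nonneg_left h2 (le_of_lt ht)
    calc ∑ j, A i j * x j = t * (t⁻¹ * ∑ j, A i j * x j) := by field_simp
    _ ≤ t * β i := h3
  · intro h i
    rw [hkey i]
    calc t⁻¹ * ∑ j, A i j * x j ≤ t⁻¹ * (t * β i) :=
          mul_le_mul_of_nonneg_left (h i) (by positivity)
    _ = β i := by field_simp


end TUStar

open TUStar in
/-- A polyhedron `{x | Ax ≤ b}` defined by a totally unimodular matrix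
`A` and an integer vector `b` satisfies condition (★). -/
theorem tu_conditionStar {m n : ℕ} (A : Matrix (Fin m) (Fin n) ℝ)
    (hA : A.IsTotallyUnimodular) (b : Fin m → ℤ) :
    ConditionStar {x : Fin n → ℝ | ∀ i, ∑ j, A i j * x j ≤ (b i : ℝ)} := by
  classical
  intro k r hrk w
  set P : Set (Fin n → ℝ) := {x : Fin n → ℝ | ∀ i, ∑ j, A i j * x j ≤ (b i : ℝ)} with hP
  by_cases hr : r = 0
  · subst hr
    apply isBoxInteger_of_all_integer
    rintro x ⟨hx1, -⟩
    obtain ⟨y, -, rfl⟩ := hx1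
    intro i
    exact ⟨0, by simp⟩
  by_cases hs : k - r = 0
  · apply isBoxInteger_of_all_integer
    rintro x ⟨-, y, hy, rfl⟩
    rw [hs] at hy
    obtain ⟨y', -, rfl⟩ := hy
    intro i
    exact ⟨w i, by simp⟩
  have hr' : (0:ℝ) < (r:ℝ) := by exact_mod_cast Nat.pos_of_ne_zero hr
  have hs' : (0:ℝ) < ((k - r : ℕ):ℝ) := by exact_mod_cast Nat.pos_of_ne_zero hs
  intro cc dd hccdd
  set M : Matrix ((Fin m ⊕ Fin m) ⊕ (Fin n ⊕ Fin n)) (Fin n) ℝ :=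
    Matrix.fromRows (Matrix.fromRows A (-A)) (Matrix.fromRows 1 (-1)) with hMdef
  have hMTU : M.IsTotallyUnimodular := by
    apply Matrix.IsTotallyUnimodular.fromRows_unitlike (fromRows_neg_tu hA)
    intro _ i
    cases i with
    | inl j =>
      refine ⟨j, 1, ?_⟩
      funext j'
      simp [Matrix.fromRows, Matrix.one_apply, Pi.single_apply, eq_comm]
      change (if j = j' then (1:ℝ) else 0) = (1 : Matrix (Fin n) (Fin n) ℝ) j j'
      rw [Matrix.one_apply]
    | inr j =>
      refine ⟨j, -1, ?_⟩
      funext j'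
      simp only [Matrix.fromRows, Matrix.of_apply, Sum.elim_inr, Matrix.neg_apply,
        Matrix.one_apply, Pi.single_apply, SignType.coe_neg_one]
      by_cases h : j' = j
      · change (-1 : Matrix (Fin n) (Fin n) ℝ) j j' = if j' = j then -1 else 0
        simp [h, Matrix.neg_apply, Matrix.one_apply]
      · change (-1 : Matrix (Fin n) (Fin n) ℝ) j j' = if j' = j then -1 else 0
        simp [h, Ne.symm h, Matrix.neg_apply, Matrix.one_apply]
  set Aw : Fin m → ℤ := fun i => ∑ j, round (A i j) * w j with hAwdef
  have hAw : ∀ i, ((Aw i : ℤ) : ℝ) = ∑ j, A i j * (w j : ℝ) := by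
    intro i
    rw [hAwdef]
    push_cast
    refine Finset.sum_congr rfl fun j _ => ?_
    congr 1
    obtain ⟨sg, hsg⟩ := hA.apply i j
    rw [← hsg]
    have hm1 : ((-1:ℝ)) = ((-1 : ℤ) : ℝ) := by norm_num
    have h1' : ((1:ℝ)) = ((1 : ℤ) : ℝ) := by norm_num
    have h0' : ((0:ℝ)) = ((0 : ℤ) : ℝ) := by norm_num
    cases sg with
    | zero => rw [SignType.zero_eq_zero, SignType.coe_zero, h0', round_intCast]
    | neg => rw [SignType.neg_eq_neg_one, SignType.coe_neg_one, hm1, round_intCast]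
    | pos => rw [SignType.pos_eq_one, SignType.coe_one, h1', round_intCast]
  set d' : (Fin m ⊕ Fin m) ⊕ (Fin n ⊕ Fin n) → ℤ :=
    Sum.elim (Sum.elim (fun i => r * b i) (fun i => (k - r : ℕ) * b i - Aw i))
      (Sum.elim dd (fun j => - cc j)) with hd'
  have hrow1 : ∀ (i : Fin m) (x : Fin n → ℝ),
      ∑ j, M (Sum.inl (Sum.inl i)) j * x j = ∑ j, A i j * x j := by
    intro i x
    exact Finset.sum_congr rfl fun j _ => by simp [hMdef]
  have hrow2 : ∀ (i : Fin m) (x : Fin n → ℝ),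
      ∑ j, M (Sum.inl (Sum.inr i)) j * x j = -∑ j, A i j * x j := by
    intro i x
    rw [← Finset.sum_neg_distrib]
    exact Finset.sum_congr rfl fun j _ => by simp [hMdef]
  have hrow3 : ∀ (j0 : Fin n) (x : Fin n → ℝ),
      ∑ j, M (Sum.inr (Sum.inl j0)) j * x j = x j0 := by
    intro j0 x
    have h1 : ∑ j, M (Sum.inr (Sum.inl j0)) j * x j
        = ∑ j, (if j0 = j then (1:ℝ) else 0) * x j :=
      Finset.sum_congr rfl fun j _ => by simp [hMdef, Matrix.one_apply]
    rw [h1]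
    simp [ite_mul, Finset.sum_ite_eq]
  have hrow4 : ∀ (j0 : Fin n) (x : Fin n → ℝ),
      ∑ j, M (Sum.inr (Sum.inr j0)) j * x j = -x j0 := by
    intro j0 x
    have h1 : ∑ j, M (Sum.inr (Sum.inr j0)) j * x j
        = ∑ j, (if j0 = j then (-1:ℝ) else 0) * x j :=
      Finset.sum_congr rfl fun j _ => by
        have : M (Sum.inr (Sum.inr j0)) j = -(1 : Matrix (Fin n) (Fin n) ℝ) j0 j := by
          simp [hMdef]
        rw [this, Matrix.one_apply]
        by_cases h : j0 = j <;> simp [h]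
    rw [h1]
    simp [ite_mul, Finset.sum_ite_eq]
  have himg : ∀ x : Fin n → ℝ,
      (x ∈ (fun y => (fun i => (w i:ℝ)) - y) '' (((k - r : ℕ):ℝ) • P)) ↔
        ((fun i => (w i:ℝ)) - x) ∈ ((k - r : ℕ):ℝ) • P := by
    intro x
    constructor
    · rintro ⟨y, hy, rfl⟩
      simpa [sub_sub_cancel] using hy
    · intro h
      exact ⟨_, h, by funext i; simp⟩
  have hexp : ∀ (i0 : Fin m) (x : Fin n → ℝ),
      ∑ j, A i0 j * (((fun i => (w i:ℝ)) - x) j)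
        = (∑ j, A i0 j * (w j : ℝ)) - ∑ j, A i0 j * x j := by
    intro i0 x
    rw [← Finset.sum_sub_distrib]
    exact Finset.sum_congr rfl fun j _ => by simp [Pi.sub_apply]; ring
  have hseteq : {x ∈ ((r:ℝ) • P) ∩
        ((fun y => (fun i => (w i : ℝ)) - y) '' (((k - r : ℕ):ℝ) • P)) |
        ∀ i, (cc i : ℝ) ≤ x i ∧ x i ≤ (dd i : ℝ)}
      = {x : Fin n → ℝ | ∀ i, ∑ j, M i j * x j ≤ (d' i : ℝ)} := by
    ext x
    simp only [Set.mem_setOf_eq, Set.mem_inter_iff]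
    rw [himg x, hP, mem_smul_polyhedron A (fun i => (b i : ℝ)) hr' x,
        mem_smul_polyhedron A (fun i => (b i : ℝ)) hs' ((fun i => (w i:ℝ)) - x)]
    constructor
    · rintro ⟨⟨h1, h2⟩, h3⟩ i
      cases i with
      | inl i' =>
        cases i' with
        | inl i0 =>
          rw [hrow1 i0 x]
          simp only [hd', Sum.elim_inl]
          push_cast
          exact h1 i0
        | inr i0 =>
          rw [hrow2 i0 x]
          have h2' := h2 i0
          rw [hexp i0 x] at h2'
          simp only [hd', Sum.elim_inl, Sum.elim_inr]
          push_cast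
          rw [hAw i0]
          linarith
      | inr i' =>
        cases i' with
        | inl j0 =>
          rw [hrow3 j0 x]
          simp only [hd', Sum.elim_inr, Sum.elim_inl]
          exact (h3 j0).2
        | inr j0 =>
          rw [hrow4 j0 x]
          simp only [hd', Sum.elim_inr]
          push_cast
          linarith [(h3 j0).1]
    · intro h
      refine ⟨⟨?_, ?_⟩, ?_⟩
      · intro i0
        have h1 := h (Sum.inl (Sum.inl i0))
        rw [hrow1 i0 x] at h1
        simp only [hd', Sum.elim_inl] at h1
        push_cast at h1
        exact h1
      · intro i0
        have h2 := h (Sum.inl (Sum.inr i0))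
        rw [hrow2 i0 x] at h2
        simp only [hd', Sum.elim_inl, Sum.elim_inr] at h2
        push_cast at h2
        rw [hAw i0] at h2
        rw [hexp i0 x]
        linarith
      · intro j0
        have h3 := h (Sum.inr (Sum.inl j0))
        have h4 := h (Sum.inr (Sum.inr j0))
        rw [hrow3 j0 x] at h3
        rw [hrow4 j0 x] at h4
        simp only [hd', Sum.elim_inr, Sum.elim_inl] at h3 h4
        push_cast at h4
        exact ⟨by linarith, h3⟩
  rw [hseteq]
  apply tu_polyhedron_isIntegerPolyhedron M hMTU d'
    (fun i => (cc i : ℝ)) (fun i => (dd i : ℝ))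
  intro x hx
  rw [Set.mem_Icc]
  constructor
  · intro i
    have h4 := hx (Sum.inr (Sum.inr i))
    rw [hrow4 i x] at h4
    simp only [hd', Sum.elim_inr] at h4
    push_cast at h4
    linarith
  · intro i
    have h3 := hx (Sum.inr (Sum.inl i))
    rw [hrow3 i x] at h3
    simp only [hd', Sum.elim_inr, Sum.elim_inl] at h3
    exact h3
end
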